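/- arXiv:1905.04922 — 10 statements merged into one kernel-verified Lean document; each statement's English description precedes it below -/
import Mathlib

section
/- Let J, h be real numbers with J > 0 and 0 < h < 4J, set z_F = (1/2)·arcosh(4J/h) and λ_F^± = iπ/4 ± z_F. Then both λ_F^+ and λ_F^− lie in the fundamental strip S = {λ ∈ ℂ : −π/4 ≤ Im λ < 3π/4}, and for every λ ∈ S with sinh(2λ) ≠ 0 one has ε(λ) = 0 (equivalently h·sinh(2λ) = 4iJ) if and only if λ = λ_F^+ or λ = λ_F^−. That is, the one-particle energy has precisely the two roots λ_F^± in the fundamental strip. -/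
open Real

/-- Inverse hyperbolic cosine (for `x ≥ 1`). -/
noncomputable def arcosh (x : ℝ) : ℝ := Real.log (x + Real.sqrt (x ^ 2 - 1))

lemma arcosh_cosh_sinh {c : ℝ} (hc : 1 ≤ c) :
    Real.cosh (_root_.arcosh c) = c ∧ Real.sinh (_root_.arcosh c) = Real.sqrt (c ^ 2 - 1) := by
  have h1 : (0:ℝ) ≤ c ^ 2 - 1 := by nlinarith
  set s := Real.sqrt (c ^ 2 - 1) with hs
  have hs0 : 0 ≤ s := Real.sqrt_nonneg _
  have hs2 : s ^ 2 = c ^ 2 - 1 := Real.sq_sqrt h1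
  have ht : 0 < c + s := by nlinarith
  have hexp : Real.exp (_root_.arcosh c) = c + s := Real.exp_log ht
  have hmul : (c + s) * (c - s) = 1 := by nlinarith
  have hexp' : Real.exp (-(_root_.arcosh c)) = c - s := by
    rw [Real.exp_neg, hexp, inv_eq_of_mul_eq_one_right hmul]
  constructor
  · rw [Real.cosh_eq, hexp, hexp']; ring
  · rw [Real.sinh_eq, hexp, hexp']; ring

lemma sinh_decomp (x y : ℝ) :
    Complex.sinh ((x : ℂ) + (y : ℂ) * Complex.I) =
      ((Real.sinh x * Real.cos y : ℝ) : ℂ) +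
        ((Real.cosh x * Real.sin y : ℝ) : ℂ) * Complex.I := by
  rw [Complex.sinh_add, Complex.sinh_mul_I, Complex.cosh_mul_I]
  push_cast
  ring

/-- The one-particle energy `ε(λ) = h − 4iJ/sinh(2λ)` of the XX chain has precisely the
two roots `λ_F^± = iπ/4 ± z_F` in the fundamental strip `−π/4 ≤ Im λ < 3π/4`. -/
theorem energy_roots_in_strip (J h : ℝ) (hJ : 0 < J) (hh0 : 0 < h) (hh4 : h < 4 * J)
    (zF : ℝ) (hzF : zF = (1 / 2) * _root_.arcosh (4 * J / h))
    (lamP lamM : ℂ)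
    (hlamP : lamP = Complex.I * (π : ℝ) / 4 + (zF : ℂ))
    (hlamM : lamM = Complex.I * (π : ℝ) / 4 - (zF : ℂ)) :
    (-(π / 4) ≤ lamP.im ∧ lamP.im < 3 * π / 4) ∧
    (-(π / 4) ≤ lamM.im ∧ lamM.im < 3 * π / 4) ∧
    (∀ lam : ℂ, -(π / 4) ≤ lam.im → lam.im < 3 * π / 4 → Complex.sinh (2 * lam) ≠ 0 →
      ((h : ℂ) * Complex.sinh (2 * lam) = 4 * Complex.I * (J : ℂ) ↔
        lam = lamP ∨ lam = lamM)) := by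
  have hpi : (0:ℝ) < π := Real.pi_pos
  have himP : lamP.im = π / 4 := by
    simp [hlamP]
  have himM : lamM.im = π / 4 := by
    simp [hlamM]
  have hreP : lamP.re = zF := by simp [hlamP]
  have hreM : lamM.re = -zF := by simp [hlamM]
  set c : ℝ := 4 * J / h with hc
  have hc1 : (1:ℝ) < c := by
    rw [hc, lt_div_iff₀ hh0]; linarith
  have hne : h ≠ 0 := ne_of_gt hh0
  have hhc : h * c = 4 * J := by rw [hc]; field_simp
  obtain ⟨hcosh, hsinh⟩ := arcosh_cosh_sinh hc1.le
  set a : ℝ := _root_.arcosh c with ha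
  have hzFa : 2 * zF = a := by rw [hzF, ha, hc]; ring
  clear_value a
  clear ha
  clear_value c
  clear hc hzF
  -- key computation: value of h * sinh (2 * lam) at lam = ±zF + iπ/4
  have key : ∀ x : ℝ, Real.cosh (2 * x) = c →
      (h : ℂ) * Complex.sinh (2 * ((x : ℂ) + ((π/4 : ℝ) : ℂ) * Complex.I)) =
        4 * Complex.I * (J : ℂ) := by
    intro x hx
    have h2 : (2 : ℂ) * ((x : ℂ) + ((π/4 : ℝ) : ℂ) * Complex.I) =
        ((2*x : ℝ) : ℂ) + ((π/2 : ℝ) : ℂ) * Complex.I := by push_cast; ring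
    rw [h2, sinh_decomp]
    rw [Real.cos_pi_div_two, Real.sin_pi_div_two, hx]
    push_cast
    rw [show (4:ℂ) * Complex.I * (J:ℂ) = ((4*J : ℝ) : ℂ) * Complex.I by push_cast; ring]
    rw [← hhc]
    push_cast
    ring
  refine ⟨⟨by rw [himP]; linarith, by rw [himP]; linarith⟩,
    ⟨by rw [himM]; linarith, by rw [himM]; linarith⟩, ?_⟩
  intro lam hlo hhi _hsne
  constructor
  · intro heq
    -- decompose lam
    set x := lam.re with hx
    set y := lam.im with hy
    have hlam : lam = (x : ℂ) + (y : ℂ) * Complex.I := (Complex.re_add_im lam).symm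
    clear_value x y
    have h2 : (2 : ℂ) * lam = ((2*x : ℝ) : ℂ) + ((2*y : ℝ) : ℂ) * Complex.I := by
      rw [hlam]; push_cast; ring
    rw [h2, sinh_decomp] at heq
    set A : ℝ := Real.sinh (2*x) * Real.cos (2*y) with hA
    set B : ℝ := Real.cosh (2*x) * Real.sin (2*y) with hB
    have heq' : ((h * A : ℝ) : ℂ) + ((h * B : ℝ) : ℂ) * Complex.I
        = ((0 : ℝ) : ℂ) + ((4 * J : ℝ) : ℂ) * Complex.I := by
      push_cast
      linear_combination heq
    have hre : h * A = 0 := by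
      have := congrArg Complex.re heq'
      simpa using this
    have him : h * B = 4 * J := by
      have := congrArg Complex.im heq'
      simpa using this
    rw [hA] at hre
    rw [hB] at him
    clear heq heq' hA hB
    clear A B
    have hre' : Real.sinh (2*x) * Real.cos (2*y) = 0 := by
      rcases mul_eq_zero.mp hre with h' | h'
      · exact absurd h' hne
      · exact h'
    rcases mul_eq_zero.mp hre' with hs0 | hc0
    · -- sinh (2x) = 0 ⇒ x = 0 ⇒ sin(2y) = c > 1, contradiction
      exfalso
      have hx0 : 2 * x = 0 := Real.sinh_eq_zero.mp hs0
      rw [hx0, Real.cosh_zero] at him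
      have : Real.sin (2*y) = c := by
        apply mul_left_cancel₀ hne; rw [hhc]; linarith
      have := Real.sin_le_one (2*y)
      linarith
    · -- cos (2y) = 0 ⇒ 2y = ±π/2
      obtain ⟨k, hk⟩ := Real.cos_eq_zero_iff.mp hc0
      have hklo : -(π/2) ≤ (2*(k:ℝ)+1) * π / 2 := by rw [← hk]; linarith
      have hkhi : (2*(k:ℝ)+1) * π / 2 < 3 * π / 2 := by rw [← hk]; linarith
      have hk1 : -(1:ℝ) ≤ 2*(k:ℝ)+1 := by
        by_contra hcon
        push_neg at hcon
        nlinarith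
      have hk2 : (2*(k:ℝ)+1 : ℝ) < 3 := by
        by_contra hcon
        push_neg at hcon
        nlinarith
      have hkint : k = 0 ∨ k = -1 := by
        have h1 : (-1:ℝ) ≤ (k:ℝ) := by linarith
        have h2 : ((k:ℝ)) < 1 := by linarith
        have h1' : (-1:ℤ) ≤ k := by exact_mod_cast h1
        have h2' : k < 1 := by exact_mod_cast h2
        omega
      rcases hkint with rfl | rfl
      · -- 2y = π/2
        have hy2 : 2 * y = π / 2 := by rw [hk]; push_cast; ring
        rw [hy2, Real.sin_pi_div_two, mul_one] at him
        have hcx : Real.cosh (2*x) = c := by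
          apply mul_left_cancel₀ hne; rw [hhc]; linarith
        -- sinh(2x)^2 = c^2 - 1 = sinh(a)^2
        have hsq : Real.sinh (2*x) ^ 2 = Real.sinh a ^ 2 := by
          have e1 := Real.cosh_sq_sub_sinh_sq (2*x)
          have e2 := Real.cosh_sq_sub_sinh_sq a
          rw [hcx] at e1
          rw [hcosh] at e2
          linarith
        have hxa : 2 * x = a ∨ 2 * x = -a := by
          have hfac : (Real.sinh (2*x) - Real.sinh a) * (Real.sinh (2*x) + Real.sinh a) = 0 := by
            linear_combination hsq
          have : Real.sinh (2*x) = Real.sinh a ∨ Real.sinh (2*x) = -Real.sinh a := by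
            rcases mul_eq_zero.mp hfac with h' | h'
            · left; linarith
            · right; linarith
          rcases this with h' | h'
          · exact Or.inl (Real.sinh_injective h')
          · right
            have : Real.sinh (2*x) = Real.sinh (-a) := by rw [Real.sinh_neg]; exact h'
            exact Real.sinh_injective this
        have hyv : y = π / 4 := by linarith
        rcases hxa with hxv | hxv
        · left
          have hxz : x = zF := by linarith
          rw [hlam, hxz, hyv, hlamP]; push_cast; ring
        · right
          have hxz : x = -zF := by linarith
          rw [hlam, hxz, hyv, hlamM]; push_cast; ring
      · -- 2y = -π/2 : contradiction with him
        exfalso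
        have hy2 : 2 * y = -(π / 2) := by rw [hk]; push_cast; ring
        rw [hy2, Real.sin_neg, Real.sin_pi_div_two] at him
        have hcp : 0 < Real.cosh (2*x) := Real.cosh_pos (2*x)
        linarith [mul_pos hh0 hcp]
  · intro hor
    rcases hor with h' | h'
    · have h2 : lam = (zF : ℂ) + ((π/4 : ℝ) : ℂ) * Complex.I := by
        rw [h', hlamP]; push_cast; ring
      rw [h2]
      exact key zF (by rw [hzFa]; exact hcosh)
    · have h2 : lam = ((-zF : ℝ) : ℂ) + ((π/4 : ℝ) : ℂ) * Complex.I := by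
        rw [h', hlamM]; push_cast; ring
      rw [h2]
      exact key (-zF) (by rw [show 2 * -zF = -(2*zF) by ring, hzFa, Real.cosh_neg]; exact hcosh)
end

section
/- For every real x one has −i·Log(−i·tanh(x + iπ/4)) = −π/2 + 2·arctan(e^{−2x}), where Log denotes the principal branch of the complex logarithm; i.e., the one-particle momentum p satisfies p(x + iπ/4) = −π/2 + 2 arctan(e^{−2x}) and in particular is real on the line Im λ = π/4. -/
open Real

/-- The one-particle momentum `p(λ) = −i Log(−i tanh λ)` of the XX chain is real on the
line `Im λ = π/4`, where it equals `−π/2 + 2 arctan(e^{−2x})`. -/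
theorem momentum_on_upper_line :
    ∀ x : ℝ,
      -Complex.I * Complex.log (-Complex.I *
          Complex.tanh ((x : ℂ) + Complex.I * (π : ℝ) / 4)) =
        ((-(π / 2) + 2 * Real.arctan (Real.exp (-2 * x)) : ℝ) : ℂ) := by
  intro x
  set u : ℝ := Real.exp (-2 * x) with hu
  set φ : ℝ := Real.arctan u with hφ
  have hu0 : 0 < u := Real.exp_pos _
  have hφ1 : 0 < φ := by
    rw [hφ, ← Real.arctan_zero]; exact Real.arctan_strictMono hu0
  have hφ2 : φ < π / 2 := Real.arctan_lt_pi_div_two u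
  set θ : ℝ := -(π / 2) + 2 * φ with hθ
  set ex : ℝ := Real.exp x with hex
  set en : ℝ := Real.exp (-x) with hen
  have hexen : ex * en = 1 := by
    rw [hex, hen, ← Real.exp_add]; simp
  have huen : u = en ^ 2 := by
    rw [hu, hen, ← Real.exp_nat_mul]; ring_nf
  have h1u : (1 : ℝ) + u ^ 2 ≠ 0 := by positivity
  have hssq : Real.sqrt (1 + u ^ 2) ^ 2 = 1 + u ^ 2 := Real.sq_sqrt (by positivity)
  have hs0 : Real.sqrt (1 + u ^ 2) ≠ 0 := by positivity
  -- real trig values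
  have hsin : Real.sin (2 * φ) = 2 * u / (1 + u ^ 2) := by
    rw [Real.sin_two_mul, hφ, Real.sin_arctan, Real.cos_arctan, ← hssq]
    try field_simp
    try ring
    simp only [hssq]
  have hcos : Real.cos (2 * φ) = (1 - u ^ 2) / (1 + u ^ 2) := by
    rw [Real.cos_two_mul', hφ, Real.sin_arctan, Real.cos_arctan, div_pow, div_pow, hssq]
    field_simp
  have hcosθ : Real.cos θ = 2 * u / (1 + u ^ 2) := by
    have h : θ = 2 * φ - π / 2 := by rw [hθ]; ring
    rw [h, Real.cos_sub_pi_div_two, hsin]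
  have hsinθ : Real.sin θ = -((1 - u ^ 2) / (1 + u ^ 2)) := by
    have h : θ = 2 * φ - π / 2 := by rw [hθ]; ring
    rw [h, Real.sin_sub_pi_div_two, hcos]
  set w : ℂ := (x : ℂ) + Complex.I * (π : ℝ) / 4 with hw
  -- exponential values
  have hexpw : Complex.exp w =
      (ex : ℂ) * ((Real.sqrt 2 / 2 : ℝ) + (Real.sqrt 2 / 2 : ℝ) * Complex.I) := by
    have h : w = (x : ℂ) + ((π / 4 : ℝ) : ℂ) * Complex.I := by
      rw [hw]; push_cast; ring
    rw [h, Complex.exp_add, Complex.exp_mul_I, ← Complex.ofReal_cos, ← Complex.ofReal_sin,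
      Real.cos_pi_div_four, Real.sin_pi_div_four, hex, Complex.ofReal_exp]
  have hexpnw : Complex.exp (-w) =
      (en : ℂ) * ((Real.sqrt 2 / 2 : ℝ) - (Real.sqrt 2 / 2 : ℝ) * Complex.I) := by
    have h : -w = ((-x : ℝ) : ℂ) + ((-(π / 4) : ℝ) : ℂ) * Complex.I := by
      rw [hw]; push_cast; ring
    rw [h, Complex.exp_add, Complex.exp_mul_I, ← Complex.ofReal_cos, ← Complex.ofReal_sin,
      Real.cos_neg, Real.sin_neg, Real.cos_pi_div_four, Real.sin_pi_div_four, hen,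
      Complex.ofReal_exp]
    push_cast; ring
  have hsinhw : Complex.sinh w = (Complex.exp w - Complex.exp (-w)) / 2 := by
    have h := Complex.two_sinh (x := w); linear_combination h / 2
  have hcoshw : Complex.cosh w = (Complex.exp w + Complex.exp (-w)) / 2 := by
    have h := Complex.two_cosh (x := w); linear_combination h / 2
  have hexenC : (ex : ℂ) * (en : ℂ) = 1 := by exact_mod_cast hexen
  have huC : ((u : ℝ) : ℂ) = ((en : ℝ) : ℂ) ^ 2 := by exact_mod_cast huen
  -- the key cleared-denominator identity
  have main : -Complex.I * (Complex.exp w - Complex.exp (-w)) * (1 + ((u : ℝ) : ℂ) ^ 2) =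
      (2 * ((u : ℝ) : ℂ) - (1 - ((u : ℝ) : ℂ) ^ 2) * Complex.I) *
        (Complex.exp w + Complex.exp (-w)) := by
    rw [hexpw, hexpnw, huC]
    push_cast
    linear_combination
      ((Real.sqrt 2 : ℂ) / 2 *
          (-(1 + (en : ℂ) ^ 4) * ((ex : ℂ) + (en : ℂ)) +
            (1 - (en : ℂ) ^ 4) * ((ex : ℂ) - (en : ℂ)))) * Complex.I_sq +
      ((Real.sqrt 2 : ℂ) / 2 *
          (2 * (en : ℂ) * ((en : ℂ) ^ 2 - 1) -
            2 * (en : ℂ) * (1 + (en : ℂ) ^ 2) * Complex.I)) * hexenC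
  -- cosh w ≠ 0
  have hEE : Complex.exp w + Complex.exp (-w) ≠ 0 := by
    intro h
    have hre := congrArg Complex.re h
    rw [hexpw, hexpnw] at hre
    simp [Complex.add_re, Complex.mul_re] at hre
    have hex0 : 0 < ex := Real.exp_pos _
    have hen0 : 0 < en := Real.exp_pos _
    have hs2 : 0 < Real.sqrt 2 := Real.sqrt_pos.2 (by norm_num)
    nlinarith
  have hcosh_ne : Complex.cosh w ≠ 0 := by
    rw [hcoshw]
    exact div_ne_zero hEE two_ne_zero
  have h1uC : (1 : ℂ) + ((u : ℝ) : ℂ) ^ 2 ≠ 0 := by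
    exact_mod_cast (Complex.ofReal_ne_zero.2 h1u)
  -- the momentum value as a point on the unit circle
  have hz : -Complex.I * Complex.tanh w =
      ((2 * u / (1 + u ^ 2) : ℝ) : ℂ) + ((-((1 - u ^ 2) / (1 + u ^ 2)) : ℝ) : ℂ) * Complex.I := by
    rw [Complex.tanh_eq_sinh_div_cosh, hsinhw, hcoshw]
    push_cast
    field_simp
    linear_combination main
  have key : -Complex.I * Complex.tanh w = Complex.exp ((θ : ℂ) * Complex.I) := by
    rw [hz, Complex.exp_mul_I, ← Complex.ofReal_cos, ← Complex.ofReal_sin, hcosθ, hsinθ]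
  rw [key, Complex.log_exp]
  · linear_combination (-(θ : ℂ)) * Complex.I_sq
  · simp only [Complex.mul_im, Complex.ofReal_re, Complex.ofReal_im, Complex.I_im,
      Complex.I_re, mul_one, mul_zero, add_zero, zero_mul]
    rw [hθ]; nlinarith [Real.pi_pos]
  · simp only [Complex.mul_im, Complex.ofReal_re, Complex.ofReal_im, Complex.I_im,
      Complex.I_re, mul_one, mul_zero, add_zero, zero_mul]
    rw [hθ]; nlinarith [Real.pi_pos]
end

section
/- For every real x ≠ 0 one has −i·Log(−i·tanh(x − iπ/4)) = −π·sign(x) + π/2 − 2·arctan(e^{−2x}), where Log denotes the principal branch of the complex logarithm and sign(x) = 1 for x > 0 and −1 for x < 0; i.e., the one-particle momentum p satisfies p(x − iπ/4) = −π sign(x) + π/2 − 2 arctan(e^{−2x}) and in particular is real on the line Im λ = −π/4 away from x = 0. -/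
open Real

private lemma momentum_aux (w w' u v : ℂ) (hE : w * w = -Complex.I * u)
    (hEinv : w * w' = 1) (huv : v * u = 1) (hwne : w + w' ≠ 0) (hw0 : w ≠ 0)
    (hdc : (1:ℂ) + v ^ 2 ≠ 0) :
    -Complex.I * ((w - w') / 2 / ((w + w') / 2)) =
      -(2 * v / (1 + v ^ 2)) + (v ^ 2 - 1) / (1 + v ^ 2) * Complex.I := by
  have h2 : (w - w') / 2 / ((w + w') / 2) = (w - w') * w / ((w + w') * w) := by
    rw [mul_div_mul_right _ _ hw0]
    field_simp
  rw [h2, ← mul_div_assoc, div_eq_iff (mul_ne_zero hwne hw0)]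
  refine mul_right_cancel₀ hdc ?_
  rw [show (-(2 * v / (1 + v ^ 2)) + (v ^ 2 - 1) / (1 + v ^ 2) * Complex.I) * ((w + w') * w) *
        (1 + v ^ 2) =
      ((-(2 * v / (1 + v ^ 2)) + (v ^ 2 - 1) / (1 + v ^ 2) * Complex.I) * (1 + v ^ 2)) *
        ((w + w') * w) from by ring]
  have hC : (-(2 * v / (1 + v ^ 2)) + (v ^ 2 - 1) / (1 + v ^ 2) * Complex.I) * (1 + v ^ 2) =
      -(2 * v) + (v ^ 2 - 1) * Complex.I := by
    field_simp
  rw [hC]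
  linear_combination (2 * v - 2 * v ^ 2 * Complex.I) * hE + (2 * v + 2 * Complex.I) * hEinv +
    (-2 * Complex.I - 2 * v) * huv + (2 * v ^ 2 * u) * Complex.I_mul_I

/-- The one-particle momentum `p(λ) = −i Log(−i tanh λ)` of the XX chain is real on the
line `Im λ = −π/4` away from `x = 0`, where it equals `−π sign(x) + π/2 − 2 arctan(e^{−2x})`. -/
theorem momentum_on_lower_line :
    ∀ x : ℝ, x ≠ 0 →
      -Complex.I * Complex.log (-Complex.I *
          Complex.tanh ((x : ℂ) - Complex.I * (π : ℝ) / 4)) =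
        ((-π * Real.sign x + π / 2 - 2 * Real.arctan (Real.exp (-2 * x)) : ℝ) : ℂ) := by
  intro x hx
  set v : ℝ := Real.exp (-2 * x) with hv
  set u : ℝ := Real.exp (2 * x) with hu
  set θ : ℝ := Real.arctan v with hθ
  set r : ℝ := -π * Real.sign x + π / 2 - 2 * θ with hr
  have hvpos : 0 < v := Real.exp_pos _
  have hupos : 0 < u := Real.exp_pos _
  have hθpos : 0 < θ := by rw [hθ, ← Real.arctan_zero]; exact Real.arctan_strictMono hvpos
  have hθlt : θ < π / 2 := Real.arctan_lt_pi_div_two v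
  have hd : (0:ℝ) < 1 + v ^ 2 := by positivity
  have hss : Real.sqrt (1 + v ^ 2) * Real.sqrt (1 + v ^ 2) = 1 + v ^ 2 :=
    Real.mul_self_sqrt hd.le
  have hs : Real.sqrt (1 + v ^ 2) ^ 2 = 1 + v ^ 2 := Real.sq_sqrt hd.le
  have hsin2 : Real.sin (2 * θ) = 2 * v / (1 + v ^ 2) := by
    rw [Real.sin_two_mul, hθ, Real.sin_arctan, Real.cos_arctan]
    rw [mul_assoc, div_mul_div_comm, mul_one, hss, mul_div_assoc]
  have hcos2 : Real.cos (2 * θ) = (1 - v ^ 2) / (1 + v ^ 2) := by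
    rw [Real.cos_two_mul, hθ, Real.cos_arctan]
    rw [div_pow, one_pow, hs]
    field_simp
    ring
  have hcosr : Real.cos r = -(2 * v / (1 + v ^ 2)) := by
    rcases hx.lt_or_gt with h | h
    · rw [hr, Real.sign_of_neg h]
      rw [show -π * (-1) + π / 2 - 2 * θ = (π / 2 - 2 * θ) + π by ring]
      rw [Real.cos_add_pi, Real.cos_pi_div_two_sub, hsin2]
    · rw [hr, Real.sign_of_pos h]
      rw [show -π * 1 + π / 2 - 2 * θ = (π / 2 - 2 * θ) - π by ring]
      rw [Real.cos_sub_pi, Real.cos_pi_div_two_sub, hsin2]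
  have hsinr : Real.sin r = (v ^ 2 - 1) / (1 + v ^ 2) := by
    have hh : -Real.cos (2 * θ) = (v ^ 2 - 1) / (1 + v ^ 2) := by rw [hcos2]; ring
    rcases hx.lt_or_gt with h | h
    · rw [hr, Real.sign_of_neg h]
      rw [show -π * (-1) + π / 2 - 2 * θ = (π / 2 - 2 * θ) + π by ring]
      rw [Real.sin_add_pi, Real.sin_pi_div_two_sub, hh]
    · rw [hr, Real.sign_of_pos h]
      rw [show -π * 1 + π / 2 - 2 * θ = (π / 2 - 2 * θ) - π by ring]
      rw [Real.sin_sub_pi, Real.sin_pi_div_two_sub, hh]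
  -- bounds on r
  have hrlb : -π < r := by
    rcases hx.lt_or_gt with h | h
    · rw [hr, Real.sign_of_neg h]
      have := Real.pi_pos
      linarith
    · rw [hr, Real.sign_of_pos h]
      have hθlt4 : θ < π / 4 := by
        rw [hθ, ← Real.arctan_one]
        exact Real.arctan_strictMono (by
          rw [hv, ← Real.exp_zero]
          exact Real.exp_lt_exp.2 (by linarith))
      linarith
  have hrub : r ≤ π := by
    rcases hx.lt_or_gt with h | h
    · rw [hr, Real.sign_of_neg h]
      have hθgt4 : π / 4 < θ := by
        rw [hθ, ← Real.arctan_one]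
        exact Real.arctan_strictMono (by
          rw [hv, ← Real.exp_zero]
          exact Real.exp_lt_exp.2 (by linarith))
      linarith
    · rw [hr, Real.sign_of_pos h]
      have := Real.pi_pos
      linarith
  -- complex computation
  set z : ℂ := (x : ℂ) - Complex.I * (π : ℝ) / 4 with hz
  have hz2 : Complex.exp (2 * z) = -Complex.I * (u : ℝ) := by
    have h2z : 2 * z = ((2 * x : ℝ) : ℂ) + ((-(π/2) : ℝ) : ℂ) * Complex.I := by
      rw [hz]; push_cast; ring
    rw [h2z, Complex.exp_add, Complex.exp_mul_I, ← Complex.ofReal_cos, ← Complex.ofReal_sin,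
      ← Complex.ofReal_exp]
    rw [Real.cos_neg, Real.sin_neg, Real.cos_pi_div_two, Real.sin_pi_div_two]
    rw [hu]
    push_cast
    ring
  have hE : Complex.exp z * Complex.exp z = -Complex.I * (u : ℝ) := by
    rw [← Complex.exp_add, ← hz2]; ring_nf
  have hEinv : Complex.exp z * Complex.exp (-z) = 1 := by
    rw [← Complex.exp_add]; simp
  have hexpne : Complex.exp z ≠ 0 := Complex.exp_ne_zero z
  have huv : (v : ℂ) * (u : ℂ) = 1 := by
    rw [hv, hu, ← Complex.ofReal_mul, ← Real.exp_add]
    norm_num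
  have hcosh : Complex.cosh z ≠ 0 := by
    intro h
    have hc : Complex.cosh z = (Complex.exp z + Complex.exp (-z)) / 2 := rfl
    have h2 : Complex.exp z + Complex.exp (-z) = 0 := by
      rw [hc] at h
      field_simp at h
      rwa [mul_zero] at h
    have h3 : Complex.exp z * (Complex.exp z + Complex.exp (-z)) = 0 := by rw [h2, mul_zero]
    rw [mul_add, hE, hEinv] at h3
    have h4 := congrArg Complex.im h3
    simp at h4
    exact absurd h4 (ne_of_gt hupos)
  have hwne : Complex.exp z + Complex.exp (-z) ≠ 0 := by
    intro h
    apply hcosh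
    have hc : Complex.cosh z = (Complex.exp z + Complex.exp (-z)) / 2 := rfl
    rw [hc, h]
    norm_num
  have hdc : (1:ℂ) + (v:ℂ) ^ 2 ≠ 0 := by
    have : ((1 + v ^ 2 : ℝ) : ℂ) ≠ 0 := by exact_mod_cast ne_of_gt hd
    push_cast at this
    exact this
  have key : -Complex.I * Complex.tanh z = Complex.exp ((r : ℂ) * Complex.I) := by
    rw [Complex.exp_mul_I, ← Complex.ofReal_cos, ← Complex.ofReal_sin, hcosr, hsinr,
      Complex.tanh_eq_sinh_div_cosh,
      show Complex.sinh z = (Complex.exp z - Complex.exp (-z)) / 2 from rfl,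
      show Complex.cosh z = (Complex.exp z + Complex.exp (-z)) / 2 from rfl]
    push_cast
    exact momentum_aux _ _ _ _ hE hEinv huv hwne hexpne hdc
  rw [key, Complex.log_exp (by simpa using hrlb) (by simpa using hrub)]
  have hI : Complex.I * Complex.I = -1 := Complex.I_mul_I
  linear_combination (-(r : ℂ)) * hI
end

section
/- Let J, h be real numbers with J > 0 and 0 < h < 4J, and set z_F = (1/2)·arcosh(4J/h), λ_F^− = iπ/4 − z_F. Then the value of the one-particle momentum at the left Fermi rapidity is the Fermi momentum: −i·Log(−i·tanh(iπ/4 − z_F)) = arccos(h/(4J)), a real number lying in (0, π/2). -/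
open Real

/-- The value of the one-particle momentum `p(λ) = −i Log(−i tanh λ)` at the left Fermi
rapidity `λ_F^− = iπ/4 − z_F`, `z_F = (1/2) arcosh(4J/h)`, is the Fermi momentum
`p_F = arccos(h/(4J)) ∈ (0, π/2)`. -/
theorem fermi_momentum (J h : ℝ) (hJ : 0 < J) (hh0 : 0 < h) (hh4 : h < 4 * J)
    (zF : ℝ) (hzF : zF = (1 / 2) * _root_.arcosh (4 * J / h)) :
    -Complex.I * Complex.log (-Complex.I *
        Complex.tanh (Complex.I * (π : ℝ) / 4 - (zF : ℂ))) =
      ((Real.arccos (h / (4 * J)) : ℝ) : ℂ) ∧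
    0 < Real.arccos (h / (4 * J)) ∧ Real.arccos (h / (4 * J)) < π / 2 := by
  have h4J : (0:ℝ) < 4 * J := by linarith
  set y : ℝ := 4 * J / h with hy
  have hy1 : 1 < y := (one_lt_div hh0).mpr hh4
  set s : ℝ := Real.sqrt (y ^ 2 - 1) with hsdef
  have hs2 : s ^ 2 = y ^ 2 - 1 := Real.sq_sqrt (by nlinarith)
  have hs0 : 0 < s := Real.sqrt_pos.mpr (by nlinarith)
  have hys : (0:ℝ) < y + s := by linarith
  have hx : h / (4 * J) = y⁻¹ := by
    rw [hy]; field_simp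
  have hx0 : 0 < h / (4 * J) := div_pos hh0 h4J
  have hx1 : h / (4 * J) < 1 := (div_lt_one h4J).mpr hh4
  set θ := Real.arccos (h / (4 * J)) with hθdef
  have hθ0 : 0 < θ := Real.arccos_pos.mpr hx1
  have hθπ : θ < π / 2 := Real.arccos_lt_pi_div_two.mpr hx0
  have hcos : Real.cos θ = y⁻¹ := by
    rw [hθdef, Real.cos_arccos (by linarith) hx1.le, hx]
  have hsin : Real.sin θ = s / y := by
    rw [hθdef, Real.sin_arccos, hx,
      show 1 - y⁻¹ ^ 2 = (s / y) ^ 2 by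
        field_simp
        nlinarith]
    exact Real.sqrt_sq (by positivity)
  set a : ℝ := (y + s)⁻¹ with hadef
  have ha0 : 0 < a := by positivity
  have hA : Real.cos θ - a * Real.sin θ = a := by
    rw [hcos, hsin, hadef]
    field_simp
    ring
  have hB : a * Real.cos θ + Real.sin θ = 1 := by
    rw [hcos, hsin, hadef]
    field_simp
    nlinarith
  have hea : Real.exp (-(2 * zF)) = a := by
    rw [hzF, hadef, _root_.arcosh,
      show -(2 * (1 / 2 * Real.log (4 * J / h + Real.sqrt ((4 * J / h) ^ 2 - 1)))) =
        -Real.log (y + s) by rw [hsdef, ← hy]; ring,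
      Real.exp_neg, Real.exp_log hys]
  set w : ℂ := Complex.I * (π : ℝ) / 4 - (zF : ℂ) with hwdef
  have hexp2w : Complex.exp w * Complex.exp w = Complex.I * (a : ℂ) := by
    rw [← Complex.exp_add,
      show w + w = (π / 2 : ℝ) * Complex.I + ((-(2 * zF) : ℝ) : ℂ) by
        rw [hwdef]; push_cast; ring,
      Complex.exp_add, Complex.exp_mul_I, ← Complex.ofReal_cos, ← Complex.ofReal_sin,
      Real.cos_pi_div_two, Real.sin_pi_div_two, ← Complex.ofReal_exp, hea]
    push_cast; ring
  have hEF : Complex.exp w * Complex.exp (-w) = 1 := by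
    rw [← Complex.exp_add]; simp
  have hden : Complex.I * (a : ℂ) + 1 ≠ 0 := by
    intro hc
    have := congrArg Complex.re hc
    simp at this
  have hcoshne : Complex.cosh w ≠ 0 := by
    rw [Complex.cosh]
    intro hc
    apply hden
    have h1 : Complex.exp w + Complex.exp (-w) = 0 := by
      field_simp at hc
      rwa [mul_zero] at hc
    have h2 : Complex.exp w * (Complex.exp w + Complex.exp (-w)) = 0 := by
      rw [h1]; ring
    rw [mul_add, hexp2w, hEF] at h2
    linear_combination h2
  have htanh : Complex.tanh w = (Complex.I * (a:ℂ) - 1) / (Complex.I * (a:ℂ) + 1) := by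
    rw [Complex.tanh_eq_sinh_div_cosh, div_eq_div_iff hcoshne hden, Complex.sinh, Complex.cosh]
    linear_combination Complex.exp (-w) * hexp2w - Complex.exp w * hEF
  have hAC : (Real.cos θ : ℂ) - (a:ℂ) * Real.sin θ = (a:ℂ) := by exact_mod_cast hA
  have hBC : (a:ℂ) * Real.cos θ + (Real.sin θ : ℂ) = 1 := by exact_mod_cast hB
  have hkey : -Complex.I * Complex.tanh w = Complex.exp ((θ:ℝ) * Complex.I) := by
    rw [htanh, Complex.exp_mul_I, ← Complex.ofReal_cos, ← Complex.ofReal_sin,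
      ← mul_div_assoc, div_eq_iff hden]
    linear_combination -hAC - Complex.I * hBC - ((a:ℂ) * (1 + (Real.sin θ : ℂ))) * Complex.I_sq
  refine ⟨?_, hθ0, hθπ⟩
  rw [hkey, Complex.log_exp (by simpa using by linarith [Real.pi_pos] : -π < ((θ:ℂ) * Complex.I).im)
    (by simpa using by linarith [Real.pi_pos] : ((θ:ℂ) * Complex.I).im ≤ π)]
  rw [show -Complex.I * ((θ:ℂ) * Complex.I) = -(Complex.I * Complex.I) * (θ:ℂ) by ring,
    Complex.I_mul_I]
  ring
end

section
/- Let z₀ ∈ ℂ and 0 < r < r' be such that the closed disk of radius r' centered at z₀ is contained in the open strip {z : −π/4 < Im z < 3π/4}; let K be the circle {z : |z − z₀| = r} and K_per = ∪_{k∈ℤ}(K + ikπ). Suppose Ψ : ℂ → Mat₂(ℂ) satisfies: (i) each entry of Ψ is holomorphic on ℂ ∖ K_per; (ii) Ψ(z + iπ) = Ψ(z) for all z; (iii) there exist Ψ₊ continuous on the closed disk {|z − z₀| ≤ r} agreeing with Ψ on the open disk, and Ψ₋ continuous on the closed annulus {r ≤ |z − z₀| ≤ r'} agreeing with Ψ on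 {r < |z − z₀| ≤ r'}; (iv) there is G : K → Mat₂(ℂ) with det G(z) = 1 and Ψ₋(z) = Ψ₊(z)·G(z) for all z ∈ K; (v) Ψ(z) → I₂ (entrywise) as Re z → +∞ and Ψ(z) converges entrywise to some constant matrix as Re z → −∞. Then det Ψ(z) = 1 for every z ∈ ℂ ∖ K_per; in particular Ψ(z) is invertible at every such z. -/
open Real Filter Metric Set

/-- Removable singularity across a circle: if `f` is continuous on `closedBall c ρ` and
differentiable off the sphere of radius `r < ρ`, it is differentiable on `ball c ρ`. -/
lemma removable_circle {f : ℂ → ℂ} {c : ℂ} {r ρ : ℝ} (hr : 0 < r) (hρ : r < ρ)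
    (hcont : ContinuousOn f (closedBall c ρ))
    (hd : ∀ z : ℂ, dist z c < ρ → dist z c ≠ r → DifferentiableAt ℂ f z) :
    ∀ z ∈ ball c ρ, DifferentiableAt ℂ f z := by
  have hρ0 : 0 < ρ := hr.trans hρ
  set g : ℂ → ℂ := fun w => (2 * (π : ℂ) * Complex.I)⁻¹ • ∮ ζ in C(c, ρ), (ζ - w)⁻¹ • f ζ
    with hgdef
  have hint : CircleIntegrable f c ρ :=
    (hcont.mono sphere_subset_closedBall).circleIntegrable hρ0.le
  have hganal : ∀ w ∈ ball c ρ, DifferentiableAt ℂ g w := by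
    intro w hw
    lift ρ to NNReal using hρ0.le with R hR
    have := hasFPowerSeriesOn_cauchy_integral hint (by exact_mod_cast hρ0)
    have hball : w ∈ Metric.eball c (R : ENNReal) := by
      rwa [Metric.emetric_ball_nnreal]
    rw [hgdef]
    exact ((this.analyticOnNhd w hball).differentiableAt)
  -- `g = f` strictly inside the circle of radius `r`
  have hin : ∀ z : ℂ, dist z c < r → g z = f z := by
    intro z hz
    have hzρ : dist z c < ρ := hz.trans hρ
    have hne : ∀ ζ ∈ closedBall c ρ \ ball c r, ζ - z ≠ 0 := by
      intro ζ hζ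
      have : ζ ≠ z := by
        intro h; subst h; exact absurd hz (not_lt.2 (by simpa [mem_ball] using hζ.2))
      exact sub_ne_zero.2 this
    have h1 : (∮ ζ in C(c, ρ), (ζ - z)⁻¹ • f ζ) = ∮ ζ in C(c, r), (ζ - z)⁻¹ • f ζ := by
      refine Complex.circleIntegral_eq_of_differentiable_on_annulus_off_countable hr hρ.le
        Set.countable_empty
        (((continuousOn_id.sub continuousOn_const).inv₀ hne).smul (hcont.mono diff_subset)) ?_
      rintro ζ ⟨⟨hζ1, hζ2⟩, -⟩
      have hζr : r < dist ζ c := by simpa [mem_closedBall, not_le] using hζ2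
      have : ζ - z ≠ 0 := sub_ne_zero.2 fun h => by
        subst h; exact absurd hz (not_lt.2 hζr.le)
      exact ((differentiableAt_id.sub_const z).inv this).smul
        (hd ζ (by simpa [mem_ball] using hζ1) (ne_of_gt hζr))
    have h2 : (2 * (π : ℂ) * Complex.I)⁻¹ • (∮ ζ in C(c, r), (ζ - z)⁻¹ • f ζ) = f z := by
      refine
        Complex.two_pi_I_inv_smul_circleIntegral_sub_inv_smul_of_differentiable_on_off_countable
          Set.countable_empty (by simpa [mem_ball] using hz)
          (hcont.mono (closedBall_subset_closedBall hρ.le)) ?_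
      rintro x ⟨hx, -⟩
      have hx' : dist x c < r := by simpa [mem_ball] using hx
      exact hd x (hx'.trans hρ) (ne_of_lt hx')
    rw [hgdef]
    simp only []
    rw [h1, h2]
  -- `g = f` in the open annulus `r < dist < ρ`
  have hann : ∀ z : ℂ, r < dist z c → dist z c < ρ → g z = f z := by
    intro z h1 h2
    have hdz : DifferentiableAt ℂ f z := hd z h2 (ne_of_gt h1)
    have hzball : z ∈ ball c ρ := by simpa [mem_ball] using h2
    have hnbhd : closedBall c ρ ∈ nhds z := closedBall_mem_nhds_of_mem hzball
    have hch : ContinuousOn (dslope f z) (closedBall c ρ) :=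
      (continuousOn_dslope hnbhd).2 ⟨hcont, hdz⟩
    have hAnn : (∮ ζ in C(c, ρ), dslope f z ζ) = ∮ ζ in C(c, r), dslope f z ζ := by
      refine Complex.circleIntegral_eq_of_differentiable_on_annulus_off_countable hr hρ.le
        (Set.countable_singleton z) (hch.mono diff_subset) ?_
      rintro x ⟨⟨hx1, hx2⟩, hx3⟩
      have hxz : x ≠ z := by simpa using hx3
      have hxr : r < dist x c := by simpa [mem_closedBall, not_le] using hx2
      exact (differentiableAt_dslope_of_ne hxz).2
        (hd x (by simpa [mem_ball] using hx1) (ne_of_gt hxr))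
    have hInner : (∮ ζ in C(c, r), dslope f z ζ) = 0 := by
      refine Complex.circleIntegral_eq_zero_of_differentiable_on_off_countable hr.le
        Set.countable_empty (hch.mono (closedBall_subset_closedBall hρ.le)) ?_
      rintro x ⟨hx, -⟩
      have hx' : dist x c < r := by simpa [mem_ball] using hx
      have hxz : x ≠ z := fun h => by subst h; exact absurd h1 (not_lt.2 hx'.le)
      exact (differentiableAt_dslope_of_ne hxz).2 (hd x (hx'.trans hρ) (ne_of_lt hx'))
    have hneρ : ∀ ζ ∈ sphere c ρ, ζ - z ≠ 0 := by
      intro ζ hζ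
      refine sub_ne_zero.2 fun h => ?_
      subst h; exact absurd (mem_sphere.1 hζ) (ne_of_lt h2)
    have int1 : CircleIntegrable (fun ζ => (ζ - z)⁻¹ • f ζ) c ρ :=
      (((continuousOn_id.sub continuousOn_const).inv₀ hneρ).smul
        (hcont.mono sphere_subset_closedBall)).circleIntegrable hρ0.le
    have int2 : CircleIntegrable (fun ζ => (ζ - z)⁻¹ • f z) c ρ :=
      (((continuousOn_id.sub continuousOn_const).inv₀ hneρ).smul
        continuousOn_const).circleIntegrable hρ0.le
    have hsplit : (∮ ζ in C(c, ρ), (ζ - z)⁻¹ • f ζ) - (∮ ζ in C(c, ρ), (ζ - z)⁻¹ • f z)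
        = ∮ ζ in C(c, ρ), dslope f z ζ := by
      rw [← circleIntegral.integral_sub int1 int2]
      refine circleIntegral.integral_congr hρ0.le fun ζ hζ => ?_
      have hζz : ζ ≠ z := sub_ne_zero.1 (hneρ ζ hζ)
      simp only [dslope_of_ne _ hζz, slope_def_module, smul_eq_mul]
      ring
    have hconst : (∮ ζ in C(c, ρ), (ζ - z)⁻¹ • f z) = (2 * (π : ℂ) * Complex.I) • f z := by
      rw [circleIntegral.integral_smul_const, circleIntegral.integral_sub_inv_of_mem_ball hzball]
    have hval : (∮ ζ in C(c, ρ), (ζ - z)⁻¹ • f ζ) = (2 * (π : ℂ) * Complex.I) • f z := by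
      have := hsplit
      rw [hAnn, hInner, hconst] at this
      exact sub_eq_zero.1 this
    have hpi : (2 * (π : ℂ) * Complex.I) ≠ 0 := by
      simp [Real.pi_ne_zero, Complex.I_ne_zero, Complex.ofReal_ne_zero]
    rw [hgdef]
    simp only []
    rw [hval, smul_smul, inv_mul_cancel₀ hpi, one_smul]
  -- `g = f` on the whole ball, by continuity at the sphere
  have heq : ∀ z ∈ ball c ρ, f z = g z := by
    intro z hz
    have hzρ : dist z c < ρ := by simpa [mem_ball] using hz
    rcases lt_trichotomy (dist z c) r with h | h | h
    · exact (hin z h).symm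
    · -- point on the sphere: approximate from inside
      have hzc : z ≠ c := by
        intro hzc; rw [hzc] at h; simp at h; exact absurd h.symm (ne_of_gt hr)
      set u : ℕ → ℂ := fun n => c + (1 - 1 / (n + 1) : ℝ) • (z - c) with hu
      have hdist : ∀ n : ℕ, dist (u n) c = (1 - 1 / (n + 1) : ℝ) * r := by
        intro n
        have h0 : (0:ℝ) ≤ 1 - 1 / (n + 1) := by
          have : (1:ℝ) / (n + 1) ≤ 1 := by
            rw [div_le_one (by positivity)]
            linarith [Nat.cast_nonneg (α := ℝ) n]
          linarith
        rw [hu]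
        simp only [dist_eq_norm, add_sub_cancel_left, norm_smul, Real.norm_eq_abs,
          abs_of_nonneg h0]
        rw [← dist_eq_norm, h]
      have hlt : ∀ n : ℕ, dist (u n) c < r := by
        intro n
        rw [hdist n]
        have : (0:ℝ) < 1 / (n + 1) := by positivity
        nlinarith
      have hun : Tendsto u atTop (nhds z) := by
        have h1 : Tendsto (fun n : ℕ => (1 - 1 / (n + 1) : ℝ)) atTop (nhds 1) := by
          have := tendsto_one_div_add_atTop_nhds_zero_nat (𝕜 := ℝ)
          have := tendsto_const_nhds (α := ℕ) (f := atTop) (x := (1:ℝ)) |>.sub this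
          simpa using this
        have : Tendsto u atTop (nhds (c + (1:ℝ) • (z - c))) :=
          tendsto_const_nhds.add (h1.smul_const _)
        simpa using this
      have hfu : Tendsto (fun n => f (u n)) atTop (nhds (f z)) := by
        refine ((hcont z (by simp [mem_closedBall, hzρ.le])).tendsto).comp ?_
        refine tendsto_nhdsWithin_of_tendsto_nhds_of_eventually_within _ hun ?_
        exact Eventually.of_forall fun n => by
          simp [mem_closedBall, ((hlt n).trans hρ).le]
      have hgu : Tendsto (fun n => g (u n)) atTop (nhds (g z)) :=
        ((hganal z hz).continuousAt.tendsto).comp hun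
      have : (fun n => f (u n)) = fun n => g (u n) := by
        funext n; exact (hin (u n) (hlt n)).symm
      rw [this] at hfu
      exact tendsto_nhds_unique hfu hgu
    · exact (hann z h hzρ).symm
  intro z hz
  rcases eq_or_ne (dist z c) r with h | h
  · have : f =ᶠ[nhds z] g :=
      Filter.eventuallyEq_of_mem (isOpen_ball.mem_nhds hz) heq
    exact (Filter.EventuallyEq.differentiableAt_iff this).2 (hganal z hz)
  · exact hd z (by simpa [mem_ball] using hz) h

lemma det_continuousOn {A : ℂ → Matrix (Fin 2) (Fin 2) ℂ} {s : Set ℂ}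
    (h : ContinuousOn A s) : ContinuousOn (fun z => (A z).det) s := by
  have hrw : (fun z => (A z).det) = fun z => A z 0 0 * A z 1 1 - A z 0 1 * A z 1 0 := by
    funext z; exact Matrix.det_fin_two _
  rw [hrw]
  have e : ∀ i j : Fin 2, ContinuousOn (fun z => A z i j) s := fun i j =>
    (continuous_apply j).comp_continuousOn ((continuous_apply i).comp_continuousOn h)
  exact ((e 0 0).mul (e 1 1)).sub ((e 0 1).mul (e 1 0))

/-- A solution of the matrix Riemann–Hilbert problem on the cylinder
`S = {−π/4 ≤ Im z < 3π/4}` with unimodular jump matrix on the circle `K` has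
determinant identically `1`; in particular it is everywhere invertible. -/
theorem rhp_unimodular_det_one (z₀ : ℂ) (r r' : ℝ) (hr : 0 < r) (hrr' : r < r')
    (hstrip : closedBall z₀ r' ⊆ {z : ℂ | -(π / 4) < z.im ∧ z.im < 3 * π / 4})
    (K Kper : Set ℂ) (hK : K = sphere z₀ r)
    (hKper : Kper = ⋃ k : ℤ, (fun z => z + (k : ℂ) * (π : ℝ) * Complex.I) '' K)
    (Ψ : ℂ → Matrix (Fin 2) (Fin 2) ℂ)
    (hol : ∀ i j, DifferentiableOn ℂ (fun z => Ψ z i j) Kperᶜ)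
    (per : ∀ z, Ψ (z + (π : ℝ) * Complex.I) = Ψ z)
    (Ψp Ψm : ℂ → Matrix (Fin 2) (Fin 2) ℂ)
    (hΨp_cont : ContinuousOn Ψp (closedBall z₀ r))
    (hΨp_eq : ∀ z ∈ ball z₀ r, Ψp z = Ψ z)
    (hΨm_cont : ContinuousOn Ψm {z : ℂ | r ≤ dist z z₀ ∧ dist z z₀ ≤ r'})
    (hΨm_eq : ∀ z : ℂ, r < dist z z₀ → dist z z₀ ≤ r' → Ψm z = Ψ z)
    (G : ℂ → Matrix (Fin 2) (Fin 2) ℂ)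
    (hG : ∀ z ∈ K, (G z).det = 1)
    (jump : ∀ z ∈ K, Ψm z = Ψp z * G z)
    (limPlus : ∀ i j, Tendsto (fun z => Ψ z i j) (comap Complex.re atTop)
      (nhds ((1 : Matrix (Fin 2) (Fin 2) ℂ) i j)))
    (limMinus : ∃ M : Matrix (Fin 2) (Fin 2) ℂ, ∀ i j,
      Tendsto (fun z => Ψ z i j) (comap Complex.re atBot) (nhds (M i j))) :
    ∀ z ∉ Kper, (Ψ z).det = 1 := by
  -- basic geometry
  have hr' : 0 < r' := hr.trans hrr'
  have h2r' : 2 * r' < π := by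
    have h1 := hstrip (show z₀ + (r' : ℂ) * Complex.I ∈ closedBall z₀ r' by
      simp [Complex.dist_eq, Complex.norm_real, abs_of_nonneg hr'.le])
    have h2 := hstrip (show z₀ - (r' : ℂ) * Complex.I ∈ closedBall z₀ r' by
      simp [Complex.dist_eq, Complex.norm_real, abs_of_nonneg hr'.le])
    simp only [Set.mem_setOf_eq, Complex.add_im, Complex.sub_im, Complex.mul_im,
      Complex.ofReal_re, Complex.ofReal_im, Complex.I_re, Complex.I_im] at h1 h2
    linarith [h1.2, h2.1]
  -- membership in Kper
  have hmem : ∀ z : ℂ, z ∈ Kper ↔ ∃ k : ℤ, dist (z - (k : ℂ) * (π : ℝ) * Complex.I) z₀ = r := by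
    intro z
    simp only [hKper, hK, Set.mem_iUnion, Set.mem_image, mem_sphere]
    constructor
    · rintro ⟨k, w, hw, rfl⟩
      exact ⟨k, by simpa using hw⟩
    · rintro ⟨k, hk⟩
      exact ⟨k, z - (k : ℂ) * (π : ℝ) * Complex.I, hk, by ring⟩
  -- uniqueness of the translation index
  have huniq : ∀ (z : ℂ) (k₁ k₂ : ℤ), dist (z - (k₁ : ℂ) * (π : ℝ) * Complex.I) z₀ ≤ r' →
      dist (z - (k₂ : ℂ) * (π : ℝ) * Complex.I) z₀ ≤ r' → k₁ = k₂ := by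
    intro z k₁ k₂ h1 h2
    by_contra hne
    have hd : dist ((k₁ : ℂ) * (π : ℝ) * Complex.I) ((k₂ : ℂ) * (π : ℝ) * Complex.I)
        = |((k₁ - k₂ : ℤ) : ℝ)| * π := by
      rw [Complex.dist_eq]
      have : (k₁ : ℂ) * (π : ℝ) * Complex.I - (k₂ : ℂ) * (π : ℝ) * Complex.I
          = ((k₁ - k₂ : ℤ) : ℂ) * (π : ℝ) * Complex.I := by push_cast; ring
      rw [this, norm_mul, norm_mul, Complex.norm_I, Complex.norm_real, Complex.norm_intCast,
        mul_one, Real.norm_eq_abs, abs_of_nonneg Real.pi_pos.le]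
    have htri : dist ((k₁ : ℂ) * (π : ℝ) * Complex.I) ((k₂ : ℂ) * (π : ℝ) * Complex.I) ≤ 2 * r' := by
      have e1 : dist ((k₁ : ℂ) * (π : ℝ) * Complex.I) ((k₂ : ℂ) * (π : ℝ) * Complex.I)
          = dist (z - (k₂ : ℂ) * (π : ℝ) * Complex.I) (z - (k₁ : ℂ) * (π : ℝ) * Complex.I) := by
        rw [Complex.dist_eq, Complex.dist_eq]
        congr 1
        ring
      rw [e1]
      calc dist (z - (k₂ : ℂ) * (π : ℝ) * Complex.I) (z - (k₁ : ℂ) * (π : ℝ) * Complex.I)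
          ≤ dist (z - (k₂ : ℂ) * (π : ℝ) * Complex.I) z₀
            + dist z₀ (z - (k₁ : ℂ) * (π : ℝ) * Complex.I) := dist_triangle _ _ _
        _ ≤ r' + r' := add_le_add h2 (by rwa [dist_comm])
        _ = 2 * r' := by ring
    rw [hd] at htri
    have hk1 : (1 : ℤ) ≤ |k₁ - k₂| := Int.one_le_abs (sub_ne_zero.2 hne)
    have : (1 : ℝ) ≤ |((k₁ - k₂ : ℤ) : ℝ)| := by
      rw [← Int.cast_abs]
      exact_mod_cast hk1
    nlinarith [Real.pi_pos]
  -- Kper is closed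
  have hKclosed : IsClosed Kper := by
    have himg : Kper = (fun z : ℂ => Complex.exp (2 * z)) ⁻¹'
        ((fun z : ℂ => Complex.exp (2 * z)) '' K) := by
      ext z
      simp only [hKper, Set.mem_iUnion, Set.mem_image, Set.mem_preimage]
      constructor
      · rintro ⟨k, w, hw, rfl⟩
        refine ⟨w, hw, ?_⟩
        have : 2 * (w + (k : ℂ) * (π : ℝ) * Complex.I) = 2 * w + (k : ℂ) * (2 * (π : ℝ) * Complex.I) := by
          push_cast; ring
        rw [this, Complex.exp_add, Complex.exp_int_mul_two_pi_mul_I, mul_one]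
      · rintro ⟨w, hw, hexp⟩
        obtain ⟨n, hn⟩ := Complex.exp_eq_exp_iff_exists_int.1 hexp.symm
        exact ⟨n, w, hw, by linear_combination -hn / 2⟩
    rw [himg]
    have hexpcont : Continuous fun z : ℂ => Complex.exp (2 * z) :=
      Complex.continuous_exp.comp (continuous_const.mul continuous_id)
    have hKcompact : IsCompact K := hK ▸ isCompact_sphere z₀ r
    exact (hKcompact.image hexpcont).isClosed.preimage hexpcont
  -- inside the closed ball of radius r', membership in Kper means being on the sphere
  have hchar : ∀ z : ℂ, dist z z₀ ≤ r' → (z ∈ Kper ↔ dist z z₀ = r) := by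
    intro z hz
    rw [hmem]
    constructor
    · rintro ⟨k, hk⟩
      have h0 : dist (z - ((0 : ℤ) : ℂ) * (π : ℝ) * Complex.I) z₀ ≤ r' := by simpa using hz
      have := huniq z k 0 (le_trans (le_of_eq hk) hrr'.le) h0
      subst this
      simpa using hk
    · intro hz'
      exact ⟨0, by simpa using hz'⟩
  -- integer periodicity of Ψ
  have perZ : ∀ (k : ℤ) (z : ℂ), Ψ (z + (k : ℂ) * (π : ℝ) * Complex.I) = Ψ z := by
    intro k
    induction k using Int.induction_on with
    | zero => intro z; simp
    | succ n ih =>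
        intro z
        have harg : z + ((n + 1 : ℤ) : ℂ) * (π : ℝ) * Complex.I
            = (z + ((n : ℤ) : ℂ) * (π : ℝ) * Complex.I) + (π : ℝ) * Complex.I := by
          push_cast; ring
        rw [harg, per, ih]
    | pred n ih =>
        intro z
        have harg : z + ((-n : ℤ) : ℂ) * (π : ℝ) * Complex.I
            = (z + ((-n - 1 : ℤ) : ℂ) * (π : ℝ) * Complex.I) + (π : ℝ) * Complex.I := by
          push_cast; ring
        have := per (z + ((-n - 1 : ℤ) : ℂ) * (π : ℝ) * Complex.I)
        rw [← harg] at this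
        rw [← this, ih]
  -- determinant of Ψ is differentiable off Kper
  have hKopen : IsOpen Kperᶜ := hKclosed.isOpen_compl
  have hdetΨ : ∀ z ∉ Kper, DifferentiableAt ℂ (fun w => (Ψ w).det) z := by
    intro z hz
    have hrw : (fun w => (Ψ w).det)
        = fun w => Ψ w 0 0 * Ψ w 1 1 - Ψ w 0 1 * Ψ w 1 0 := by
      funext w; exact Matrix.det_fin_two _
    rw [hrw]
    exact ((((hol 0 0).mul (hol 1 1)).sub ((hol 0 1).mul (hol 1 0))).differentiableAt
      (hKopen.mem_nhds hz))
  -- the locally glued determinant near the circle K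
  set ρ : ℝ := (r + r') / 2 with hρdef
  have hrρ : r < ρ := by simp only [hρdef]; linarith
  have hρr' : ρ < r' := by simp only [hρdef]; linarith
  have hρ0 : 0 < ρ := hr.trans hrρ
  set f : ℂ → ℂ := fun w => if dist w z₀ ≤ r then (Ψp w).det else (Ψ w).det with hfdef
  -- continuity of f on the closed ball of radius ρ
  have hdetm_eq : ∀ w : ℂ, r ≤ dist w z₀ → dist w z₀ ≤ ρ → f w = (Ψm w).det := by
    intro w hw1 hw2
    rcases eq_or_lt_of_le hw1 with h | h
    · have hwK : w ∈ K := by rw [hK, mem_sphere]; exact h.symm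
      have : (Ψm w).det = (Ψp w).det := by
        rw [jump w hwK, Matrix.det_mul, hG w hwK, mul_one]
      rw [hfdef]
      simp only [if_pos h.symm.le]
      exact this.symm
    · rw [hfdef]
      simp only [if_neg (not_le.2 h)]
      rw [hΨm_eq w h (hw2.trans hρr'.le)]
  have hfc : ContinuousOn f (closedBall z₀ ρ) := by
    have hs1 : ContinuousOn f (closedBall z₀ r) := by
      refine (det_continuousOn hΨp_cont).congr fun w hw => ?_
      rw [hfdef]
      simp only [if_pos (mem_closedBall.1 hw)]
    have hs2 : ContinuousOn f {w : ℂ | r ≤ dist w z₀ ∧ dist w z₀ ≤ ρ} := by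
      refine ContinuousOn.congr (det_continuousOn (hΨm_cont.mono ?_)) ?_
      · exact fun w hw => ⟨hw.1, hw.2.trans hρr'.le⟩
      · exact fun w hw => hdetm_eq w hw.1 hw.2
    have hcover : closedBall z₀ ρ ⊆ closedBall z₀ r ∪ {w : ℂ | r ≤ dist w z₀ ∧ dist w z₀ ≤ ρ} := by
      intro w hw
      rcases le_or_gt (dist w z₀) r with h | h
      · exact Or.inl (mem_closedBall.2 h)
      · exact Or.inr ⟨h.le, mem_closedBall.1 hw⟩
    have hclosed2 : IsClosed {w : ℂ | r ≤ dist w z₀ ∧ dist w z₀ ≤ ρ} := by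
      have : {w : ℂ | r ≤ dist w z₀ ∧ dist w z₀ ≤ ρ}
          = {w : ℂ | r ≤ dist w z₀} ∩ closedBall z₀ ρ := by
        ext w; simp [mem_closedBall]
      rw [this]
      exact (isClosed_le continuous_const (continuous_id.dist continuous_const)).inter
        isClosed_closedBall
    intro w hw
    have := hcover hw
    have hu : ContinuousWithinAt f (closedBall z₀ r ∪ {w : ℂ | r ≤ dist w z₀ ∧ dist w z₀ ≤ ρ}) w := by
      have c1 : ContinuousWithinAt f (closedBall z₀ r) w := by
        by_cases h : w ∈ closedBall z₀ r
        · exact hs1 w h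
        · exact continuousWithinAt_of_notMem_closure (by rwa [isClosed_closedBall.closure_eq])
      have c2 : ContinuousWithinAt f {w : ℂ | r ≤ dist w z₀ ∧ dist w z₀ ≤ ρ} w := by
        by_cases h : w ∈ {w : ℂ | r ≤ dist w z₀ ∧ dist w z₀ ≤ ρ}
        · exact hs2 w h
        · exact continuousWithinAt_of_notMem_closure (by rwa [hclosed2.closure_eq])
      exact c1.union c2
    exact hu.mono hcover
  -- differentiability of f off the sphere
  have hfd : ∀ w : ℂ, dist w z₀ < ρ → dist w z₀ ≠ r → DifferentiableAt ℂ f w := by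
    intro w hw1 hw2
    have hwK : w ∉ Kper := by
      rw [hchar w (hw1.le.trans hρr'.le)]
      exact hw2
    rcases lt_or_gt_of_ne hw2 with h | h
    · have hev : f =ᶠ[nhds w] fun z => (Ψ z).det := by
        refine Filter.eventuallyEq_of_mem (isOpen_ball.mem_nhds (mem_ball.2 h)) fun x hx => ?_
        rw [hfdef]
        simp only [if_pos (mem_ball.1 hx).le]
        rw [hΨp_eq x hx]
      exact (hev.differentiableAt_iff).2 (hdetΨ w hwK)
    · have hopen : IsOpen {x : ℂ | r < dist x z₀} := by
        have : {x : ℂ | r < dist x z₀} = (closedBall z₀ r)ᶜ := by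
          ext x; simp [mem_closedBall, not_le]
        rw [this]
        exact isClosed_closedBall.isOpen_compl
      have hev : f =ᶠ[nhds w] fun z => (Ψ z).det := by
        refine Filter.eventuallyEq_of_mem
          (hopen.mem_nhds (show w ∈ {x : ℂ | r < dist x z₀} from h)) fun x hx => ?_
        rw [hfdef]
        simp only [Set.mem_setOf_eq] at hx
        simp only [if_neg (not_le.2 hx)]
      exact (hev.differentiableAt_iff).2 (hdetΨ w hwK)
  have hfball : ∀ w ∈ ball z₀ ρ, DifferentiableAt ℂ f w := removable_circle hr hrρ hfc hfd
  -- the globally glued function F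
  classical
  set E : ℂ → Prop := fun z => ∃ k : ℤ, dist (z - (k : ℂ) * (π : ℝ) * Complex.I) z₀ ≤ r with hEdef
  set F : ℂ → ℂ := fun z =>
    if h : E z then (Ψp (z - ((h.choose : ℤ) : ℂ) * (π : ℝ) * Complex.I)).det else (Ψ z).det
    with hFdef
  have hEchoose : ∀ {z : ℂ} (h : E z) (k : ℤ),
      dist (z - (k : ℂ) * (π : ℝ) * Complex.I) z₀ ≤ r → h.choose = k := by
    intro z h k hk
    exact huniq z h.choose k (h.choose_spec.trans hrr'.le) (hk.trans hrr'.le)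
  -- F agrees with det Ψ off Kper
  have hF_eq : ∀ z ∉ Kper, F z = (Ψ z).det := by
    intro z hz
    rw [hFdef]
    by_cases h : E z
    · simp only [dif_pos h]
      set k := h.choose with hk
      have hle : dist (z - (k : ℂ) * (π : ℝ) * Complex.I) z₀ ≤ r := h.choose_spec
      have hne : dist (z - (k : ℂ) * (π : ℝ) * Complex.I) z₀ ≠ r := by
        intro he
        exact hz ((hmem z).2 ⟨k, he⟩)
      have hlt : z - (k : ℂ) * (π : ℝ) * Complex.I ∈ ball z₀ r :=
        mem_ball.2 (lt_of_le_of_ne hle hne)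
      rw [hΨp_eq _ hlt]
      have := perZ k (z - (k : ℂ) * (π : ℝ) * Complex.I)
      rw [sub_add_cancel] at this
      rw [this]
    · simp only [dif_neg h]
  -- F is entire
  have hFdiff : ∀ z : ℂ, DifferentiableAt ℂ F z := by
    intro z
    by_cases hz : z ∈ Kper
    · obtain ⟨k, hk⟩ := (hmem z).1 hz
      have hNopen : IsOpen {w : ℂ | dist (w - (k : ℂ) * (π : ℝ) * Complex.I) z₀ < ρ} := by
        have : Continuous fun w : ℂ => dist (w - (k : ℂ) * (π : ℝ) * Complex.I) z₀ :=
          ((continuous_id.sub continuous_const).dist continuous_const)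
        exact isOpen_lt this continuous_const
      have hzN : z ∈ {w : ℂ | dist (w - (k : ℂ) * (π : ℝ) * Complex.I) z₀ < ρ} := by
        simp only [Set.mem_setOf_eq, hk]; exact hrρ
      have hFf : ∀ w ∈ {w : ℂ | dist (w - (k : ℂ) * (π : ℝ) * Complex.I) z₀ < ρ},
          F w = f (w - (k : ℂ) * (π : ℝ) * Complex.I) := by
        intro w hw
        simp only [Set.mem_setOf_eq] at hw
        by_cases hv : dist (w - (k : ℂ) * (π : ℝ) * Complex.I) z₀ ≤ r
        · have hEw : E w := ⟨k, hv⟩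
          rw [hFdef]
          simp only [dif_pos hEw]
          rw [hEchoose hEw k hv, hfdef]
          simp only [if_pos hv]
        · have hEw : ¬ E w := by
            rintro ⟨k', hk'⟩
            exact hv (huniq w k' k (hk'.trans hrr'.le) (hw.le.trans hρr'.le) ▸ hk')
          rw [hFdef]
          simp only [dif_neg hEw]
          rw [hfdef]
          simp only [if_neg hv]
          have := perZ k (w - (k : ℂ) * (π : ℝ) * Complex.I)
          rw [sub_add_cancel] at this
          rw [this]
      have hev : F =ᶠ[nhds z] fun w => f (w - (k : ℂ) * (π : ℝ) * Complex.I) :=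
        Filter.eventuallyEq_of_mem (hNopen.mem_nhds hzN) hFf
      refine hev.differentiableAt_iff.2 ?_
      have h1 : DifferentiableAt ℂ f (z - (k : ℂ) * (π : ℝ) * Complex.I) :=
        hfball _ (mem_ball.2 (by rw [hk]; exact hrρ))
      exact h1.comp z (differentiableAt_id.sub_const _)
    · have hev : F =ᶠ[nhds z] fun w => (Ψ w).det :=
        Filter.eventuallyEq_of_mem (hKopen.mem_nhds hz) fun w hw => hF_eq w hw
      exact hev.differentiableAt_iff.2 (hdetΨ z hz)
  -- periodicity of F
  have hFper : ∀ z : ℂ, F (z + (π : ℝ) * Complex.I) = F z := by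
    intro z
    by_cases h : E z
    · have hk : dist (z - (h.choose : ℂ) * (π : ℝ) * Complex.I) z₀ ≤ r := h.choose_spec
      set k : ℤ := h.choose with hk0
      have hE' : E (z + (π : ℝ) * Complex.I) := by
        refine ⟨k + 1, ?_⟩
        have : z + (π : ℝ) * Complex.I - ((k + 1 : ℤ) : ℂ) * (π : ℝ) * Complex.I
            = z - (k : ℂ) * (π : ℝ) * Complex.I := by push_cast; ring
        rw [this]; exact hk
      have hk1 : hE'.choose = k + 1 := by
        refine hEchoose hE' (k + 1) ?_
        have : z + (π : ℝ) * Complex.I - ((k + 1 : ℤ) : ℂ) * (π : ℝ) * Complex.I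
            = z - (k : ℂ) * (π : ℝ) * Complex.I := by push_cast; ring
        rw [this]; exact hk
      rw [hFdef]
      simp only [dif_pos h, dif_pos hE', hk1]
      have harg : z + (π : ℝ) * Complex.I - ((k + 1 : ℤ) : ℂ) * (π : ℝ) * Complex.I
          = z - (k : ℂ) * (π : ℝ) * Complex.I := by push_cast; ring
      rw [harg]
    · have hE' : ¬ E (z + (π : ℝ) * Complex.I) := by
        rintro ⟨k, hk⟩
        refine h ⟨k - 1, ?_⟩
        have : z - ((k - 1 : ℤ) : ℂ) * (π : ℝ) * Complex.I
            = z + (π : ℝ) * Complex.I - (k : ℂ) * (π : ℝ) * Complex.I := by push_cast; ring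
        rw [this]; exact hk
      rw [hFdef]
      simp only [dif_neg h, dif_neg hE']
      rw [per]
  have hFperZ : ∀ (k : ℤ) (z : ℂ), F (z + (k : ℂ) * (π : ℝ) * Complex.I) = F z := by
    intro k
    induction k using Int.induction_on with
    | zero => intro z; simp
    | succ n ih =>
        intro z
        have harg : z + ((n + 1 : ℤ) : ℂ) * (π : ℝ) * Complex.I
            = (z + ((n : ℤ) : ℂ) * (π : ℝ) * Complex.I) + (π : ℝ) * Complex.I := by
          push_cast; ring
        rw [harg, hFper, ih]
    | pred n ih =>
        intro z
        have harg : z + ((-n : ℤ) : ℂ) * (π : ℝ) * Complex.I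
            = (z + ((-n - 1 : ℤ) : ℂ) * (π : ℝ) * Complex.I) + (π : ℝ) * Complex.I := by
          push_cast; ring
        have := hFper (z + ((-n - 1 : ℤ) : ℂ) * (π : ℝ) * Complex.I)
        rw [← harg] at this
        rw [← this, ih]
  -- the real part of points of Kper is close to that of z₀
  have hreK : ∀ z ∈ Kper, |z.re - z₀.re| ≤ r := by
    intro z hz
    obtain ⟨k, hk⟩ := (hmem z).1 hz
    have h1 := Complex.abs_re_le_norm (z - (k : ℂ) * (π : ℝ) * Complex.I - z₀)
    have h2 : (z - (k : ℂ) * (π : ℝ) * Complex.I - z₀).re = z.re - z₀.re := by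
      simp [Complex.sub_re, Complex.mul_re, Complex.mul_im]
    rw [h2] at h1
    rw [Complex.dist_eq] at hk
    rw [hk] at h1
    exact h1
  -- limits of the determinant
  have hdetT : Tendsto (fun z => (Ψ z).det) (comap Complex.re atTop) (nhds 1) := by
    have h := ((limPlus 0 0).mul (limPlus 1 1)).sub ((limPlus 0 1).mul (limPlus 1 0))
    have hval : (1 : Matrix (Fin 2) (Fin 2) ℂ) 0 0 * (1 : Matrix (Fin 2) (Fin 2) ℂ) 1 1
        - (1 : Matrix (Fin 2) (Fin 2) ℂ) 0 1 * (1 : Matrix (Fin 2) (Fin 2) ℂ) 1 0 = 1 := by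
      simp [Matrix.one_apply]
    rw [hval] at h
    exact h.congr fun z => (Matrix.det_fin_two (Ψ z)).symm
  obtain ⟨M, limM⟩ := limMinus
  have hdetB : Tendsto (fun z => (Ψ z).det) (comap Complex.re atBot) (nhds M.det) := by
    have h := ((limM 0 0).mul (limM 1 1)).sub ((limM 0 1).mul (limM 1 0))
    rw [← Matrix.det_fin_two M] at h
    exact h.congr fun z => (Matrix.det_fin_two (Ψ z)).symm
  -- eventual bounds at both ends
  have hboundT : ∃ A : ℝ, ∀ z : ℂ, A ≤ z.re → ‖(Ψ z).det‖ ≤ ‖(1 : ℂ)‖ + 1 := by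
    have h := hdetT.norm.eventually_le_const (lt_add_one ‖(1 : ℂ)‖)
    rw [Filter.eventually_comap] at h
    obtain ⟨A, hA⟩ := Filter.eventually_atTop.1 h
    exact ⟨A, fun z hz => hA z.re hz z rfl⟩
  have hboundB : ∃ A : ℝ, ∀ z : ℂ, z.re ≤ A → ‖(Ψ z).det‖ ≤ ‖M.det‖ + 1 := by
    have h := hdetB.norm.eventually_le_const (lt_add_one ‖M.det‖)
    rw [Filter.eventually_comap] at h
    obtain ⟨A, hA⟩ := Filter.eventually_atBot.1 h
    exact ⟨A, fun z hz => hA z.re hz z rfl⟩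
  obtain ⟨Ap, hAp⟩ := hboundT
  obtain ⟨Am, hAm⟩ := hboundB
  -- a compact fundamental region for the middle
  set T : ℝ := max (max (z₀.re - Am) (Ap - z₀.re)) r + 1 with hTdef
  have hT0 : 0 ≤ T := by
    have : (0:ℝ) ≤ max (max (z₀.re - Am) (Ap - z₀.re)) r := le_max_of_le_right hr.le
    linarith
  set S : Set ℂ := Complex.re ⁻¹' Set.Icc (z₀.re - T) (z₀.re + T)
      ∩ Complex.im ⁻¹' Set.Icc z₀.im (z₀.im + π) with hSdef
  have hScompact : IsCompact S := by
    have hclosed : IsClosed S :=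
      (isClosed_Icc.preimage Complex.continuous_re).inter
        (isClosed_Icc.preimage Complex.continuous_im)
    have hbounded : Bornology.IsBounded S := by
      refine (isBounded_closedBall :
        Bornology.IsBounded (closedBall z₀ (T + π))).subset fun z hz => ?_
      obtain ⟨hz1, hz2⟩ := hz
      simp only [Set.mem_preimage, Set.mem_Icc] at hz1 hz2
      rw [mem_closedBall, Complex.dist_eq]
      calc ‖z - z₀‖ ≤ |(z - z₀).re| + |(z - z₀).im| :=
            Complex.norm_le_abs_re_add_abs_im _
        _ ≤ T + π := by
            rw [Complex.sub_re, Complex.sub_im]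
            have i1 : |z.re - z₀.re| ≤ T := abs_le.2 ⟨by linarith [hz1.1], by linarith [hz1.2]⟩
            have i2 : |z.im - z₀.im| ≤ π := abs_le.2
              ⟨by linarith [hz2.1, Real.pi_pos], by linarith [hz2.2]⟩
            exact add_le_add i1 i2
    exact Metric.isCompact_of_isClosed_isBounded hclosed hbounded
  have hFcont : Continuous F := continuous_iff_continuousAt.2 fun z => (hFdiff z).continuousAt
  obtain ⟨C₀, hC₀⟩ := hScompact.exists_bound_of_continuousOn hFcont.continuousOn
  -- global bound on F
  have hFbound : ∀ z : ℂ, ‖F z‖ ≤ max C₀ (max (‖(1 : ℂ)‖ + 1) (‖M.det‖ + 1)) := by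
    intro z
    set n : ℤ := ⌊(z.im - z₀.im) / π⌋ with hn
    set w : ℂ := z - (n : ℂ) * (π : ℝ) * Complex.I with hw
    have hFzw : F z = F w := by
      have := hFperZ n w
      rw [hw, sub_add_cancel] at this
      rw [hw]
      exact this
    have hwre : w.re = z.re := by
      rw [hw]
      simp [Complex.sub_re, Complex.mul_re, Complex.mul_im]
    have hwim : z₀.im ≤ w.im ∧ w.im ≤ z₀.im + π := by
      have hπ := Real.pi_pos
      have h1 : (n : ℝ) ≤ (z.im - z₀.im) / π := Int.floor_le _
      have h2 : (z.im - z₀.im) / π < n + 1 := Int.lt_floor_add_one _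
      have hwimval : w.im = z.im - n * π := by
        rw [hw]
        simp [Complex.sub_im, Complex.mul_re, Complex.mul_im]
      constructor
      · rw [hwimval]
        have := mul_le_mul_of_nonneg_right h1 hπ.le
        rw [div_mul_cancel₀ _ (ne_of_gt hπ)] at this
        linarith
      · rw [hwimval]
        have := mul_lt_mul_of_pos_right h2 hπ
        rw [div_mul_cancel₀ _ (ne_of_gt hπ)] at this
        nlinarith
    rw [hFzw]
    by_cases hmid : |w.re - z₀.re| ≤ T
    · have hwS : w ∈ S := by
        refine ⟨?_, ?_⟩
        · simp only [Set.mem_preimage, Set.mem_Icc]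
          have := abs_le.1 hmid
          constructor <;> linarith [this.1, this.2]
        · simp only [Set.mem_preimage, Set.mem_Icc]
          exact ⟨hwim.1, hwim.2⟩
      exact le_max_of_le_left (hC₀ w hwS)
    · push_neg at hmid
      have hwK : w ∉ Kper := by
        intro hk
        have := hreK w hk
        have hrT : r ≤ T := by
          have : r ≤ max (max (z₀.re - Am) (Ap - z₀.re)) r := le_max_right _ _
          linarith
        linarith
      rw [hF_eq w hwK]
      have hT1 : Ap - z₀.re ≤ T := by
        have := (le_max_right (z₀.re - Am) (Ap - z₀.re)).trans
          (le_max_left _ r)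
        linarith
      have hT2 : z₀.re - Am ≤ T := by
        have := (le_max_left (z₀.re - Am) (Ap - z₀.re)).trans
          (le_max_left _ r)
        linarith
      rcases lt_abs.1 hmid with hcase | hcase
      · have : Ap ≤ w.re := by linarith
        exact le_trans (hAp w this) (le_max_of_le_right (le_max_left _ _))
      · have : w.re ≤ Am := by linarith
        exact le_trans (hAm w this) (le_max_of_le_right (le_max_right _ _))
  -- Liouville: F is constant
  have hFdiff' : Differentiable ℂ F := fun z => hFdiff z
  have hbdd : Bornology.IsBounded (Set.range F) := by
    refine isBounded_iff_forall_norm_le.2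
      ⟨max C₀ (max (‖(1 : ℂ)‖ + 1) (‖M.det‖ + 1)), ?_⟩
    rintro x ⟨z, rfl⟩
    exact hFbound z
  obtain ⟨cst, hcst⟩ := hFdiff'.exists_const_forall_eq_of_bounded hbdd
  -- the constant is 1, from the limit at +∞
  have hneBot : (comap Complex.re atTop).NeBot := by
    refine Filter.comap_neBot fun t ht => ?_
    obtain ⟨A, hA⟩ := Filter.mem_atTop_sets.1 ht
    exact ⟨(A : ℂ), by rw [Complex.ofReal_re]; exact hA A le_rfl⟩
  have hFT : Tendsto F (comap Complex.re atTop) (nhds 1) := by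
    refine hdetT.congr' ?_
    have hmemT : {z : ℂ | z₀.re + r' < z.re} ∈ comap Complex.re atTop := by
      refine Filter.mem_comap.2 ⟨Set.Ioi (z₀.re + r'), Ioi_mem_atTop _, fun z hz => hz⟩
    refine Filter.eventuallyEq_of_mem hmemT fun z hz => ?_
    have hzK : z ∉ Kper := by
      intro hk
      have h1 := hreK z hk
      have h2 : z₀.re + r' < z.re := hz
      have := abs_le.1 h1
      linarith [this.2]
    exact (hF_eq z hzK).symm
  have hFcst : Tendsto F (comap Complex.re atTop) (nhds cst) := by
    rw [show F = fun _ => cst from funext hcst]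
    exact tendsto_const_nhds
  have hc1 : cst = 1 := tendsto_nhds_unique hFcst hFT
  -- conclusion
  intro z hz
  rw [← hF_eq z hz, hcst z, hc1]
end

section
/- Let z₀ ∈ ℂ and 0 < r < r' be such that the closed disk of radius r' centered at z₀ is contained in the open strip {z : −π/4 < Im z < 3π/4}; let K be the circle {z : |z − z₀| = r}, K_per = ∪_{k∈ℤ}(K + ikπ), and let G : K → Mat₂(ℂ) satisfy det G(z) = 1 for all z ∈ K. Suppose Ψ₁, Ψ₂ : ℂ → Mat₂(ℂ) both satisfy: (i) each entry holomorphic on ℂ ∖ K_per; (ii) iπ-periodicity Ψᵢ(z + iπ) = Ψᵢ(z); (iii) existence of continuous boundary values Ψᵢ₊ on the closed disk {|z − z₀| ≤ r} (agreeing with Ψᵢ on the open disk) and Ψᵢ₋ on the closed annulus {r ≤ |z − z₀| ≤ r'} (agreeing with Ψᵢ on {r < |z − z₀| ≤ r'}); (iv) the jump condition Ψᵢ₋(z) = Ψᵢ₊(z)·G(z) for all z ∈ K; (v) Ψᵢ(z) → I₂ entrywise as Re z → +∞, and Ψᵢ(z) converges entrywise to some constant matrix as Re z → −∞. Then Ψ₁(z)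 = Ψ₂(z) for all z ∈ ℂ ∖ K_per; i.e., the matrix Riemann–Hilbert problem with unimodular jump matrix admits at most one solution. -/
open Real Filter Metric

private lemma exp_two_pi_shift (w : ℂ) (k : ℤ) :
    Complex.exp (2 * (w + (k : ℂ) * (π : ℝ) * Complex.I)) = Complex.exp (2 * w) := by
  have : 2 * (w + (k : ℂ) * (π : ℝ) * Complex.I) = 2 * w + k * (2 * (π:ℝ) * Complex.I) := by
    ring
  rw [this, Complex.exp_add, Complex.exp_int_mul_two_pi_mul_I, mul_one]

private lemma scalar_key (z₀ : ℂ) (r r' : ℝ) (hr : 0 < r) (hrr' : r < r')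
    (hstrip : closedBall z₀ r' ⊆ {z : ℂ | -(π / 4) < z.im ∧ z.im < 3 * π / 4})
    (K Kper : Set ℂ) (hK : K = sphere z₀ r)
    (hKper : Kper = ⋃ k : ℤ, (fun z => z + (k : ℂ) * (π : ℝ) * Complex.I) '' K)
    (f fp fm : ℂ → ℂ)
    (hol : DifferentiableOn ℂ f Kperᶜ)
    (per : ∀ z, f (z + (π : ℝ) * Complex.I) = f z)
    (hfp_cont : ContinuousOn fp (closedBall z₀ r))
    (hfp_eq : ∀ z ∈ ball z₀ r, fp z = f z)
    (hfm_cont : ContinuousOn fm {z : ℂ | r ≤ dist z z₀ ∧ dist z z₀ ≤ r'})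
    (hfm_eq : ∀ z : ℂ, r < dist z z₀ → dist z z₀ ≤ r' → fm z = f z)
    (hjump : ∀ z ∈ K, fp z = fm z)
    (L : ℂ) (htop : Tendsto f (comap Complex.re atTop) (nhds L))
    (hbot : ∃ L', Tendsto f (comap Complex.re atBot) (nhds L')) :
    ∀ z ∉ Kper, f z = L := by
  obtain ⟨L', hbot⟩ := hbot
  -- geometry
  have hπr' : 2 * r' < π := by
    have hr'0 : (0:ℝ) ≤ r' := by linarith
    have h1 : z₀ + r' * Complex.I ∈ closedBall z₀ r' := by
      simp [Complex.dist_eq, add_sub_cancel_left, abs_of_nonneg hr'0]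
    have h2 : z₀ - r' * Complex.I ∈ closedBall z₀ r' := by
      have : z₀ - r' * Complex.I - z₀ = -(r' * Complex.I) := by ring
      simp [Complex.dist_eq, this, abs_of_nonneg hr'0]
    have e1 := hstrip h1
    have e2 := hstrip h2
    simp only [Set.mem_setOf_eq, Complex.add_im, Complex.sub_im, Complex.mul_im,
      Complex.ofReal_re, Complex.I_im, Complex.ofReal_im, Complex.I_re, mul_zero,
      mul_one, zero_mul, add_zero] at e1 e2
    linarith [e1.2, e2.1]
  have hrπ : r < π / 2 := by linarith
  set ρ : ℝ := (r + r') / 2 with hρdef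
  have hrρ : r < ρ := by simp only [hρdef]; linarith
  have hρr' : ρ < r' := by simp only [hρdef]; linarith
  have hρ0 : 0 < ρ := lt_trans hr hrρ
  -- Kper membership characterization
  have hKper_iff : ∀ z : ℂ, z ∈ Kper ↔ ∃ w ∈ K, ∃ k : ℤ, z = w + (k : ℂ) * (π : ℝ) * Complex.I := by
    intro z
    rw [hKper]
    simp only [Set.mem_iUnion, Set.mem_image]
    constructor
    · rintro ⟨k, w, hw, rfl⟩; exact ⟨w, hw, k, rfl⟩
    · rintro ⟨w, hw, k, rfl⟩; exact ⟨k, w, hw, rfl⟩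
  have hKper_exp : ∀ z : ℂ, z ∈ Kper ↔
      Complex.exp (2 * z) ∈ (fun w => Complex.exp (2 * w)) '' K := by
    intro z
    rw [hKper_iff]
    constructor
    · rintro ⟨w, hw, k, rfl⟩
      exact ⟨w, hw, (exp_two_pi_shift w k).symm⟩
    · rintro ⟨w, hw, hwz⟩
      rw [Complex.exp_eq_exp_iff_exists_int] at hwz
      obtain ⟨n, hn⟩ := hwz
      exact ⟨w, hw, -n, by push_cast; linear_combination - hn / 2⟩
  have hKper_closed : IsClosed Kper := by
    have : Kper = (fun z => Complex.exp (2 * z)) ⁻¹' ((fun w => Complex.exp (2 * w)) '' K) := by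
      ext z; exact hKper_exp z
    rw [this]
    refine IsClosed.preimage (by fun_prop) ?_
    refine IsCompact.isClosed ?_
    refine IsCompact.image ?_ (by fun_prop)
    rw [hK]; exact isCompact_sphere z₀ r
  have hKper_shift : ∀ (k : ℤ) (z : ℂ), z + (k : ℂ) * (π : ℝ) * Complex.I ∈ Kper ↔ z ∈ Kper := by
    intro k z
    rw [hKper_exp, hKper_exp, exp_two_pi_shift]
  have hK_sub : K ⊆ Kper := by
    intro w hw
    rw [hKper_iff]
    exact ⟨w, hw, 0, by simp⟩
  have hKper_inter : Kper ∩ closedBall z₀ r' = K := by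
    apply Set.Subset.antisymm
    · rintro z ⟨hz, hzball⟩
      rw [hKper_iff] at hz
      obtain ⟨w, hw, k, rfl⟩ := hz
      have him1 : |(w + (k : ℂ) * (π : ℝ) * Complex.I - z₀).im| ≤ r' := by
        refine le_trans (Complex.abs_im_le_norm _) ?_
        rw [← Complex.dist_eq]; exact mem_closedBall.mp hzball
      have him2 : |(w - z₀).im| ≤ r := by
        refine le_trans (Complex.abs_im_le_norm _) ?_
        rw [← Complex.dist_eq]
        rw [hK] at hw; exact le_of_eq (mem_sphere.mp hw)
      have him3 : (w + (k : ℂ) * (π : ℝ) * Complex.I - z₀).im = (w - z₀).im + k * π := by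
        simp [Complex.add_im, Complex.sub_im, Complex.mul_im]
        ring
      have hk : k = 0 := by
        have hkey : |(k:ℝ) * π| ≤ r' + r := by
          have heq : (k:ℝ) * π = ((w - z₀).im + k * π) - (w - z₀).im := by ring
          rw [him3] at him1
          rw [heq]
          exact le_trans (abs_sub _ _) (add_le_add him1 him2)
        have : |(k:ℝ)| * π ≤ r' + r := by rwa [abs_mul, abs_of_pos pi_pos] at hkey
        by_contra hk0
        have h1 : (1:ℝ) ≤ |(k:ℝ)| := by
          rw [← Int.cast_abs]
          exact_mod_cast Int.one_le_abs hk0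
        nlinarith [pi_pos]
      subst hk
      simpa using hw
    · intro w hw
      exact ⟨hK_sub hw, by
        rw [hK] at hw
        exact mem_closedBall.mpr (le_of_eq (mem_sphere.mp hw) |>.trans hrr'.le)⟩
  -- not-in-Kper facts
  have hnot_cball : ∀ x : ℂ, dist x z₀ ≤ r' → x ∉ K → x ∉ Kper := by
    intro x hx hxK hmem
    exact hxK (hKper_inter ▸ Set.mem_inter hmem (mem_closedBall.mpr hx))
  have hnot_inner : ∀ x ∈ ball z₀ r, x ∉ Kper := by
    intro x hx
    refine hnot_cball x (le_trans (mem_ball.mp hx).le hrr'.le) ?_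
    rw [hK]
    intro hxK
    exact absurd (mem_sphere.mp hxK) (ne_of_lt (mem_ball.mp hx))
  have hnot_ann : ∀ x : ℂ, r < dist x z₀ → dist x z₀ ≤ r' → x ∉ Kper := by
    intro x h1 h2
    refine hnot_cball x h2 ?_
    rw [hK]
    intro hxK
    exact absurd (mem_sphere.mp hxK) (ne_of_gt h1)
  have hKc_open : IsOpen Kperᶜ := hKper_closed.isOpen_compl
  have hfd : ∀ x : ℂ, x ∉ Kper → DifferentiableAt ℂ f x := fun x hx =>
    hol.differentiableAt (hKc_open.mem_nhds hx)
  have hfp_diff : ∀ x ∈ ball z₀ r, DifferentiableAt ℂ fp x := by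
    intro x hx
    refine (hfd x (hnot_inner x hx)).congr_of_eventuallyEq ?_
    filter_upwards [isOpen_ball.mem_nhds hx] with y hy using hfp_eq y hy
  have hopen_ann : IsOpen {y : ℂ | r < dist y z₀ ∧ dist y z₀ < r'} := by
    have : {y : ℂ | r < dist y z₀ ∧ dist y z₀ < r'} = ball z₀ r' ∩ (closedBall z₀ r)ᶜ := by
      ext y
      simp only [Set.mem_setOf_eq, Set.mem_inter_iff, mem_ball, Set.mem_compl_iff,
        mem_closedBall, not_le]
      tauto
    rw [this]
    exact isOpen_ball.inter isClosed_closedBall.isOpen_compl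
  have hfm_diff : ∀ x : ℂ, r < dist x z₀ → dist x z₀ < r' → DifferentiableAt ℂ fm x := by
    intro x h1 h2
    refine (hfd x (hnot_ann x h1 h2.le)).congr_of_eventuallyEq ?_
    filter_upwards [hopen_ann.mem_nhds ⟨h1, h2⟩] with y hy using hfm_eq y hy.1 hy.2.le
  -- the Cauchy transform over the circle of radius ρ
  set g : ℂ → ℂ := fun w => (2 * (π:ℝ) * Complex.I : ℂ)⁻¹ • ∮ ξ in C(z₀, ρ), (ξ - w)⁻¹ • fm ξ
    with hgdef
  have h2πI : (2 * (π:ℝ) * Complex.I : ℂ) ≠ 0 := by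
    simp [Real.pi_ne_zero, Complex.I_ne_zero, Complex.ofReal_ne_zero]
  have hann_sub : closedBall z₀ ρ \ ball z₀ r ⊆ {y : ℂ | r ≤ dist y z₀ ∧ dist y z₀ ≤ r'} := by
    rintro y ⟨h1, h2⟩
    exact ⟨not_lt.mp (fun h => h2 (mem_ball.mpr h)), le_trans (mem_closedBall.mp h1) hρr'.le⟩
  have hfmρ_cont : ContinuousOn fm (closedBall z₀ ρ \ ball z₀ r) := hfm_cont.mono hann_sub
  have hg_diff : DifferentiableOn ℂ g (ball z₀ ρ) := by
    have hci : CircleIntegrable fm z₀ ρ :=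
      ContinuousOn.circleIntegrable hρ0.le
        (hfm_cont.mono (fun y hy => by
          rw [mem_sphere] at hy
          exact ⟨hy ▸ hrρ.le, hy ▸ hρr'.le⟩))
    have h0 : (0 : NNReal) < ⟨ρ, hρ0.le⟩ := by exact_mod_cast hρ0
    have hps := hasFPowerSeriesOn_cauchy_integral (R := ⟨ρ, hρ0.le⟩) hci h0
    have h2 := hps.differentiableOn
    exact h2.mono (fun x hx => (Metric.eball_coe (x := z₀) (ε := ⟨ρ, hρ0.le⟩)).symm.subset hx)
  have hfp_circ0 : ∀ w : ℂ, r < dist w z₀ →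
      (∮ ξ in C(z₀, r), (ξ - w)⁻¹ • fp ξ) = 0 := by
    intro w hw
    refine Complex.circleIntegral_eq_zero_of_differentiable_on_off_countable hr.le
      Set.countable_empty ?_ ?_
    · have hne : ∀ ξ ∈ closedBall z₀ r, ξ - w ≠ 0 := by
        intro ξ hξ
        refine sub_ne_zero.mpr (fun h => ?_)
        exact absurd (h ▸ mem_closedBall.mp hξ) (not_le.mpr hw)
      exact ((continuousOn_id.sub continuousOn_const).inv₀ hne).smul hfp_cont
    · rintro x ⟨hx, -⟩
      have hne : x - w ≠ 0 := by
        refine sub_ne_zero.mpr (fun h => ?_)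
        exact absurd (h ▸ (mem_ball.mp hx).le) (not_le.mpr hw)
      exact ((differentiableAt_id.sub_const w).inv hne).smul (hfp_diff x hx)
  have hg_eq : ∀ w : ℂ, dist w z₀ < ρ → w ∉ K → g w = f w := by
    intro w hwρ hwK
    rcases lt_trichotomy (dist w z₀) r with hlt | heq | hgt
    · -- w strictly inside the circle K
      have hball : w ∈ ball z₀ r := mem_ball.mpr hlt
      have h₁ : (∮ ξ in C(z₀, ρ), (ξ - w)⁻¹ • fm ξ) = ∮ ξ in C(z₀, r), (ξ - w)⁻¹ • fm ξ := by
        refine Complex.circleIntegral_eq_of_differentiable_on_annulus_off_countable hr hrρ.le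
          Set.countable_empty ?_ ?_
        · have hne : ∀ ξ ∈ closedBall z₀ ρ \ ball z₀ r, ξ - w ≠ 0 := by
            rintro ξ ⟨-, hξ2⟩
            refine sub_ne_zero.mpr (fun h => ?_)
            exact hξ2 (h ▸ hball)
          exact ((continuousOn_id.sub continuousOn_const).inv₀ hne).smul hfmρ_cont
        · rintro ξ ⟨⟨hξ1, hξ2⟩, -⟩
          have hd1 : r < dist ξ z₀ := not_le.mp (fun h => hξ2 (mem_closedBall.mpr h))
          have hne : ξ - w ≠ 0 := by
            refine sub_ne_zero.mpr (fun h => ?_)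
            exact absurd (h ▸ hlt) (not_lt.mpr hd1.le)
          exact ((differentiableAt_id.sub_const w).inv hne).smul
            (hfm_diff ξ hd1 (lt_trans (mem_ball.mp hξ1) hρr'))
      have h₂ : (∮ ξ in C(z₀, r), (ξ - w)⁻¹ • fm ξ) = ∮ ξ in C(z₀, r), (ξ - w)⁻¹ • fp ξ := by
        refine circleIntegral.integral_congr hr.le (fun ξ hξ => ?_)
        have : fp ξ = fm ξ := hjump ξ (hK ▸ hξ)
        simp [this]
      have h₃ : (∮ ξ in C(z₀, r), (ξ - w)⁻¹ • fp ξ) = (2 * (π:ℝ) * Complex.I : ℂ) • fp w := by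
        refine Complex.circleIntegral_sub_inv_smul_of_differentiable_on_off_countable
          Set.countable_empty hball hfp_cont ?_
        rintro x ⟨hx, -⟩
        exact hfp_diff x hx
      rw [hgdef]
      simp only
      rw [h₁, h₂, h₃, inv_smul_smul₀ h2πI, hfp_eq w hball]
    · exact absurd (hK ▸ mem_sphere.mpr heq) hwK
    · -- w in the open annulus
      have hwr' : dist w z₀ < r' := lt_trans hwρ hρr'
      have hfmw : DifferentiableAt ℂ fm w := hfm_diff w hgt hwr'
      set F : ℂ → ℂ := dslope fm w with hFdef
      have hnbhd : closedBall z₀ ρ \ ball z₀ r ∈ nhds w := by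
        refine Filter.mem_of_superset ((isOpen_ball.inter isClosed_closedBall.isOpen_compl).mem_nhds
          ⟨mem_ball.mpr hwρ, fun h => absurd (mem_closedBall.mp h) (not_le.mpr hgt)⟩) ?_
        rintro y ⟨hy1, hy2⟩
        exact ⟨ball_subset_closedBall hy1, fun h => hy2 (ball_subset_closedBall h)⟩
      have hFc : ContinuousOn F (closedBall z₀ ρ \ ball z₀ r) :=
        (continuousOn_dslope hnbhd).2 ⟨hfmρ_cont, hfmw⟩
      have hFd : ∀ ξ ∈ (ball z₀ ρ \ closedBall z₀ r) \ {w}, DifferentiableAt ℂ F ξ := by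
        rintro ξ ⟨⟨hξ1, hξ2⟩, hξw⟩
        have hd1 : r < dist ξ z₀ := not_le.mp (fun h => hξ2 (mem_closedBall.mpr h))
        exact (differentiableAt_dslope_of_ne (Set.mem_singleton_iff.not.mp hξw)).2
          (hfm_diff ξ hd1 (lt_trans (mem_ball.mp hξ1) hρr'))
      have hFeq : (∮ ξ in C(z₀, ρ), F ξ) = ∮ ξ in C(z₀, r), F ξ :=
        Complex.circleIntegral_eq_of_differentiable_on_annulus_off_countable hr hrρ.le
          (Set.countable_singleton w) hFc hFd
      -- rewrite both circle integrals of F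
      have hFsphere : ∀ (R : ℝ), 0 < R → R ≠ dist w z₀ → ContinuousOn fm (sphere z₀ R) →
          (∮ ξ in C(z₀, R), F ξ) =
            (∮ ξ in C(z₀, R), (ξ - w)⁻¹ • fm ξ) - (∮ ξ in C(z₀, R), (ξ - w)⁻¹) • fm w := by
        intro R hR hRw hcont
        have hne : ∀ ξ ∈ sphere z₀ R, ξ ≠ w := by
          intro ξ hξ h
          exact hRw ((h ▸ mem_sphere.mp hξ).symm ▸ rfl)
        have hEq : Set.EqOn F (fun ξ => (ξ - w)⁻¹ • fm ξ - (ξ - w)⁻¹ • fm w) (sphere z₀ R) := by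
          intro ξ hξ
          rw [hFdef, dslope_of_ne fm (hne ξ hξ), slope_def_field]
          field_simp
          ring
        rw [circleIntegral.integral_congr hR.le hEq, ← circleIntegral.integral_smul_const]
        have hcne : ContinuousOn (fun ξ => (ξ - w)⁻¹) (sphere z₀ R) :=
          (continuousOn_id.sub continuousOn_const).inv₀
            (fun ξ hξ => sub_ne_zero.mpr (hne ξ hξ))
        refine circleIntegral.integral_sub ?_ ?_
        · exact ((hcne.smul hcont)).circleIntegrable hR.le
        · exact (hcne.smul continuousOn_const).circleIntegrable hR.le
      have hsub_ρ : ContinuousOn fm (sphere z₀ ρ) :=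
        hfm_cont.mono (fun y hy => by
          rw [mem_sphere] at hy
          exact ⟨hy ▸ hrρ.le, hy ▸ hρr'.le⟩)
      have hsub_r : ContinuousOn fm (sphere z₀ r) :=
        hfm_cont.mono (fun y hy => by
          rw [mem_sphere] at hy
          exact ⟨hy ▸ le_refl r, hy ▸ hrr'.le⟩)
      have hρside := hFsphere ρ hρ0 (ne_of_gt hwρ) hsub_ρ
      have hrside := hFsphere r hr (ne_of_lt hgt) hsub_r
      have hintρ : (∮ ξ in C(z₀, ρ), (ξ - w)⁻¹) = 2 * (π:ℝ) * Complex.I :=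
        circleIntegral.integral_sub_inv_of_mem_ball (mem_ball.mpr hwρ)
      have hintr : (∮ ξ in C(z₀, r), (ξ - w)⁻¹) = 0 := by
        refine Complex.circleIntegral_eq_zero_of_differentiable_on_off_countable hr.le
          Set.countable_empty ?_ ?_
        · refine (continuousOn_id.sub continuousOn_const).inv₀ (fun ξ hξ => ?_)
          refine sub_ne_zero.mpr (fun h => ?_)
          have h' : ξ = w := h
          exact absurd (h' ▸ mem_closedBall.mp hξ) (not_le.mpr hgt)
        · rintro x ⟨hx, -⟩
          have hne : x - w ≠ 0 := by
            refine sub_ne_zero.mpr (fun h => ?_)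
            exact absurd (h ▸ (mem_ball.mp hx).le) (not_le.mpr hgt)
          exact (differentiableAt_id.sub_const w).inv hne
      have hfmr : (∮ ξ in C(z₀, r), (ξ - w)⁻¹ • fm ξ) = 0 := by
        have hcongr : (∮ ξ in C(z₀, r), (ξ - w)⁻¹ • fm ξ)
            = ∮ ξ in C(z₀, r), (ξ - w)⁻¹ • fp ξ := by
          refine circleIntegral.integral_congr hr.le (fun ξ hξ => ?_)
          have : fp ξ = fm ξ := hjump ξ (hK ▸ hξ)
          simp [this]
        rw [hcongr]
        exact hfp_circ0 w hgt
      rw [hρside, hrside, hintρ, hintr, hfmr, zero_smul, sub_zero] at hFeq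
      have hval : (∮ ξ in C(z₀, ρ), (ξ - w)⁻¹ • fm ξ)
          = (2 * (π:ℝ) * Complex.I : ℂ) • fm w := sub_eq_zero.mp hFeq
      rw [hgdef]
      simp only
      rw [hval, inv_smul_smul₀ h2πI, hfm_eq w hgt hwr'.le]
  classical
  have hperf : Function.Periodic f ((π:ℝ) * Complex.I) := per
  have per' : ∀ (k : ℤ) (z : ℂ), f (z + (k:ℂ) * (π:ℝ) * Complex.I) = f z := by
    intro k z
    have h := (hperf.zsmul k) z
    simpa [zsmul_eq_mul, mul_assoc] using h
  set κ : ℂ → ℤ := fun z => ⌊(z.im - z₀.im) / π + 1/2⌋ with hκdef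
  have hκ_eq : ∀ (k : ℤ) (z : ℂ), |z.im - z₀.im - k * π| ≤ r → κ z = k := by
    intro k z hz
    rw [hκdef]
    simp only
    rw [Int.floor_eq_iff]
    rw [abs_le] at hz
    have hπ0 := pi_pos
    constructor
    · have h1 : (k:ℝ) - 1/2 ≤ (z.im - z₀.im) / π := by
        rw [le_div_iff₀ hπ0]
        nlinarith [hz.1]
      linarith
    · have h2 : (z.im - z₀.im) / π < (k:ℝ) + 1/2 := by
        rw [div_lt_iff₀ hπ0]
        nlinarith [hz.2]
      push_cast
      linarith
  set Fex : ℂ → ℂ :=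
    fun z => if z ∈ Kper then g (z - (κ z : ℂ) * (π:ℝ) * Complex.I) else f z with hFexdef
  have hFex_out : ∀ z ∉ Kper, Fex z = f z := fun z hz => if_neg hz
  have hKmem_dist : ∀ z ∈ K, dist z z₀ = r := by
    intro z hz; rw [hK] at hz; exact mem_sphere.mp hz
  have hκ_memK : ∀ (k : ℤ) (z : ℂ), z - (k:ℂ) * (π:ℝ) * Complex.I ∈ K → κ z = k := by
    intro k z hzK
    apply hκ_eq
    have h1 : ‖z - (k:ℂ) * (π:ℝ) * Complex.I - z₀‖ = r := by
      rw [← Complex.dist_eq]; exact hKmem_dist _ hzK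
    have h2 := Complex.abs_im_le_norm (z - (k:ℂ) * (π:ℝ) * Complex.I - z₀)
    rw [h1] at h2
    have him : (z - (k:ℂ) * (π:ℝ) * Complex.I - z₀).im = z.im - z₀.im - k * π := by
      simp [Complex.sub_im, Complex.mul_im]
      ring
    rwa [him] at h2
  have hshift' : ∀ (k : ℤ) (z : ℂ), z - (k:ℂ) * (π:ℝ) * Complex.I ∈ Kper ↔ z ∈ Kper := by
    intro k z
    have h := hKper_shift k (z - (k:ℂ) * (π:ℝ) * Complex.I)
    rw [sub_add_cancel] at h
    exact h.symm
  have hFex_eq_g : ∀ (k : ℤ) (y : ℂ), dist y (z₀ + (k:ℂ) * (π:ℝ) * Complex.I) < ρ →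
      Fex y = g (y - (k:ℂ) * (π:ℝ) * Complex.I) := by
    intro k y hy
    have hy' : dist (y - (k:ℂ) * (π:ℝ) * Complex.I) z₀ < ρ := by
      rwa [Complex.dist_eq, show y - (k:ℂ) * (π:ℝ) * Complex.I - z₀
        = y - (z₀ + (k:ℂ) * (π:ℝ) * Complex.I) by ring, ← Complex.dist_eq]
    by_cases hyK : y ∈ Kper
    · have hyK2 : y - (k:ℂ) * (π:ℝ) * Complex.I ∈ Kper := (hshift' k y).2 hyK
      have hyK3 : y - (k:ℂ) * (π:ℝ) * Complex.I ∈ K :=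
        hKper_inter ▸ Set.mem_inter hyK2 (mem_closedBall.mpr (le_trans hy'.le hρr'.le))
      rw [hFexdef]; simp only [if_pos hyK]
      rw [hκ_memK k y hyK3]
    · have hyK' : y - (k:ℂ) * (π:ℝ) * Complex.I ∉ K := fun h => hyK ((hshift' k y).1 (hK_sub h))
      rw [hFexdef]; simp only [if_neg hyK]
      rw [hg_eq _ hy' hyK']
      have h := per' k (y - (k:ℂ) * (π:ℝ) * Complex.I)
      rw [sub_add_cancel] at h
      rw [h]
  have hFex_diff : Differentiable ℂ Fex := by
    intro z
    by_cases hz : z ∈ Kper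
    · obtain ⟨w, hwK, k, rfl⟩ := (hKper_iff z).1 hz
      have hdist : dist (w + (k:ℂ) * (π:ℝ) * Complex.I) (z₀ + (k:ℂ) * (π:ℝ) * Complex.I) < ρ := by
        rw [Complex.dist_eq, show w + (k:ℂ) * (π:ℝ) * Complex.I
          - (z₀ + (k:ℂ) * (π:ℝ) * Complex.I) = w - z₀ by ring, ← Complex.dist_eq,
          hKmem_dist w hwK]
        exact hrρ
      have hmem : ball (z₀ + (k:ℂ) * (π:ℝ) * Complex.I) ρ
          ∈ nhds (w + (k:ℂ) * (π:ℝ) * Complex.I) := isOpen_ball.mem_nhds (mem_ball.mpr hdist)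
      have heq : Fex =ᶠ[nhds (w + (k:ℂ) * (π:ℝ) * Complex.I)]
          (fun y => g (y - (k:ℂ) * (π:ℝ) * Complex.I)) := by
        filter_upwards [hmem] with y hy using hFex_eq_g k y (mem_ball.mp hy)
      have hg1 : DifferentiableAt ℂ g
          (w + (k:ℂ) * (π:ℝ) * Complex.I - (k:ℂ) * (π:ℝ) * Complex.I) := by
        refine hg_diff.differentiableAt (isOpen_ball.mem_nhds ?_)
        rw [mem_ball, add_sub_cancel_right, hKmem_dist w hwK]
        exact hrρ
      have hgd : DifferentiableAt ℂ (g ∘ (fun y => y - (k:ℂ) * (π:ℝ) * Complex.I))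
          (w + (k:ℂ) * (π:ℝ) * Complex.I) :=
        DifferentiableAt.comp (g := g) (f := fun y => y - (k:ℂ) * (π:ℝ) * Complex.I) _
          hg1 (differentiableAt_id.sub_const _)
      exact hgd.congr_of_eventuallyEq heq
    · have heq : Fex =ᶠ[nhds z] f := by
        filter_upwards [hKc_open.mem_nhds hz] with y hy using hFex_out y hy
      exact (hfd z hz).congr_of_eventuallyEq heq
  have hsh1 : ∀ y : ℂ, y + (π:ℝ) * Complex.I ∈ Kper ↔ y ∈ Kper := by
    intro y
    have h := hKper_shift 1 y
    rw [show ((1:ℤ):ℂ) * (π:ℝ) * Complex.I = (π:ℝ) * Complex.I by push_cast; ring] at h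
    exact h
  have hFex_per : Function.Periodic Fex ((π:ℝ) * Complex.I) := by
    intro z
    by_cases hz : z ∈ Kper
    · have hz' : z + (π:ℝ) * Complex.I ∈ Kper := (hsh1 z).2 hz
      have hκs : κ (z + (π:ℝ) * Complex.I) = κ z + 1 := by
        rw [hκdef]; simp only
        have harg : ((z + (π:ℝ) * Complex.I).im - z₀.im) / π + 1/2
            = ((z.im - z₀.im) / π + 1/2) + 1 := by
          simp only [Complex.add_im, Complex.mul_im, Complex.ofReal_re, Complex.I_im,
            Complex.ofReal_im, Complex.I_re, mul_one, mul_zero, zero_mul, add_zero]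
          field_simp
          ring
        rw [harg, Int.floor_add_one]
      rw [hFexdef]; simp only [if_pos hz, if_pos hz', hκs]
      congr 1
      push_cast
      ring
    · have hz' : z + (π:ℝ) * Complex.I ∉ Kper := fun h => hz ((hsh1 z).1 h)
      rw [hFexdef]; simp only [if_neg hz, if_neg hz']
      exact per z
  have hFex_per' : ∀ (k : ℤ) (z : ℂ), Fex (z + (k:ℂ) * ((π:ℝ) * Complex.I)) = Fex z := by
    intro k z
    have h := (hFex_per.zsmul k) z
    simpa [zsmul_eq_mul] using h
  have hKper_re : ∀ z ∈ Kper, |z.re - z₀.re| ≤ r := by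
    intro z hz
    obtain ⟨w, hwK, k, rfl⟩ := (hKper_iff z).1 hz
    have h1 : ‖w - z₀‖ = r := by
      rw [← Complex.dist_eq]; exact hKmem_dist w hwK
    have h2 := Complex.abs_re_le_norm (w - z₀)
    rw [h1] at h2
    have hre : (w + (k:ℂ) * (π:ℝ) * Complex.I).re = w.re := by
      simp [Complex.add_re, Complex.mul_re]
    rw [hre]
    exact h2
  have hfartop : ∀ᶠ z in comap Complex.re atTop, f z = Fex z := by
    filter_upwards [Filter.preimage_mem_comap (Ioi_mem_atTop (z₀.re + r))] with z hz
    refine (hFex_out z (fun hmem => ?_)).symm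
    have h := (abs_le.mp (hKper_re z hmem)).2
    have h2 : z₀.re + r < z.re := hz
    linarith
  have hfarbot : ∀ᶠ z in comap Complex.re atBot, f z = Fex z := by
    filter_upwards [Filter.preimage_mem_comap (Iio_mem_atBot (z₀.re - r))] with z hz
    refine (hFex_out z (fun hmem => ?_)).symm
    have h := (abs_le.mp (hKper_re z hmem)).1
    have h2 : z.re < z₀.re - r := hz
    linarith
  have hFextop : Tendsto Fex (comap Complex.re atTop) (nhds L) := htop.congr' hfartop
  have hFexbot : Tendsto Fex (comap Complex.re atBot) (nhds L') := hbot.congr' hfarbot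
  obtain ⟨Atop, hAtop⟩ : ∃ A : ℝ, ∀ z : ℂ, A ≤ z.re → ‖Fex z‖ ≤ ‖L‖ + 1 := by
    have hev : Fex ⁻¹' closedBall L 1 ∈ comap Complex.re atTop :=
      hFextop (closedBall_mem_nhds L one_pos)
    rw [Filter.mem_comap] at hev
    obtain ⟨t, ht, hsub⟩ := hev
    obtain ⟨A, hA⟩ := mem_atTop_sets.mp ht
    refine ⟨A, fun z hz => ?_⟩
    have hd : dist (Fex z) L ≤ 1 := mem_closedBall.mp (hsub (hA _ hz))
    calc ‖Fex z‖ = ‖Fex z - L + L‖ := by ring_nf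
      _ ≤ ‖Fex z - L‖ + ‖L‖ := norm_add_le _ _
      _ ≤ ‖L‖ + 1 := by rw [← dist_eq_norm]; linarith
  obtain ⟨Abot, hAbot⟩ : ∃ A : ℝ, ∀ z : ℂ, z.re ≤ A → ‖Fex z‖ ≤ ‖L'‖ + 1 := by
    have hev : Fex ⁻¹' closedBall L' 1 ∈ comap Complex.re atBot :=
      hFexbot (closedBall_mem_nhds L' one_pos)
    rw [Filter.mem_comap] at hev
    obtain ⟨t, ht, hsub⟩ := hev
    obtain ⟨A, hA⟩ := mem_atBot_sets.mp ht
    refine ⟨A, fun z hz => ?_⟩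
    have hd : dist (Fex z) L' ≤ 1 := mem_closedBall.mp (hsub (hA _ hz))
    calc ‖Fex z‖ = ‖Fex z - L' + L'‖ := by ring_nf
      _ ≤ ‖Fex z - L'‖ + ‖L'‖ := norm_add_le _ _
      _ ≤ ‖L'‖ + 1 := by rw [← dist_eq_norm]; linarith
  set B : ℝ := max |Atop| |Abot| with hBdef
  obtain ⟨C, hC⟩ : ∃ C, ∀ z ∈ closedBall (0:ℂ) (B + π), ‖Fex z‖ ≤ C :=
    (isCompact_closedBall (0:ℂ) (B + π)).exists_bound_of_continuousOn
      hFex_diff.continuous.continuousOn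
  set M : ℝ := max C (max (‖L‖ + 1) (‖L'‖ + 1)) with hMdef
  have hbound : ∀ z : ℂ, ‖Fex z‖ ≤ M := by
    intro z
    rcases le_or_gt Atop z.re with h1 | h1
    · exact le_trans (hAtop z h1) (le_trans (le_max_left _ _) (le_max_right _ _))
    rcases le_or_gt z.re Abot with h2 | h2
    · exact le_trans (hAbot z h2) (le_trans (le_max_right _ _) (le_max_right _ _))
    -- middle region : use periodicity to move into a compact set
    set m : ℤ := ⌊z.im / π⌋ with hmdef
    set z' : ℂ := z - (m:ℂ) * ((π:ℝ) * Complex.I) with hz'def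
    have hzz' : z = z' + (m:ℂ) * ((π:ℝ) * Complex.I) := by rw [hz'def]; ring
    have hFzz' : Fex z = Fex z' := by
      conv_lhs => rw [hzz']
      exact hFex_per' m z'
    have him' : z'.im = z.im - m * π := by
      simp [hz'def, Complex.sub_im, Complex.mul_im]
    have hre' : z'.re = z.re := by
      simp [hz'def, Complex.sub_re, Complex.mul_re]
    have hπ0 := pi_pos
    have hfl1 : (m:ℝ) * π ≤ z.im := by
      have := Int.floor_le (z.im / π)
      calc (m:ℝ) * π ≤ z.im / π * π := by
            exact mul_le_mul_of_nonneg_right this hπ0.le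
        _ = z.im := div_mul_cancel₀ _ hπ0.ne'
    have hfl2 : z.im < (m + 1 : ℝ) * π := by
      have := Int.lt_floor_add_one (z.im / π)
      calc z.im = z.im / π * π := (div_mul_cancel₀ _ hπ0.ne').symm
        _ < (m + 1 : ℝ) * π := by
            exact mul_lt_mul_of_pos_right (by exact_mod_cast this) hπ0
    have him_bound : |z'.im| ≤ π := by
      rw [him', abs_le]
      constructor <;> nlinarith
    have hre_bound : |z'.re| ≤ B := by
      rw [hre', abs_le]
      constructor
      · have : -|Abot| ≤ Abot := neg_abs_le Abot
        have hB2 : |Abot| ≤ B := le_max_right _ _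
        linarith
      · have : Atop ≤ |Atop| := le_abs_self Atop
        have hB1 : |Atop| ≤ B := le_max_left _ _
        linarith
    have hmem : z' ∈ closedBall (0:ℂ) (B + π) := by
      rw [mem_closedBall_zero_iff]
      calc ‖z'‖ ≤ |z'.re| + |z'.im| := Complex.norm_le_abs_re_add_abs_im z'
        _ ≤ B + π := add_le_add hre_bound him_bound
    rw [hFzz']
    exact le_trans (hC z' hmem) (le_max_left _ _)
  have hrange : Bornology.IsBounded (Set.range Fex) := by
    refine (Metric.isBounded_closedBall (x := (0:ℂ)) (r := M)).subset ?_
    rintro y ⟨z, rfl⟩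
    exact mem_closedBall_zero_iff.mpr (hbound z)
  have hconst : ∀ z : ℂ, Fex z = Fex 0 := fun z =>
    hFex_diff.apply_eq_apply_of_bounded hrange z 0
  have hNeBot : (comap Complex.re atTop).NeBot := by
    refine Filter.comap_neBot (fun t ht => ?_)
    obtain ⟨a, ha⟩ := mem_atTop_sets.mp ht
    exact ⟨(a:ℂ), by simpa using ha a le_rfl⟩
  have hLval : Fex 0 = L := by
    have h1 : Tendsto Fex (comap Complex.re atTop) (nhds (Fex 0)) := by
      have hfun : Fex = fun _ => Fex 0 := funext hconst
      rw [hfun]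
      exact tendsto_const_nhds
    exact tendsto_nhds_unique h1 hFextop
  intro z hz
  rw [← hFex_out z hz, hconst z, hLval]

/-- The matrix Riemann–Hilbert problem on the cylinder `S = {−π/4 ≤ Im z < 3π/4}` with
unimodular jump matrix `G` on the circle `K` admits at most one solution. -/
theorem rhp_unimodular_unique (z₀ : ℂ) (r r' : ℝ) (hr : 0 < r) (hrr' : r < r')
    (hstrip : closedBall z₀ r' ⊆ {z : ℂ | -(π / 4) < z.im ∧ z.im < 3 * π / 4})
    (K Kper : Set ℂ) (hK : K = sphere z₀ r)
    (hKper : Kper = ⋃ k : ℤ, (fun z => z + (k : ℂ) * (π : ℝ) * Complex.I) '' K)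
    (G : ℂ → Matrix (Fin 2) (Fin 2) ℂ)
    (hG : ∀ z ∈ K, (G z).det = 1)
    (Ψ₁ Ψ₂ : ℂ → Matrix (Fin 2) (Fin 2) ℂ)
    (hol₁ : ∀ i j, DifferentiableOn ℂ (fun z => Ψ₁ z i j) Kperᶜ)
    (hol₂ : ∀ i j, DifferentiableOn ℂ (fun z => Ψ₂ z i j) Kperᶜ)
    (per₁ : ∀ z, Ψ₁ (z + (π : ℝ) * Complex.I) = Ψ₁ z)
    (per₂ : ∀ z, Ψ₂ (z + (π : ℝ) * Complex.I) = Ψ₂ z)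
    (Ψ₁p Ψ₁m Ψ₂p Ψ₂m : ℂ → Matrix (Fin 2) (Fin 2) ℂ)
    (hΨ₁p_cont : ContinuousOn Ψ₁p (closedBall z₀ r))
    (hΨ₁p_eq : ∀ z ∈ ball z₀ r, Ψ₁p z = Ψ₁ z)
    (hΨ₁m_cont : ContinuousOn Ψ₁m {z : ℂ | r ≤ dist z z₀ ∧ dist z z₀ ≤ r'})
    (hΨ₁m_eq : ∀ z : ℂ, r < dist z z₀ → dist z z₀ ≤ r' → Ψ₁m z = Ψ₁ z)
    (hΨ₂p_cont : ContinuousOn Ψ₂p (closedBall z₀ r))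
    (hΨ₂p_eq : ∀ z ∈ ball z₀ r, Ψ₂p z = Ψ₂ z)
    (hΨ₂m_cont : ContinuousOn Ψ₂m {z : ℂ | r ≤ dist z z₀ ∧ dist z z₀ ≤ r'})
    (hΨ₂m_eq : ∀ z : ℂ, r < dist z z₀ → dist z z₀ ≤ r' → Ψ₂m z = Ψ₂ z)
    (jump₁ : ∀ z ∈ K, Ψ₁m z = Ψ₁p z * G z)
    (jump₂ : ∀ z ∈ K, Ψ₂m z = Ψ₂p z * G z)
    (limPlus₁ : ∀ i j, Tendsto (fun z => Ψ₁ z i j) (comap Complex.re atTop)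
      (nhds ((1 : Matrix (Fin 2) (Fin 2) ℂ) i j)))
    (limPlus₂ : ∀ i j, Tendsto (fun z => Ψ₂ z i j) (comap Complex.re atTop)
      (nhds ((1 : Matrix (Fin 2) (Fin 2) ℂ) i j)))
    (limMinus₁ : ∃ M : Matrix (Fin 2) (Fin 2) ℂ, ∀ i j,
      Tendsto (fun z => Ψ₁ z i j) (comap Complex.re atBot) (nhds (M i j)))
    (limMinus₂ : ∃ M : Matrix (Fin 2) (Fin 2) ℂ, ∀ i j,
      Tendsto (fun z => Ψ₂ z i j) (comap Complex.re atBot) (nhds (M i j))) :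
    ∀ z ∉ Kper, Ψ₁ z = Ψ₂ z := by
  obtain ⟨M₁, limMinus₁⟩ := limMinus₁
  obtain ⟨M₂, limMinus₂⟩ := limMinus₂
  -- entrywise continuity of the boundary values
  have hent : ∀ (F : ℂ → Matrix (Fin 2) (Fin 2) ℂ) (s : Set ℂ), ContinuousOn F s →
      ∀ i j, ContinuousOn (fun z => F z i j) s := by
    intro F s h i j
    intro x hx
    exact ((continuousWithinAt_pi.mp ((continuousWithinAt_pi.mp (h x hx)) i)) j)
  -- determinant as an explicit combination of entries
  have hdet2 : ∀ A : Matrix (Fin 2) (Fin 2) ℂ, A.det = A 0 0 * A 1 1 - A 0 1 * A 1 0 :=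
    fun A => Matrix.det_fin_two A
  -- Step 1 : the determinant of Ψ₁ is identically 1 off Kper
  have hdet : ∀ z ∉ Kper, (Ψ₁ z).det = 1 := by
    have happ := scalar_key z₀ r r' hr hrr' hstrip K Kper hK hKper
      (fun z => (Ψ₁ z).det) (fun z => (Ψ₁p z).det) (fun z => (Ψ₁m z).det)
      (by
        simp only [hdet2]
        exact ((hol₁ 0 0).mul (hol₁ 1 1)).sub ((hol₁ 0 1).mul (hol₁ 1 0)))
      (fun z => congrArg Matrix.det (per₁ z))
      (by
        simp only [hdet2]
        exact (((hent _ _ hΨ₁p_cont 0 0).mul (hent _ _ hΨ₁p_cont 1 1)).sub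
          ((hent _ _ hΨ₁p_cont 0 1).mul (hent _ _ hΨ₁p_cont 1 0))))
      (fun z hz => congrArg Matrix.det (hΨ₁p_eq z hz))
      (by
        simp only [hdet2]
        exact (((hent _ _ hΨ₁m_cont 0 0).mul (hent _ _ hΨ₁m_cont 1 1)).sub
          ((hent _ _ hΨ₁m_cont 0 1).mul (hent _ _ hΨ₁m_cont 1 0))))
      (fun z h1 h2 => congrArg Matrix.det (hΨ₁m_eq z h1 h2))
      (fun z hz => by
        show (Ψ₁p z).det = (Ψ₁m z).det
        rw [jump₁ z hz, Matrix.det_mul, hG z hz, mul_one])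
      1
      (by
        have h := (((limPlus₁ 0 0).mul (limPlus₁ 1 1)).sub ((limPlus₁ 0 1).mul (limPlus₁ 1 0)))
        simp only [hdet2]
        convert h using 2
        simp [Matrix.one_apply])
      ⟨M₁.det, by
        have h := (((limMinus₁ 0 0).mul (limMinus₁ 1 1)).sub
          ((limMinus₁ 0 1).mul (limMinus₁ 1 0)))
        simp only [hdet2]
        exact h⟩
    exact happ
  -- entrywise facts about the adjugate of Ψ₁
  have hadj_hol : ∀ i j, DifferentiableOn ℂ (fun z => (Ψ₁ z).adjugate i j) Kperᶜ := by
    intro i j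
    fin_cases i <;> fin_cases j <;> simp only [Matrix.adjugate_fin_two, Matrix.of_apply,
        Matrix.cons_val', Matrix.cons_val_zero, Matrix.cons_val_one, Matrix.head_cons,
        Matrix.empty_val', Matrix.cons_val_fin_one, Matrix.head_fin_const] <;>
      first
        | exact hol₁ 1 1
        | exact (hol₁ 0 1).neg
        | exact (hol₁ 1 0).neg
        | exact hol₁ 0 0
  have hadjp_cont : ∀ i j, ContinuousOn (fun z => (Ψ₁p z).adjugate i j) (closedBall z₀ r) := by
    intro i j
    fin_cases i <;> fin_cases j <;> simp only [Matrix.adjugate_fin_two, Matrix.of_apply,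
        Matrix.cons_val', Matrix.cons_val_zero, Matrix.cons_val_one, Matrix.head_cons,
        Matrix.empty_val', Matrix.cons_val_fin_one, Matrix.head_fin_const] <;>
      first
        | exact hent _ _ hΨ₁p_cont 1 1
        | exact (hent _ _ hΨ₁p_cont 0 1).neg
        | exact (hent _ _ hΨ₁p_cont 1 0).neg
        | exact hent _ _ hΨ₁p_cont 0 0
  have hadjm_cont : ∀ i j, ContinuousOn (fun z => (Ψ₁m z).adjugate i j)
      {z : ℂ | r ≤ dist z z₀ ∧ dist z z₀ ≤ r'} := by
    intro i j
    fin_cases i <;> fin_cases j <;> simp only [Matrix.adjugate_fin_two, Matrix.of_apply,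
        Matrix.cons_val', Matrix.cons_val_zero, Matrix.cons_val_one, Matrix.head_cons,
        Matrix.empty_val', Matrix.cons_val_fin_one, Matrix.head_fin_const] <;>
      first
        | exact hent _ _ hΨ₁m_cont 1 1
        | exact (hent _ _ hΨ₁m_cont 0 1).neg
        | exact (hent _ _ hΨ₁m_cont 1 0).neg
        | exact hent _ _ hΨ₁m_cont 0 0
  have hadj_top : ∀ i j, Tendsto (fun z => (Ψ₁ z).adjugate i j) (comap Complex.re atTop)
      (nhds ((1 : Matrix (Fin 2) (Fin 2) ℂ).adjugate i j)) := by
    intro i j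
    fin_cases i <;> fin_cases j <;> simp only [Matrix.adjugate_fin_two, Matrix.of_apply,
        Matrix.cons_val', Matrix.cons_val_zero, Matrix.cons_val_one, Matrix.head_cons,
        Matrix.empty_val', Matrix.cons_val_fin_one, Matrix.head_fin_const] <;>
      first
        | exact limPlus₁ 1 1
        | exact (limPlus₁ 0 1).neg
        | exact (limPlus₁ 1 0).neg
        | exact limPlus₁ 0 0
  have hadj_bot : ∀ i j, Tendsto (fun z => (Ψ₁ z).adjugate i j) (comap Complex.re atBot)
      (nhds (M₁.adjugate i j)) := by
    intro i j
    fin_cases i <;> fin_cases j <;> simp only [Matrix.adjugate_fin_two, Matrix.of_apply,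
        Matrix.cons_val', Matrix.cons_val_zero, Matrix.cons_val_one, Matrix.head_cons,
        Matrix.empty_val', Matrix.cons_val_fin_one, Matrix.head_fin_const] <;>
      first
        | exact limMinus₁ 1 1
        | exact (limMinus₁ 0 1).neg
        | exact (limMinus₁ 1 0).neg
        | exact limMinus₁ 0 0
  -- product entry formula
  have hmul2 : ∀ (A B : Matrix (Fin 2) (Fin 2) ℂ) (i j : Fin 2),
      (A * B) i j = A i 0 * B 0 j + A i 1 * B 1 j := by
    intro A B i j
    rw [Matrix.mul_apply, Fin.sum_univ_two]
  -- the jump of Ψ₂ ⬝ adj Ψ₁ cancels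
  have hΦjump : ∀ z ∈ K, Ψ₂p z * (Ψ₁p z).adjugate = Ψ₂m z * (Ψ₁m z).adjugate := by
    intro z hz
    rw [jump₁ z hz, jump₂ z hz, Matrix.adjugate_mul_distrib]
    have hGadj : G z * (G z).adjugate = 1 := by
      rw [Matrix.mul_adjugate, hG z hz, one_smul]
    rw [mul_assoc, ← mul_assoc (G z), hGadj, one_mul]
  -- Step 2 : Ψ₂ ⬝ adj Ψ₁ is identically 1 off Kper
  have hΦ : ∀ (i j : Fin 2), ∀ z ∉ Kper, (Ψ₂ z * (Ψ₁ z).adjugate) i j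
      = (1 : Matrix (Fin 2) (Fin 2) ℂ) i j := by
    intro i j
    have happ := scalar_key z₀ r r' hr hrr' hstrip K Kper hK hKper
      (fun z => (Ψ₂ z * (Ψ₁ z).adjugate) i j)
      (fun z => (Ψ₂p z * (Ψ₁p z).adjugate) i j)
      (fun z => (Ψ₂m z * (Ψ₁m z).adjugate) i j)
      (by
        simp only [hmul2]
        exact ((hol₂ i 0).mul (hadj_hol 0 j)).add ((hol₂ i 1).mul (hadj_hol 1 j)))
      (fun z => by
        show (Ψ₂ (z + (π:ℝ) * Complex.I) * (Ψ₁ (z + (π:ℝ) * Complex.I)).adjugate) i j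
          = (Ψ₂ z * (Ψ₁ z).adjugate) i j
        rw [per₁, per₂])
      (by
        simp only [hmul2]
        exact ((hent _ _ hΨ₂p_cont i 0).mul (hadjp_cont 0 j)).add
          ((hent _ _ hΨ₂p_cont i 1).mul (hadjp_cont 1 j)))
      (fun z hz => by
        show (Ψ₂p z * (Ψ₁p z).adjugate) i j = (Ψ₂ z * (Ψ₁ z).adjugate) i j
        rw [hΨ₁p_eq z hz, hΨ₂p_eq z hz])
      (by
        simp only [hmul2]
        exact ((hent _ _ hΨ₂m_cont i 0).mul (hadjm_cont 0 j)).add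
          ((hent _ _ hΨ₂m_cont i 1).mul (hadjm_cont 1 j)))
      (fun z h1 h2 => by
        show (Ψ₂m z * (Ψ₁m z).adjugate) i j = (Ψ₂ z * (Ψ₁ z).adjugate) i j
        rw [hΨ₁m_eq z h1 h2, hΨ₂m_eq z h1 h2])
      (fun z hz => by
        show (Ψ₂p z * (Ψ₁p z).adjugate) i j = (Ψ₂m z * (Ψ₁m z).adjugate) i j
        rw [hΦjump z hz])
      ((1 : Matrix (Fin 2) (Fin 2) ℂ) i j)
      (by
        have h := ((limPlus₂ i 0).mul (hadj_top 0 j)).add ((limPlus₂ i 1).mul (hadj_top 1 j))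
        simp only [hmul2]
        convert h using 2
        rw [← hmul2, Matrix.adjugate_one, mul_one])
      ⟨(M₂ * M₁.adjugate) i j, by
        have h := ((limMinus₂ i 0).mul (hadj_bot 0 j)).add ((limMinus₂ i 1).mul (hadj_bot 1 j))
        simp only [hmul2]
        exact h⟩
    exact happ
  -- conclusion
  intro z hz
  have h2 : Ψ₂ z * (Ψ₁ z).adjugate = 1 := by
    ext i j
    exact hΦ i j z hz
  have h3 : (Ψ₁ z).adjugate * Ψ₁ z = 1 := by
    rw [Matrix.adjugate_mul, hdet z hz, one_smul]
  calc Ψ₁ z = 1 * Ψ₁ z := (one_mul _).symm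
    _ = Ψ₂ z * (Ψ₁ z).adjugate * Ψ₁ z := by rw [h2]
    _ = Ψ₂ z * ((Ψ₁ z).adjugate * Ψ₁ z) := mul_assoc _ _ _
    _ = Ψ₂ z * 1 := by rw [h3]
    _ = Ψ₂ z := mul_one _
end

section
/- Let f : ℂ → ℂ be entire with f(z + iπ) = f(z) for all z ∈ ℂ. Suppose f(z) → 1 as Re z → +∞ (i.e., f tends to 1 along the filter comap(Re, atTop)) and f(z) converges to some limit L ∈ ℂ as Re z → −∞ (along comap(Re, atBot)). Then f(z) = 1 for all z ∈ ℂ (and in particular L = 1). -/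
open Real Filter

/-- Liouville on the cylinder `ℂ/(iπℤ)`: an `iπ`-periodic entire function which tends to `1`
as `Re z → +∞` and has a limit as `Re z → −∞` is identically `1`. -/
theorem cylinder_liouville (f : ℂ → ℂ) (hf : Differentiable ℂ f)
    (per : ∀ z : ℂ, f (z + (π : ℝ) * Complex.I) = f z)
    (limPlus : Tendsto f (comap Complex.re atTop) (nhds 1))
    (limMinus : ∃ L : ℂ, Tendsto f (comap Complex.re atBot) (nhds L)) :
    ∀ z : ℂ, f z = 1 := by
  obtain ⟨L, limMinus⟩ := limMinus
  have perP : Function.Periodic f ((π : ℝ) * Complex.I) := per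
  -- bound near +∞
  have h1 : ∀ᶠ z in comap Complex.re atTop, dist (f z) 1 < 1 :=
    Metric.tendsto_nhds.mp limPlus 1 one_pos
  rw [eventually_comap] at h1
  obtain ⟨A, hA⟩ := eventually_atTop.mp h1
  -- bound near −∞
  have h2 : ∀ᶠ z in comap Complex.re atBot, dist (f z) L < 1 :=
    Metric.tendsto_nhds.mp limMinus 1 one_pos
  rw [eventually_comap] at h2
  obtain ⟨B, hB⟩ := eventually_atBot.mp h2
  -- compact middle strip
  set K : Set ℂ := (fun p : ℝ × ℝ => (p.1 : ℂ) + (p.2 : ℂ) * Complex.I) ''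
      (Set.Icc B A ×ˢ Set.Icc 0 π) with hK
  have hKc : IsCompact K := (isCompact_Icc.prod isCompact_Icc).image (by continuity)
  obtain ⟨C, hC⟩ := hKc.exists_bound_of_continuousOn hf.continuous.continuousOn
  -- global bound
  set M : ℝ := max (max 2 (‖L‖ + 1)) C with hM
  have bound : ∀ z : ℂ, ‖f z‖ ≤ M := by
    intro z
    rcases le_or_gt A z.re with h | h
    · have := hA z.re h z rfl
      have hz : ‖f z‖ ≤ 2 := by
        have : ‖f z - 1‖ < 1 := by simpa [dist_eq_norm] using this
        calc ‖f z‖ = ‖f z - 1 + 1‖ := by ring_nf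
          _ ≤ ‖f z - 1‖ + ‖(1 : ℂ)‖ := norm_add_le _ _
          _ ≤ 2 := by rw [norm_one]; linarith
      exact hz.trans (le_max_of_le_left (le_max_left _ _))
    rcases le_or_gt z.re B with h' | h'
    · have := hB z.re h' z rfl
      have hz : ‖f z‖ ≤ ‖L‖ + 1 := by
        have : ‖f z - L‖ < 1 := by simpa [dist_eq_norm] using this
        calc ‖f z‖ = ‖f z - L + L‖ := by ring_nf
          _ ≤ ‖f z - L‖ + ‖L‖ := norm_add_le _ _
          _ ≤ ‖L‖ + 1 := by linarith
      exact hz.trans (le_max_of_le_left (le_max_right _ _))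
    · -- reduce the imaginary part using periodicity
      set n : ℤ := ⌊z.im / π⌋ with hn
      set w : ℂ := z - (n : ℂ) * ((π : ℝ) * Complex.I) with hwdef
      have hw : f w = f z := perP.sub_int_mul_eq n
      have hre : w.re = z.re := by simp [hwdef]
      have him : w.im = z.im - n * π := by simp [hwdef]
      have him0 : 0 ≤ w.im := by
        rw [him]; exact Int.sub_floor_div_mul_nonneg z.im pi_pos
      have himπ : w.im ≤ π := by
        rw [him]; exact (Int.sub_floor_div_mul_lt z.im pi_pos).le
      have hwK : w ∈ K := by
        refine ⟨(w.re, w.im), ?_, by simp [Complex.re_add_im]⟩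
        simp only [Set.mem_prod, Set.mem_Icc]
        exact ⟨⟨hre ▸ h'.le, hre ▸ h.le⟩, him0, himπ⟩
      have := hC w hwK
      rw [hw] at this
      exact this.trans (le_max_right _ _)
  -- Liouville
  have hbdd : Bornology.IsBounded (Set.range f) := by
    rw [Metric.isBounded_iff_subset_closedBall 0]
    refine ⟨M, ?_⟩
    rintro x ⟨z, rfl⟩
    simpa [Metric.mem_closedBall, dist_eq_norm] using bound z
  have hconst : ∀ z : ℂ, f z = f 0 := fun z =>
    hf.apply_eq_apply_of_bounded hbdd z 0
  -- identify the constant with 1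
  have hne : (comap Complex.re atTop).NeBot := by
    refine Filter.comap_neBot fun t ht => ?_
    obtain ⟨a, ha⟩ := mem_atTop_sets.mp ht
    exact ⟨(a : ℂ), by simpa using ha a le_rfl⟩
  have hc : f 0 = 1 := by
    have : Tendsto (fun _ : ℂ => f 0) (comap Complex.re atTop) (nhds 1) := by
      refine limPlus.congr fun z => (hconst z)
    exact (tendsto_nhds_unique tendsto_const_nhds this)
  intro z; rw [hconst z, hc]
end

section
/- Let c be a real number with 0 < c < 1, let R > 1, and for n ∈ ℤ define b_n(w) = (w^{−n}/(2πc))·((w − i)/(w + i) − 2cw/(w + i)²). Then the counterclockwise contour integral over the circle of radius R centered at 0 equals ∮_{|w|=R} b_n(w) dw = (i^n/c)·v(n), where v(n) = 0 for n ≥ 2, v(1) = 1, and v(n) = 2 − 2ic(1 − n) for n ≤ 0. Consequently, the moments of the high-temperature analysis at τ = 0 are A^l_k(m)|_{τ=0} = −(i^{m−k−l}/c)·v(m−k−l), i.e. they equal −(i^{m−k−l}/c) times (0 if k+l < m−1, 1 if k+l = m−1, and 2 − 2ic(k+l−m+1) if k+l > m−1). -/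
open Real

open Complex Finset

variable {R : ℝ}

lemma sph_ne_zero (hR : 1 < R) {w : ℂ} (hw : w ∈ Metric.sphere (0:ℂ) R) : w ≠ 0 := by
  intro h; simp [h] at hw; linarith

lemma sph_add_I_ne (hR : 1 < R) {w : ℂ} (hw : w ∈ Metric.sphere (0:ℂ) R) : w + Complex.I ≠ 0 := by
  intro h
  have hw' : ‖w‖ = R := by simpa [Complex.dist_eq] using hw
  have : w = -Complex.I := by linear_combination h
  rw [this] at hw'; simp at hw'; linarith

lemma my_integral_add {f g : ℂ → ℂ} {c : ℂ} {Rr : ℝ} (hf : CircleIntegrable f c Rr)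
    (hg : CircleIntegrable g c Rr) :
    (∮ z in C(c, Rr), (f z + g z)) = (∮ z in C(c, Rr), f z) + ∮ z in C(c, Rr), g z := by
  simp only [circleIntegral, smul_add, intervalIntegral.integral_add hf.out hg.out]

lemma my_integrable_sum {ι : Type*} (s : Finset ι) (f : ι → ℂ → ℂ) {c : ℂ} {Rr : ℝ}
    (h : ∀ i ∈ s, CircleIntegrable (f i) c Rr) :
    CircleIntegrable (fun z => ∑ i ∈ s, f i z) c Rr := by
  classical
  induction s using Finset.induction_on with
  | empty => simpa using circleIntegrable_const (0:ℂ) c Rr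
  | @insert a s hi ih =>
    simp only [Finset.sum_insert hi]
    exact (h a (Finset.mem_insert_self a s)).add
      (ih fun i hh => h i (Finset.mem_insert_of_mem hh))

lemma my_integral_sum {ι : Type*} (s : Finset ι) (f : ι → ℂ → ℂ) {c : ℂ} {Rr : ℝ}
    (h : ∀ i ∈ s, CircleIntegrable (f i) c Rr) :
    (∮ z in C(c, Rr), (∑ i ∈ s, f i z)) = ∑ i ∈ s, ∮ z in C(c, Rr), f i z := by
  classical
  induction s using Finset.induction_on with
  | empty => simp [circleIntegral]
  | @insert a s hi ih =>
    simp only [Finset.sum_insert hi]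
    rw [my_integral_add (h a (Finset.mem_insert_self a s))
      (my_integrable_sum s f fun i hh => h i (Finset.mem_insert_of_mem hh)),
      ih fun i hh => h i (Finset.mem_insert_of_mem hh)]

-- integrability
lemma int_zpow (hR : 1 < R) (k : ℤ) : CircleIntegrable (fun w : ℂ => w ^ k) 0 R := by
  apply ContinuousOn.circleIntegrable (by linarith : (0:ℝ) ≤ R)
  exact fun w hw => ((continuousAt_zpow₀ w k) (Or.inl (sph_ne_zero hR hw))).continuousWithinAt

lemma int_inv_pow (hR : 1 < R) (m : ℕ) :
    CircleIntegrable (fun w : ℂ => ((w + Complex.I) ^ m)⁻¹) 0 R := by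
  apply ContinuousOn.circleIntegrable (by linarith : (0:ℝ) ≤ R)
  exact ContinuousOn.inv₀ ((continuous_id.add continuous_const).pow m).continuousOn
    (fun w hw => pow_ne_zero m (sph_add_I_ne hR hw))

lemma int_mixed (hR : 1 < R) (k : ℤ) (m : ℕ) :
    CircleIntegrable (fun w : ℂ => w ^ k * ((w + Complex.I) ^ m)⁻¹) 0 R := by
  apply ContinuousOn.circleIntegrable (by linarith : (0:ℝ) ≤ R)
  refine ContinuousOn.mul ?_ ?_
  · exact fun w hw => ((continuousAt_zpow₀ w k) (Or.inl (sph_ne_zero hR hw))).continuousWithinAt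
  · exact ContinuousOn.inv₀ ((continuous_id.add continuous_const).pow m).continuousOn
      (fun w hw => pow_ne_zero m (sph_add_I_ne hR hw))

lemma my_const_mul {f : ℂ → ℂ} {c : ℂ} {Rr : ℝ} (a : ℂ) (h : CircleIntegrable f c Rr) :
    CircleIntegrable (fun z => a * f z) c Rr := by
  have h' : IntervalIntegrable (fun θ : ℝ => f (circleMap c Rr θ))
      MeasureTheory.volume 0 (2 * π) := h
  exact h'.const_mul a

-- atomic integrals
lemma Jpow (hR : 1 < R) (k : ℤ) :
    (∮ w in C(0, R), w ^ k) = if k = -1 then 2 * π * Complex.I else 0 := by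
  split_ifs with h
  · subst h
    have h0 : (0:ℂ) ∈ Metric.ball (0:ℂ) R := by simp; linarith
    have := circleIntegral.integral_sub_inv_of_mem_ball h0
    simpa [zpow_neg_one] using this
  · have := circleIntegral.integral_sub_zpow_of_ne h (0:ℂ) 0 R
    simpa using this

lemma Jinv (hR : 1 < R) : (∮ w in C(0, R), (w + Complex.I)⁻¹) = 2 * π * Complex.I := by
  have h0 : (-Complex.I : ℂ) ∈ Metric.ball (0:ℂ) R := by
    simp [Complex.dist_eq]; linarith
  have := circleIntegral.integral_sub_inv_of_mem_ball h0
  simpa [sub_neg_eq_add] using this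

lemma Jinv2 (hR : 1 < R) : (∮ w in C(0, R), ((w + Complex.I) ^ 2)⁻¹) = 0 := by
  have h := circleIntegral.integral_sub_zpow_of_ne (by decide : (-2 : ℤ) ≠ -1) (0:ℂ)
    (-Complex.I) R
  have : ∀ z : ℂ, (z - -Complex.I) ^ (-2 : ℤ) = ((z + Complex.I) ^ 2)⁻¹ := by
    intro z
    rw [sub_neg_eq_add, zpow_neg, zpow_two, sq]
  simp only [this] at h
  exact h

-- positive power identity
lemma idpos (m : ℕ) (w : ℂ) (hwi : w + Complex.I ≠ 0) :
    w ^ m / (w + Complex.I) =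
      (∑ j ∈ range m, w ^ j * (-Complex.I) ^ (m - 1 - j)) + (-Complex.I) ^ m / (w + Complex.I) := by
  have h : w ^ m = (∑ j ∈ range m, w ^ j * (-Complex.I) ^ (m - 1 - j)) * (w + Complex.I)
      + (-Complex.I) ^ m := by
    linear_combination -geom_sum₂_mul w (-Complex.I) m
  rw [h, add_div, mul_div_cancel_right₀ _ hwi]

-- negative power identity
lemma idneg (p : ℕ) (w : ℂ) (hw : w ≠ 0) (hwi : w + Complex.I ≠ 0) :
    1 / (w ^ p * (w + Complex.I)) =
      Complex.I ^ p / (w + Complex.I)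
        - ∑ j ∈ range p, Complex.I ^ (j + 1) / w ^ (p - j) := by
  have hs : ∀ j ∈ range p, Complex.I ^ (j + 1) / w ^ (p - j)
      = Complex.I ^ (j + 1) * w ^ j / w ^ p := by
    intro j hj
    rw [mem_range] at hj
    have hpw : w ^ p = w ^ j * w ^ (p - j) := by
      rw [← pow_add]; congr 1; omega
    rw [div_eq_div_iff (pow_ne_zero _ hw) (pow_ne_zero _ hw)]
    linear_combination (Complex.I ^ (j + 1)) * hpw
  rw [Finset.sum_congr rfl hs, ← Finset.sum_div]
  have key : (∑ j ∈ range p, Complex.I ^ (j + 1) * w ^ j) * ((Complex.I * w) - 1)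
      = Complex.I * ((Complex.I * w) ^ p - 1) := by
    have h1 : (∑ j ∈ range p, Complex.I ^ (j + 1) * w ^ j)
        = Complex.I * ∑ j ∈ range p, (Complex.I * w) ^ j := by
      rw [Finset.mul_sum]
      exact Finset.sum_congr rfl fun j _ => by rw [mul_pow, pow_succ]; ring
    rw [h1, mul_assoc, geom_sum_mul]
  have h2 : (∑ j ∈ range p, Complex.I ^ (j + 1) * w ^ j) * (w + Complex.I)
      = (Complex.I * w) ^ p - 1 := by
    linear_combination (-Complex.I) * key +
      ((∑ j ∈ range p, Complex.I ^ (j + 1) * w ^ j) * w - (Complex.I * w) ^ p + 1) *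
        Complex.I_sq
  rw [div_sub_div _ _ hwi (pow_ne_zero p hw)]
  rw [show Complex.I ^ p * w ^ p - (w + Complex.I) * (∑ j ∈ range p, Complex.I ^ (j + 1) * w ^ j)
      = 1 from by linear_combination -h2, mul_comm (w + Complex.I)]

lemma J2 (hR : 1 < R) (k : ℤ) :
    (∮ w in C(0, R), w ^ k * (w + Complex.I)⁻¹) =
      if 0 ≤ k then 2 * π * Complex.I * (-Complex.I) ^ k else 0 := by
  have hR0 : (0:ℝ) ≤ R := by linarith
  rcases le_or_gt 0 k with hk | hk
  · obtain ⟨m, rfl⟩ : ∃ m : ℕ, k = (m : ℤ) := ⟨k.toNat, (Int.toNat_of_nonneg hk).symm⟩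
    rw [if_pos hk]
    have hcong : Set.EqOn (fun w : ℂ => w ^ (m:ℤ) * (w + Complex.I)⁻¹)
        (fun w : ℂ => (∑ j ∈ range m, (-Complex.I) ^ (m - 1 - j) * w ^ (j:ℤ))
          + (-Complex.I) ^ m * (w + Complex.I)⁻¹) (Metric.sphere 0 R) := by
      intro w hw
      have hwi := sph_add_I_ne hR hw
      simp only [zpow_natCast]
      rw [← div_eq_mul_inv, ← div_eq_mul_inv, idpos m w hwi]
      congr 1
      exact Finset.sum_congr rfl fun j _ => mul_comm _ _
    rw [circleIntegral.integral_congr hR0 hcong]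
    rw [my_integral_add (my_integrable_sum _ _ fun j _ => my_const_mul _ (int_zpow hR _))
      (my_const_mul _ (by simpa using int_inv_pow hR 1)),
      my_integral_sum _ _ fun j _ => my_const_mul _ (int_zpow hR _)]
    have hzero : ∀ j ∈ range m,
        (∮ w in C(0, R), (-Complex.I) ^ (m - 1 - j) * w ^ (j:ℤ)) = 0 := by
      intro j _
      rw [circleIntegral.integral_const_mul, Jpow hR, if_neg (by omega), mul_zero]
    rw [Finset.sum_congr rfl hzero, Finset.sum_const, smul_zero,
      circleIntegral.integral_const_mul, Jinv hR, zero_add, zpow_natCast]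
    ring
  · rw [if_neg (by omega)]
    obtain ⟨p, hp, rfl⟩ : ∃ p : ℕ, 0 < p ∧ k = -(p : ℤ) := by
      refine ⟨(-k).toNat, by omega, by omega⟩
    have hcong : Set.EqOn (fun w : ℂ => w ^ (-(p:ℤ)) * (w + Complex.I)⁻¹)
        (fun w : ℂ => Complex.I ^ p * (w + Complex.I)⁻¹
          - ∑ j ∈ range p, Complex.I ^ (j + 1) * w ^ (-((p - j : ℕ) : ℤ)))
        (Metric.sphere 0 R) := by
      intro w hw
      have hw0 := sph_ne_zero hR hw
      have hwi := sph_add_I_ne hR hw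
      have h1 := idneg p w hw0 hwi
      simp only [zpow_neg, zpow_natCast]
      rw [show (w ^ p)⁻¹ * (w + Complex.I)⁻¹ = 1 / (w ^ p * (w + Complex.I)) by
        rw [one_div, mul_inv], h1]
      simp only [div_eq_mul_inv]
    rw [circleIntegral.integral_congr hR0 hcong]
    rw [circleIntegral.integral_sub (my_const_mul _ (by simpa using int_inv_pow hR 1))
      (my_integrable_sum _ _ fun j _ => my_const_mul _ (int_zpow hR _)),
      my_integral_sum _ _ fun j _ => my_const_mul _ (int_zpow hR _)]
    have hsum : ∀ j ∈ range p,
        (∮ w in C(0, R), Complex.I ^ (j + 1) * w ^ (-((p - j : ℕ) : ℤ))) =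
          if j = p - 1 then Complex.I ^ p * (2 * π * Complex.I) else 0 := by
      intro j hj
      rw [mem_range] at hj
      rw [circleIntegral.integral_const_mul, Jpow hR]
      by_cases h : j = p - 1
      · rw [if_pos (by omega), if_pos h, h, Nat.sub_add_cancel hp]
      · rw [if_neg (by omega), if_neg h, mul_zero]
    rw [Finset.sum_congr rfl hsum, Finset.sum_ite_eq' (range p) (p - 1),
      if_pos (by rw [mem_range]; omega), circleIntegral.integral_const_mul, Jinv hR]
    ring

lemma J3 (hR : 1 < R) (k : ℤ) :
    (∮ w in C(0, R), w ^ k * ((w + Complex.I) ^ 2)⁻¹) =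
      if 0 ≤ k then 2 * π * Complex.I * k * (-Complex.I) ^ (k - 1) else 0 := by
  have hR0 : (0:ℝ) ≤ R := by linarith
  rcases le_or_gt 0 k with hk | hk
  · obtain ⟨m, rfl⟩ : ∃ m : ℕ, k = (m : ℤ) := ⟨k.toNat, (Int.toNat_of_nonneg hk).symm⟩
    rw [if_pos hk]
    have hcong : Set.EqOn (fun w : ℂ => w ^ (m:ℤ) * ((w + Complex.I) ^ 2)⁻¹)
        (fun w : ℂ => (∑ j ∈ range m, (-Complex.I) ^ (m - 1 - j) * (w ^ (j:ℤ) * (w + Complex.I)⁻¹))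
          + (-Complex.I) ^ m * ((w + Complex.I) ^ 2)⁻¹) (Metric.sphere 0 R) := by
      intro w hw
      have hwi := sph_add_I_ne hR hw
      simp only [zpow_natCast]
      calc w ^ m * ((w + Complex.I) ^ 2)⁻¹
          = (w ^ m / (w + Complex.I)) * (w + Complex.I)⁻¹ := by
            rw [sq, mul_inv, div_eq_mul_inv]; ring
        _ = ((∑ j ∈ range m, w ^ j * (-Complex.I) ^ (m - 1 - j))
              + (-Complex.I) ^ m / (w + Complex.I)) * (w + Complex.I)⁻¹ := by
            rw [idpos m w hwi]
        _ = _ := by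
            rw [add_mul, Finset.sum_mul]
            congr 1
            · exact Finset.sum_congr rfl fun j _ => by ring
            · rw [sq, mul_inv, div_eq_mul_inv]; ring
    rw [circleIntegral.integral_congr hR0 hcong,
      my_integral_add
        (my_integrable_sum _ _ fun j _ => my_const_mul _ (by simpa using int_mixed hR (j:ℤ) 1))
        (my_const_mul _ (int_inv_pow hR 2)),
      my_integral_sum _ _ fun j _ => my_const_mul _ (by simpa using int_mixed hR (j:ℤ) 1),
      circleIntegral.integral_const_mul, Jinv2 hR, mul_zero, add_zero]
    have hterm : ∀ j ∈ range m,
        (∮ w in C(0, R), (-Complex.I) ^ (m - 1 - j) * (w ^ (j:ℤ) * (w + Complex.I)⁻¹)) =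
          2 * π * Complex.I * (-Complex.I) ^ (m - 1) := by
      intro j hj
      rw [mem_range] at hj
      rw [circleIntegral.integral_const_mul, J2 hR, if_pos (by omega), zpow_natCast,
        show (2 * ↑π * Complex.I * (-Complex.I) ^ j) = ((-Complex.I) ^ j * (2 * ↑π * Complex.I))
          from by ring, ← mul_assoc, ← pow_add, show m - 1 - j + j = m - 1 from by omega]
      ring
    rw [Finset.sum_congr rfl hterm, Finset.sum_const, card_range, nsmul_eq_mul]
    rcases m with - | m'
    · simp
    · rw [show ((m' + 1 : ℕ) : ℤ) - 1 = (m' : ℤ) from by omega, zpow_natCast]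
      push_cast
      ring
  · rw [if_neg (by omega)]
    obtain ⟨p, hp, rfl⟩ : ∃ p : ℕ, 0 < p ∧ k = -(p : ℤ) := ⟨(-k).toNat, by omega, by omega⟩
    have hcong : Set.EqOn (fun w : ℂ => w ^ (-(p:ℤ)) * ((w + Complex.I) ^ 2)⁻¹)
        (fun w : ℂ => Complex.I ^ p * ((w + Complex.I) ^ 2)⁻¹
          - ∑ j ∈ range p, Complex.I ^ (j + 1) * (w ^ (-((p - j : ℕ) : ℤ)) * (w + Complex.I)⁻¹))
        (Metric.sphere 0 R) := by
      intro w hw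
      have hw0 := sph_ne_zero hR hw
      have hwi := sph_add_I_ne hR hw
      have h1 := idneg p w hw0 hwi
      simp only [zpow_neg, zpow_natCast]
      calc (w ^ p)⁻¹ * ((w + Complex.I) ^ 2)⁻¹
          = (1 / (w ^ p * (w + Complex.I))) * (w + Complex.I)⁻¹ := by
            rw [sq, mul_inv, one_div, mul_inv]; ring
        _ = (Complex.I ^ p / (w + Complex.I)
              - ∑ j ∈ range p, Complex.I ^ (j + 1) / w ^ (p - j)) * (w + Complex.I)⁻¹ := by
            rw [h1]
        _ = _ := by
            rw [sub_mul, Finset.sum_mul]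
            congr 1
            · rw [sq, mul_inv, div_eq_mul_inv]; ring
            · exact Finset.sum_congr rfl fun j _ => by rw [div_eq_mul_inv]; ring
    rw [circleIntegral.integral_congr hR0 hcong,
      circleIntegral.integral_sub (my_const_mul _ (int_inv_pow hR 2))
        (my_integrable_sum _ _ fun j _ => my_const_mul _ (by simpa using int_mixed hR (-((p - j : ℕ) : ℤ)) 1)),
      my_integral_sum _ _ fun j _ => my_const_mul _ (by simpa using int_mixed hR (-((p - j : ℕ) : ℤ)) 1),
      circleIntegral.integral_const_mul, Jinv2 hR, mul_zero]
    have hterm : ∀ j ∈ range p,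
        (∮ w in C(0, R), Complex.I ^ (j + 1) * (w ^ (-((p - j : ℕ) : ℤ)) * (w + Complex.I)⁻¹)) =
          0 := by
      intro j hj
      rw [mem_range] at hj
      rw [circleIntegral.integral_const_mul, J2 hR, if_neg (by omega), mul_zero]
    rw [Finset.sum_congr rfl hterm, Finset.sum_const, smul_zero, sub_zero]

/-- Moments of the high-temperature analysis at `τ = 0`: the counterclockwise circle
integrals of `b_n(w) = (w^{−n}/(2πc))·((w−i)/(w+i) − 2cw/(w+i)²)` over `|w| = R > 1`,
and the resulting values of the moments `A^l_k(m)|_{τ=0}` (which are minus these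
integrals, since `Γ_p` is clockwise oriented). -/
theorem moments_at_tau_zero (c : ℝ) (hc0 : 0 < c) (hc1 : c < 1) (R : ℝ) (hR : 1 < R)
    (b : ℤ → ℂ → ℂ)
    (hb : ∀ n : ℤ, ∀ w : ℂ, b n w =
      w ^ (-n) / (2 * (π : ℝ) * (c : ℂ)) *
        ((w - Complex.I) / (w + Complex.I) - 2 * (c : ℂ) * w / (w + Complex.I) ^ 2))
    (v : ℤ → ℂ)
    (hv : ∀ n : ℤ, v n =
      if 2 ≤ n then 0 else if n = 1 then 1
      else 2 - 2 * Complex.I * (c : ℂ) * (1 - (n : ℂ))) :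
    (∀ n : ℤ, (∮ w in C(0, R), b n w) = Complex.I ^ n / (c : ℂ) * v n) ∧
    (∀ m k l : ℕ,
      -(∮ w in C(0, R), b ((m : ℤ) - k - l) w) =
        -(Complex.I ^ ((m : ℤ) - k - l) / (c : ℂ)) *
          (if (k : ℤ) + l < (m : ℤ) - 1 then 0
           else if (k : ℤ) + l = (m : ℤ) - 1 then 1
           else 2 - 2 * Complex.I * (c : ℂ) * ((k : ℂ) + l - m + 1))) := by
  have hcC : (c : ℂ) ≠ 0 := by
    exact_mod_cast hc0.ne'
  have hπ : ((π : ℝ) : ℂ) ≠ 0 := by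
    exact_mod_cast Real.pi_ne_zero
  have hR0 : (0:ℝ) ≤ R := by linarith
  have main : ∀ n : ℤ, (∮ w in C(0, R), b n w) = Complex.I ^ n / (c : ℂ) * v n := by
    intro n
    have hcong : Set.EqOn (fun w => b n w)
        (fun w : ℂ => (2 * (π:ℝ) * (c:ℂ))⁻¹ * w ^ (-n)
          + (-(2 * Complex.I) * (2 * (π:ℝ) * (c:ℂ))⁻¹) * (w ^ (-n) * (w + Complex.I)⁻¹)
          + (-(2 * (c:ℂ)) * (2 * (π:ℝ) * (c:ℂ))⁻¹) * (w ^ (1 - n) * ((w + Complex.I) ^ 2)⁻¹))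
        (Metric.sphere 0 R) := by
      intro w hw
      have hw0 := sph_ne_zero hR hw
      have hwi := sph_add_I_ne hR hw
      simp only [hb n w]
      have hsplit : w ^ (1 - n) = w * w ^ (-n) := by
        rw [sub_eq_add_neg, zpow_add₀ hw0, zpow_one]
      rw [hsplit]
      generalize w ^ (-n) = A
      simp only [div_eq_mul_inv]
      rw [show ((w + Complex.I) ^ 2)⁻¹ = (w + Complex.I)⁻¹ * (w + Complex.I)⁻¹ from by
        rw [sq, mul_inv]]
      linear_combination ((2 * ((π:ℝ):ℂ) * (c:ℂ))⁻¹ * A) * mul_inv_cancel₀ hwi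
    have hi1 : CircleIntegrable (fun w : ℂ => (2 * (π:ℝ) * (c:ℂ))⁻¹ * w ^ (-n)) 0 R :=
      my_const_mul _ (int_zpow hR (-n))
    have hi2 : CircleIntegrable (fun w : ℂ =>
        (-(2 * Complex.I) * (2 * (π:ℝ) * (c:ℂ))⁻¹) * (w ^ (-n) * (w + Complex.I)⁻¹)) 0 R :=
      my_const_mul _ (by simpa using int_mixed hR (-n) 1)
    have hi3 : CircleIntegrable (fun w : ℂ =>
        (-(2 * (c:ℂ)) * (2 * (π:ℝ) * (c:ℂ))⁻¹) * (w ^ (1 - n) * ((w + Complex.I) ^ 2)⁻¹)) 0 R :=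
      my_const_mul _ (int_mixed hR (1 - n) 2)
    have hi12 : CircleIntegrable (fun w : ℂ => (2 * (π:ℝ) * (c:ℂ))⁻¹ * w ^ (-n)
        + (-(2 * Complex.I) * (2 * (π:ℝ) * (c:ℂ))⁻¹) * (w ^ (-n) * (w + Complex.I)⁻¹)) 0 R :=
      hi1.add hi2
    rw [circleIntegral.integral_congr hR0 hcong,
      my_integral_add hi12 hi3,
      my_integral_add hi1 hi2,
      circleIntegral.integral_const_mul, circleIntegral.integral_const_mul,
      circleIntegral.integral_const_mul, Jpow hR, J2 hR, J3 hR, hv n]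
    have hnegI : (-Complex.I) ^ (-n) = Complex.I ^ n := by
      rw [← Complex.inv_I, inv_zpow, ← zpow_neg, neg_neg]
    by_cases h2 : 2 ≤ n
    · rw [if_pos h2, if_neg (by omega : ¬(-n = -1)), if_neg (by omega : ¬(0:ℤ) ≤ -n),
        if_neg (by omega : ¬(0:ℤ) ≤ 1 - n)]
      simp
    · by_cases h1 : n = 1
      · subst h1
        rw [if_neg h2, if_pos rfl, if_pos rfl, if_neg (by omega : ¬(0:ℤ) ≤ -1),
          if_pos (by omega : (0:ℤ) ≤ 1 - 1)]
        simp only [sub_self, Int.cast_zero, mul_zero, zero_mul, add_zero, mul_one]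
        field_simp
      · rw [if_neg h2, if_neg h1, if_neg (by omega : ¬(-n = -1)),
          if_pos (by omega : (0:ℤ) ≤ -n), if_pos (by omega : (0:ℤ) ≤ 1 - n),
          show 1 - n - 1 = -n from by ring, hnegI]
        push_cast
        field_simp
        linear_combination (-4 * (π:ℂ) * Complex.I ^ n) * Complex.I_sq
  refine ⟨main, fun m k l => ?_⟩
  rw [main ((m:ℤ) - k - l), hv ((m:ℤ) - k - l)]
  by_cases hA : (k:ℤ) + l < (m:ℤ) - 1
  · rw [if_pos hA, if_pos (by omega : 2 ≤ (m:ℤ) - k - l)]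
    ring
  · by_cases hB : (k:ℤ) + l = (m:ℤ) - 1
    · rw [if_neg hA, if_pos hB, if_neg (by omega : ¬(2 ≤ (m:ℤ) - k - l)),
        if_pos (by omega : (m:ℤ) - k - l = 1)]
      ring
    · rw [if_neg hA, if_neg hB, if_neg (by omega : ¬(2 ≤ (m:ℤ) - k - l)),
        if_neg (by omega : ¬((m:ℤ) - k - l = 1))]
      push_cast
      ring
end

section
/- Let p be a real number with sin p ≠ 0, set c = cos p, and let T be the 2×2 complex matrix T = [[0, 1], [1, 2ic]]. Then for every integer m ≥ 0, the scalar (1, −1)·T^m·(1, 2ic − 1)ᵗ equals 2·i^m·( sin((m+1)p)/sin p − i·cos((m+1)p) ). In particular, for p ∈ (0, π/2) this quantity is never zero, since sin((m+1)p) and cos((m+1)p) have no common zero. -/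
open Real Matrix

/-- The kernel condition for the tridiagonal matrix `U`, expressed via the transfer matrix
`T = [[0,1],[1,2ic]]` with `c = cos p`: for every `m ≥ 0`,
`(1,−1)·T^m·(1, 2ic−1)ᵗ = 2·i^m·(sin((m+1)p)/sin p − i·cos((m+1)p))`, which is nonzero
for `p ∈ (0, π/2)`. -/
theorem transfer_matrix_pairing (p : ℝ) (hp : Real.sin p ≠ 0) (c : ℝ) (hc : c = Real.cos p)
    (T : Matrix (Fin 2) (Fin 2) ℂ)
    (hT : T = !![0, 1; 1, 2 * Complex.I * (c : ℂ)]) :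
    ∀ m : ℕ,
      (![(1 : ℂ), -1] ⬝ᵥ (T ^ m).mulVec ![1, 2 * Complex.I * (c : ℂ) - 1]) =
        2 * Complex.I ^ m *
          (((Real.sin ((m + 1) * p) / Real.sin p : ℝ) : ℂ) -
            Complex.I * ((Real.cos ((m + 1) * p) : ℝ) : ℂ)) ∧
      (0 < p → p < π / 2 →
        (![(1 : ℂ), -1] ⬝ᵥ (T ^ m).mulVec ![1, 2 * Complex.I * (c : ℂ) - 1]) ≠ 0) := by
  have hps : Complex.sin (p:ℂ) ≠ 0 := by
    rw [← Complex.ofReal_sin]; exact_mod_cast hp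
  -- Cayley–Hamilton for T
  have hT2 : T ^ 2 = (2 * Complex.I * (c:ℂ)) • T + 1 := by
    subst hT
    rw [pow_two]
    ext i j
    fin_cases i <;> fin_cases j <;>
      simp [Matrix.mul_apply, Fin.sum_univ_two, Matrix.one_apply] <;> ring
  -- two-step recursion for the pairing
  have hP : ∀ n : ℕ, (![(1 : ℂ), -1] ⬝ᵥ (T ^ (n+2)).mulVec ![1, 2 * Complex.I * (c : ℂ) - 1]) =
      2 * Complex.I * (c:ℂ) *
        (![(1 : ℂ), -1] ⬝ᵥ (T ^ (n+1)).mulVec ![1, 2 * Complex.I * (c : ℂ) - 1]) +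
      (![(1 : ℂ), -1] ⬝ᵥ (T ^ n).mulVec ![1, 2 * Complex.I * (c : ℂ) - 1]) := by
    intro n
    have h : T ^ (n+2) = (2 * Complex.I * (c:ℂ)) • T ^ (n+1) + T ^ n := by
      have h0 : T ^ (n+2) = T ^ n * T ^ 2 := by rw [← pow_add]
      rw [h0, hT2, mul_add, mul_one, mul_smul_comm, ← pow_succ]
    rw [h, Matrix.add_mulVec, Matrix.smul_mulVec, dotProduct_add, dotProduct_smul,
      smul_eq_mul]
  -- the closed formula, by two-step induction
  have key : ∀ n : ℕ, (![(1 : ℂ), -1] ⬝ᵥ (T ^ n).mulVec ![1, 2 * Complex.I * (c : ℂ) - 1]) =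
      2 * Complex.I ^ n *
        (((Real.sin ((n + 1) * p) / Real.sin p : ℝ) : ℂ) -
          Complex.I * ((Real.cos ((n + 1) * p) : ℝ) : ℂ)) := by
    have base0 : (![(1 : ℂ), -1] ⬝ᵥ (T ^ 0).mulVec ![1, 2 * Complex.I * (c : ℂ) - 1]) =
        2 * Complex.I ^ 0 * (((Real.sin (((0:ℕ) + 1) * p) / Real.sin p : ℝ) : ℂ) -
          Complex.I * ((Real.cos (((0:ℕ) + 1) * p) : ℝ) : ℂ)) := by
      rw [pow_zero, Matrix.one_mulVec]
      simp [dotProduct, Fin.sum_univ_two, div_self hp, hc]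
      ring
    have base1 : (![(1 : ℂ), -1] ⬝ᵥ (T ^ 1).mulVec ![1, 2 * Complex.I * (c : ℂ) - 1]) =
        2 * Complex.I ^ 1 * (((Real.sin (((1:ℕ) + 1) * p) / Real.sin p : ℝ) : ℂ) -
          Complex.I * ((Real.cos (((1:ℕ) + 1) * p) : ℝ) : ℂ)) := by
      rw [pow_one, hT]
      have h2 : ((1:ℕ):ℝ) + 1 = 2 := by norm_num
      rw [h2, Real.sin_two_mul, Real.cos_two_mul, ← hc]
      simp [Matrix.mulVec, dotProduct, Fin.sum_univ_two]
      field_simp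
      linear_combination (-2 : ℂ) * Complex.I_sq
    have main : ∀ n : ℕ,
        ((![(1 : ℂ), -1] ⬝ᵥ (T ^ n).mulVec ![1, 2 * Complex.I * (c : ℂ) - 1]) =
          2 * Complex.I ^ n *
            (((Real.sin ((n + 1) * p) / Real.sin p : ℝ) : ℂ) -
              Complex.I * ((Real.cos ((n + 1) * p) : ℝ) : ℂ))) ∧
        ((![(1 : ℂ), -1] ⬝ᵥ (T ^ (n+1)).mulVec ![1, 2 * Complex.I * (c : ℂ) - 1]) =
          2 * Complex.I ^ (n+1) *
            (((Real.sin (((n:ℝ) + 1 + 1) * p) / Real.sin p : ℝ) : ℂ) -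
              Complex.I * ((Real.cos (((n:ℝ) + 1 + 1) * p) : ℝ) : ℂ))) := by
      intro n
      induction n with
      | zero =>
        refine ⟨base0, ?_⟩
        convert base1 using 4 <;> norm_num
      | succ k ih =>
        refine ⟨?_, ?_⟩
        · have := ih.2
          convert this using 4 <;> push_cast <;> ring
        · -- the inductive step
          have e2 : (k:ℝ) + 1 + 1 = (k:ℝ) + 2 := by ring
          have e3 : ((k:ℝ) + 1) + 1 + 1 = (k:ℝ) + 3 := by ring
          have hsin : Real.sin (((k:ℝ)+3)*p)
              = 2 * Real.cos p * Real.sin (((k:ℝ)+2)*p) - Real.sin (((k:ℝ)+1)*p) := by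
            have a1 : ((k:ℝ)+3)*p = ((k:ℝ)+2)*p + p := by ring
            have a2 : ((k:ℝ)+1)*p = ((k:ℝ)+2)*p - p := by ring
            rw [a1, a2, Real.sin_add, Real.sin_sub]; ring
          have hcos : Real.cos (((k:ℝ)+3)*p)
              = 2 * Real.cos p * Real.cos (((k:ℝ)+2)*p) - Real.cos (((k:ℝ)+1)*p) := by
            have a1 : ((k:ℝ)+3)*p = ((k:ℝ)+2)*p + p := by ring
            have a2 : ((k:ℝ)+1)*p = ((k:ℝ)+2)*p - p := by ring
            rw [a1, a2, Real.cos_add, Real.cos_sub]; ring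
          have ecast : ((k+1:ℕ):ℝ) + 1 + 1 = (k:ℝ) + 3 := by push_cast; ring
          rw [hP k, ih.1, ih.2, ecast, e2, hsin, hcos, hc]
          push_cast
          rw [pow_succ, pow_succ]
          linear_combination (2 * Complex.I ^ k *
            (Complex.sin (((k:ℂ)+1)*(p:ℂ)) / Complex.sin (p:ℂ)
              - Complex.I * Complex.cos (((k:ℂ)+1)*(p:ℂ)))) * Complex.I_sq
    exact fun n => (main n).1
  intro m
  refine ⟨key m, fun _ _ h => ?_⟩
  rw [key m] at h
  have hI : (2 : ℂ) * Complex.I ^ m ≠ 0 := by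
    simp [Complex.I_ne_zero]
  have h2 : (((Real.sin ((m + 1) * p) / Real.sin p : ℝ) : ℂ) -
      Complex.I * ((Real.cos ((m + 1) * p) : ℝ) : ℂ)) = 0 := by
    rcases mul_eq_zero.mp h with h' | h'
    · exact absurd h' hI
    · exact h'
  have hre := congrArg Complex.re h2
  have him := congrArg Complex.im h2
  simp only [Complex.sub_re, Complex.sub_im, Complex.ofReal_re, Complex.ofReal_im,
    Complex.mul_re, Complex.mul_im, Complex.I_re, Complex.I_im, Complex.zero_re,
    Complex.zero_im, zero_mul, one_mul, mul_zero, zero_sub, sub_zero, zero_add,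
    sub_neg_eq_add, neg_eq_zero] at hre him
  have hs0 : Real.sin (((m:ℝ)+1)*p) = 0 := by
    have := div_eq_zero_iff.mp hre
    rcases this with h' | h'
    · exact h'
    · exact absurd h' hp
  have hpyth := Real.sin_sq_add_cos_sq (((m:ℝ)+1)*p)
  rw [hs0, him] at hpyth
  norm_num at hpyth
end

section
/- Let m ≥ 0 be an integer, let p_F ∈ (0, π/2) and c = cos p_F (equivalently, let c be any real number with 0 < c < 1). Let U be the (m+1)×(m+1) tridiagonal matrix with diagonal entries U(j,j) = −2ic + [j = 0] + [j = m] (so 1 is added at both corner diagonal entries; for m = 0 the single entry is 2 − 2ic), superdiagonal entries U(j,j+1) = 1, subdiagonal entries U(j+1,j) = −1, and all other entries 0. Then det U ≠ 0, i.e. U is invertible. Consequently the (m+1)×(m+1) moment determinant det(A^l_k(m))|_{τ=0} is nonzero for 0 < h < 4J, so the monic polynomials P_m and Q_{m+1} of the high-temperature analysis are well defined at τ = 0. -/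
open Finset

noncomputable def Dch (a : ℂ) : ℕ → ℂ
  | 0 => 1
  | 1 => a
  | n + 2 => a * Dch a (n + 1) + Dch a n

noncomputable def Fch (x : ℝ) : ℕ → ℝ
  | 0 => 1
  | 1 => 2 * x
  | n + 2 => 2 * x * Fch x (n + 1) - Fch x n

lemma Fch_catalan (x : ℝ) : ∀ n : ℕ, Fch x (n+1)^2 - Fch x (n+2) * Fch x n = 1
  | 0 => by simp [Fch]; ring
  | n+1 => by
      have ih := Fch_catalan x n
      have h2 : Fch x (n+3) = 2*x*Fch x (n+2) - Fch x (n+1) := rfl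
      have h1 : Fch x (n+2) = 2*x*Fch x (n+1) - Fch x n := rfl
      linear_combination ih - Fch x (n+1) * h2 + Fch x (n+2) * h1

lemma Dch_eq (x : ℝ) : ∀ n : ℕ, Dch (-2*Complex.I*x) n = (-Complex.I)^n * (Fch x n : ℂ)
  | 0 => by simp [Dch, Fch]
  | 1 => by simp [Dch, Fch]; ring
  | n+2 => by
      have i1 := Dch_eq x (n+1)
      have i0 := Dch_eq x n
      have hd : Dch (-2*Complex.I*x) (n+2)
          = (-2*Complex.I*x) * Dch (-2*Complex.I*x) (n+1) + Dch (-2*Complex.I*x) n := rfl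
      have hf : Fch x (n+2) = 2*x*Fch x (n+1) - Fch x n := rfl
      rw [hd, i1, i0, hf]
      push_cast
      have hI : Complex.I^2 = -1 := Complex.I_sq
      linear_combination ((Fch x n : ℂ) * (-Complex.I)^n) * hI
  
lemma Dch_delta_ne (x : ℝ) (n : ℕ) :
    Dch (-2*Complex.I*x) (n+2) + 2*Dch (-2*Complex.I*x) (n+1) + Dch (-2*Complex.I*x) n ≠ 0 := by
  rw [Dch_eq, Dch_eq, Dch_eq]
  intro h
  have hpow : ((-Complex.I)^n) ≠ 0 := pow_ne_zero _ (neg_ne_zero.2 Complex.I_ne_zero)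
  have h2 : ((-Complex.I)^n) * (((Fch x n - Fch x (n+2) : ℝ) : ℂ) + ((-2 * Fch x (n+1) : ℝ) : ℂ) * Complex.I) = 0 := by
    rw [← h]
    have hI : Complex.I^2 = -1 := Complex.I_sq
    push_cast
    linear_combination (-(Fch x (n+2) : ℂ)) * (-Complex.I)^n * hI
  have h3 := (mul_eq_zero.1 h2).resolve_left hpow
  have hre : Fch x n - Fch x (n+2) = 0 := by
    have := congrArg Complex.re h3
    simpa using this
  have him : -2 * Fch x (n+1) = 0 := by
    have := congrArg Complex.im h3
    simpa using this
  have hc := Fch_catalan x n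
  have h4 : Fch x (n+1) = 0 := by linarith
  have h5 : Fch x (n+2) = Fch x n := by linarith
  rw [h4, h5] at hc
  nlinarith [sq_nonneg (Fch x n)]

noncomputable def Psum (a : ℂ) (n : ℕ) : ℂ := ∑ k ∈ Finset.range n, (2 + a*((k:ℂ)+1)) * Dch a k
noncomputable def Qsum (a : ℂ) (n : ℕ) : ℂ := ∑ k ∈ Finset.range n, (2 + a*(k:ℂ)) * Dch a k

lemma Psum_cf (a : ℂ) : ∀ n : ℕ, Psum a (n+1) = ((n:ℂ)+2) * Dch a n + ((n:ℂ)+1) * Dch a (n+1)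
  | 0 => by norm_num [Psum, Dch]
  | n+1 => by
      have ih := Psum_cf a n
      have hd : Dch a (n+2) = a * Dch a (n+1) + Dch a n := rfl
      have hs : Psum a (n+2) = Psum a (n+1) + (2 + a*((n:ℂ)+1+1)) * Dch a (n+1) := by
        rw [Psum, Psum, Finset.sum_range_succ]; push_cast; ring
      rw [hs, ih]
      push_cast
      linear_combination (-((n:ℂ)+2)) * hd

lemma Qsum_cf (a : ℂ) : ∀ n : ℕ, Qsum a (n+1) = ((n:ℂ)+1) * Dch a n + (n:ℂ) * Dch a (n+1) + 1
  | 0 => by norm_num [Qsum, Dch]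
  | n+1 => by
      have ih := Qsum_cf a n
      have hd : Dch a (n+2) = a * Dch a (n+1) + Dch a n := rfl
      have hs : Qsum a (n+2) = Qsum a (n+1) + (2 + a*((n:ℂ)+1)) * Dch a (n+1) := by
        rw [Qsum, Qsum, Finset.sum_range_succ]; push_cast; ring
      rw [hs, ih]
      push_cast
      linear_combination (-((n:ℂ)+1)) * hd

lemma range_sum_ite2 {N i1 i2 : ℕ} (h12 : i1 ≠ i2) (h1 : i1 < N) (h2 : i2 < N) (c1 c2 : ℂ) :
    ∑ k ∈ Finset.range N, (if k = i1 then c1 else if k = i2 then c2 else 0) = c1 + c2 := by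
  have hp : ∀ k ∈ Finset.range N, (if k = i1 then c1 else if k = i2 then c2 else 0)
      = (if k = i1 then c1 else 0) + (if k = i2 then c2 else 0) := by
    intro k _
    by_cases hk1 : k = i1 <;> by_cases hk2 : k = i2 <;> simp_all
  rw [Finset.sum_congr rfl hp, Finset.sum_add_distrib, Finset.sum_ite_eq', Finset.sum_ite_eq']
  simp [Finset.mem_range.2 h1, Finset.mem_range.2 h2]

lemma range_sum_ite3 {N i1 i2 i3 : ℕ} (h12 : i1 ≠ i2) (h13 : i1 ≠ i3) (h23 : i2 ≠ i3)
    (h1 : i1 < N) (h2 : i2 < N) (h3 : i3 < N) (c1 c2 c3 : ℂ) :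
    ∑ k ∈ Finset.range N, (if k = i1 then c1 else if k = i2 then c2 else if k = i3 then c3 else 0)
      = c1 + c2 + c3 := by
  have hp : ∀ k ∈ Finset.range N, (if k = i1 then c1 else if k = i2 then c2 else if k = i3 then c3 else 0)
      = (if k = i1 then c1 else 0) + ((if k = i2 then c2 else 0) + (if k = i3 then c3 else 0)) := by
    intro k _
    by_cases hk1 : k = i1 <;> by_cases hk2 : k = i2 <;> by_cases hk3 : k = i3 <;> simp_all
  rw [Finset.sum_congr rfl hp, Finset.sum_add_distrib, Finset.sum_add_distrib,
    Finset.sum_ite_eq', Finset.sum_ite_eq', Finset.sum_ite_eq']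
  simp [Finset.mem_range.2 h1, Finset.mem_range.2 h2, Finset.mem_range.2 h3, add_assoc]

lemma tri_U_inj (m : ℕ) (c : ℝ)
    (U : Matrix (Fin (m + 1)) (Fin (m + 1)) ℂ)
    (hU : ∀ j k : Fin (m + 1), U j k =
      if j = k then
        -2 * Complex.I * (c : ℂ) + (if j.val = 0 then 1 else 0) +
          (if j.val = m then 1 else 0)
      else if k.val = j.val + 1 then 1
      else if j.val = k.val + 1 then -1
      else 0) :
    ∀ v : Fin (m+1) → ℂ, U.mulVec v = 0 → v = 0 := by
  intro v hv
  have hrowU : ∀ j : Fin (m+1), ∑ k, U j k * v k = 0 := by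
    intro j
    have := congrFun hv j
    simpa [Matrix.mulVec, dotProduct] using this
  have key : ∀ j k : Fin (m+1), U j k + (starRingEnd ℂ) (U k j) =
      if j = k then ((if (j:ℕ) = 0 then (2:ℂ) else 0) + (if (j:ℕ) = m then 2 else 0)) else 0 := by
    intro j k
    rw [hU j k, hU k j]
    rcases eq_or_ne j k with rfl | hjk
    · simp only [if_pos rfl]
      split_ifs <;>
          simp [map_add, map_mul, map_neg, map_one, map_ofNat, Complex.conj_I, Complex.conj_ofReal] <;>
        ring
    · have hkj : ¬(k = j) := fun h => hjk h.symm
      have hjk' : (j:ℕ) ≠ (k:ℕ) := fun h => hjk (Fin.ext h)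
      by_cases h1 : (k:ℕ) = (j:ℕ) + 1
      · have h2 : ¬((j:ℕ) = (k:ℕ) + 1) := by omega
        simp [h1, h2, hkj, hjk]
        rw [if_neg (by omega)]
        simp
      · by_cases h2 : (j:ℕ) = (k:ℕ) + 1
        · simp [h1, h2, hkj, hjk]
          rw [if_neg (by omega)]
          simp
        · simp [h1, h2, hkj, hjk]
  have e1 : ∑ j : Fin (m+1), ∑ k : Fin (m+1), (starRingEnd ℂ) (v j) * (U j k * v k) = 0 := by
    apply Finset.sum_eq_zero
    intro j _
    rw [← Finset.mul_sum, hrowU j, mul_zero]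
  have e2 := congrArg (starRingEnd ℂ) e1
  simp only [map_sum, map_mul, map_zero, Complex.conj_conj] at e2
  rw [Finset.sum_comm] at e2
  have hkey : ∑ j : Fin (m+1), ∑ k : Fin (m+1),
      (starRingEnd ℂ) (v j) * v k * (U j k + (starRingEnd ℂ) (U k j)) = 0 := by
    have hsplit : ∑ j : Fin (m+1), ∑ k : Fin (m+1),
        (starRingEnd ℂ) (v j) * v k * (U j k + (starRingEnd ℂ) (U k j))
        = (∑ j : Fin (m+1), ∑ k : Fin (m+1), (starRingEnd ℂ) (v j) * (U j k * v k))
          + ∑ j : Fin (m+1), ∑ k : Fin (m+1), v k * ((starRingEnd ℂ) (U k j) * (starRingEnd ℂ) (v j)) := by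
      rw [← Finset.sum_add_distrib]
      apply Finset.sum_congr rfl; intro j _
      rw [← Finset.sum_add_distrib]
      apply Finset.sum_congr rfl; intro k _
      ring
    rw [hsplit, e1, e2, add_zero]
  have hcol : ∀ j : Fin (m+1), ∑ k : Fin (m+1),
      (starRingEnd ℂ) (v j) * v k * (U j k + (starRingEnd ℂ) (U k j))
      = (starRingEnd ℂ) (v j) * v j * ((if (j:ℕ) = 0 then (2:ℂ) else 0) + (if (j:ℕ) = m then 2 else 0)) := by
    intro j
    rw [Finset.sum_eq_single j]
    · rw [key j j, if_pos rfl]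
    · intro k _ hkj
      rw [key j k, if_neg (fun h => hkj h.symm), mul_zero]
    · intro h; exact absurd (Finset.mem_univ j) h
  rw [Finset.sum_congr rfl (fun j _ => hcol j)] at hkey
  have hreal : ∑ j : Fin (m+1),
      Complex.normSq (v j) * ((if (j:ℕ) = 0 then (2:ℝ) else 0) + (if (j:ℕ) = m then 2 else 0)) = 0 := by
    have hp : ∀ j : Fin (m+1), (starRingEnd ℂ) (v j) * v j
        * ((if (j:ℕ) = 0 then (2:ℂ) else 0) + (if (j:ℕ) = m then 2 else 0))
        = ((Complex.normSq (v j) * ((if (j:ℕ) = 0 then (2:ℝ) else 0) + (if (j:ℕ) = m then 2 else 0)) : ℝ) : ℂ) := by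
      intro j
      rw [mul_comm ((starRingEnd ℂ) (v j)) (v j), Complex.mul_conj]
      push_cast
      split_ifs <;> push_cast <;> ring
    rw [Finset.sum_congr rfl (fun j _ => hp j)] at hkey
    exact_mod_cast hkey
  have hnn : ∀ j ∈ (univ : Finset (Fin (m+1))), 0 ≤
      Complex.normSq (v j) * ((if (j:ℕ) = 0 then (2:ℝ) else 0) + (if (j:ℕ) = m then 2 else 0)) := by
    intro j _
    have := Complex.normSq_nonneg (v j)
    split_ifs <;> nlinarith
  have hz := (Finset.sum_eq_zero_iff_of_nonneg hnn).1 hreal ⟨0, Nat.succ_pos m⟩ (mem_univ _)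
  have hv0 : v ⟨0, Nat.succ_pos m⟩ = 0 := by
    simp only [Fin.val_mk, if_pos rfl] at hz
    rcases mul_eq_zero.1 hz with h | h
    · exact Complex.normSq_eq_zero.1 h
    · exfalso; split_ifs at h <;> norm_num at h
  -- forward induction
  have hall : ∀ t : ℕ, ∀ ht : t < m + 1, v ⟨t, ht⟩ = 0 := by
    intro t
    induction t using Nat.strong_induction_on with
    | _ t ih =>
      intro ht
      match t, ht with
      | 0, ht => exact hv0
      | (t+1), ht =>
        have hrow := hrowU ⟨t, by omega⟩
        have hp : ∀ k : Fin (m+1), k ∈ (univ : Finset (Fin (m+1))) →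
            U ⟨t, by omega⟩ k * v k = if k = (⟨t+1, ht⟩ : Fin (m+1)) then v k else 0 := by
          intro k _
          rcases lt_trichotomy (k : ℕ) (t+1) with hk | hk | hk
          · rw [if_neg (by simp [Fin.ext_iff]; omega)]
            have : v k = 0 := by
              have := ih k (by omega) k.isLt
              simpa using this
            rw [this, mul_zero]
          · rw [if_pos (by simp [Fin.ext_iff]; omega)]
            rw [hU, if_neg (by simp [Fin.ext_iff]; omega), if_pos (by simp; omega), one_mul]
          · rw [if_neg (by simp [Fin.ext_iff]; omega)]
            rw [hU, if_neg (by simp [Fin.ext_iff]; omega), if_neg (by simp; omega),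
              if_neg (by simp; omega), zero_mul]
        rw [Finset.sum_congr rfl hp, Finset.sum_ite_eq'] at hrow
        simpa using hrow
  funext k
  have := hall k.val k.isLt
  simpa using this

lemma tri_B_inj (m : ℕ) (c : ℝ) (hc0 : 0 < c)
    (e : ℕ → ℂ)
    (he : ∀ s : ℕ, e s =
      if s < m - 1 then 0
      else if s = m - 1 then 1
      else 2 - 2 * Complex.I * (c : ℂ) * ((s : ℂ) - (m : ℂ) + 1))
    (B : Matrix (Fin (m + 1)) (Fin (m + 1)) ℂ)
    (hB : ∀ l k : Fin (m + 1), B l k =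
      -(Complex.I ^ ((m : ℤ) - (k.val : ℤ) - (l.val : ℤ)) / (c : ℂ)) * e (k.val + l.val)) :
    ∀ v : Fin (m+1) → ℂ, B.mulVec v = 0 → v = 0 := by
  intro v hv
  set a : ℂ := -2 * Complex.I * (c : ℂ) with ha
  have hcne : ((c : ℂ)) ≠ 0 := by exact_mod_cast hc0.ne'
  have hrowB : ∀ l : Fin (m+1), ∑ k, B l k * v k = 0 := by
    intro l
    have := congrFun hv l
    simpa [Matrix.mulVec, dotProduct] using this
  have hrow : ∀ l : Fin (m+1),
      ∑ k : Fin (m+1), e (k.val + l.val) * (Complex.I ^ (-(k.val:ℤ)) * v k) = 0 := by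
    intro l
    have heach : ∀ k : Fin (m+1), B l k * v k =
        (-(Complex.I ^ ((m:ℤ) - l.val) / (c:ℂ))) *
          (e (k.val + l.val) * (Complex.I ^ (-(k.val:ℤ)) * v k)) := by
      intro k
      rw [hB]
      rw [show ((m:ℤ) - (k.val:ℤ) - (l.val:ℤ)) = ((m:ℤ) - (l.val:ℤ)) + (-(k.val:ℤ)) by ring]
      rw [zpow_add₀ Complex.I_ne_zero]
      ring
    have h0 := hrowB l
    rw [Finset.sum_congr rfl (fun k _ => heach k), ← Finset.mul_sum] at h0
    have hsc : (-(Complex.I ^ ((m:ℤ) - l.val) / (c:ℂ))) ≠ 0 := by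
      apply neg_ne_zero.2
      exact div_ne_zero (zpow_ne_zero _ Complex.I_ne_zero) hcne
    exact (mul_eq_zero.1 h0).resolve_left hsc
  have hwv : ∀ k : Fin (m+1), Complex.I ^ (-(k.val:ℤ)) * v k = 0 → v k = 0 := by
    intro k hk
    rcases mul_eq_zero.1 hk with h | h
    · exact absurd h (zpow_ne_zero _ Complex.I_ne_zero)
    · exact h
  by_cases hm : m = 0
  · subst hm
    have h0 := hrow 0
    rw [Fin.sum_univ_one] at h0
    have h0' : e 0 * (Complex.I ^ (-((0:ℕ):ℤ)) * v 0) = 0 := by simpa using h0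
    rw [he 0] at h0'
    norm_num at h0'
    funext k
    have hk0 : k = 0 := Fin.ext (by omega)
    rw [hk0]
    exact hwv 0 (by simpa using h0')
  · obtain ⟨n, rfl⟩ : ∃ n, m = n + 1 := ⟨m - 1, by omega⟩
    set W : ℕ → ℂ := fun j => if h : j < n + 2 then Complex.I ^ (-(j:ℤ)) * v ⟨j, h⟩ else 0 with hW
    have hWk : ∀ k : Fin (n+2), W k.val = Complex.I ^ (-(k.val:ℤ)) * v k := by
      intro k
      simp only [hW, k.isLt, dif_pos, Fin.eta]
    have hrow' : ∀ l : ℕ, l ≤ n + 1 → ∑ k ∈ Finset.range (n+2), e (k + l) * W k = 0 := by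
      intro l hl
      rw [← Fin.sum_univ_eq_sum_range (fun k => e (k + l) * W k) (n+2)]
      rw [Finset.sum_congr rfl (fun k _ => by rw [hWk k])]
      exact hrow ⟨l, by omega⟩
    -- evaluation lemmas for e
    have he_lt : ∀ s, s < n → e s = 0 := by
      intro s hs
      rw [he s, if_pos (by omega)]
    have he_n : e n = 1 := by
      rw [he n, if_neg (by omega), if_pos (by omega)]
    have he_ge : ∀ s : ℕ, n + 1 ≤ s → e s = 2 + a * ((s:ℂ) - (n:ℂ) - 1 + 1) := by
      intro s hs
      rw [he s, if_neg (by omega), if_neg (by omega), ha]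
      push_cast
      ring
    -- the recurrence: W j = W 0 * Dch a j for j ≤ n
    have wD : ∀ j : ℕ, j ≤ n → W j = W 0 * Dch a j := by
      intro j
      induction j using Nat.strong_induction_on with
      | _ j ih =>
        intro hj
        match j with
        | 0 => simp [Dch]
        | (j'+1) =>
          obtain ⟨l, hlj⟩ : ∃ l, l + (j'+1) = n := ⟨n - (j'+1), by omega⟩
          have h1 := hrow' l (by omega)
          have h2 := hrow' (l+1) (by omega)
          have h3 := hrow' (l+2) (by omega)
          have hcmb : ∑ k ∈ Finset.range (n+2),
              (e (k+l) - 2 * e (k+(l+1)) + e (k+(l+2))) * W k = 0 := by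
            have hsp : ∀ k ∈ Finset.range (n+2),
                (e (k+l) - 2 * e (k+(l+1)) + e (k+(l+2))) * W k
                = e (k+l) * W k - 2 * (e (k+(l+1)) * W k) + e (k+(l+2)) * W k := by
              intro k _; ring
            rw [Finset.sum_congr rfl hsp, Finset.sum_add_distrib, Finset.sum_sub_distrib,
              ← Finset.mul_sum, h1, h2, h3]
            ring
          match j' with
          | 0 =>
            -- j = 1, relation: a * W 0 - W 1 = 0
            have hval : ∀ k ∈ Finset.range (n+2),
                (e (k+l) - 2 * e (k+(l+1)) + e (k+(l+2))) * W k
                = if k = 1 then -W 1 else if k = 0 then a * W 0 else 0 := by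
              intro k hk
              have hlc : ((l:ℕ):ℂ) + 1 = (n:ℂ) := by exact_mod_cast congrArg (fun t : ℕ => (t:ℂ)) hlj
              rcases Nat.lt_or_ge k 1 with hk1 | hk1
              · -- k = 0
                interval_cases k
                rw [he_lt (0+l) (by omega),
                  show (0+(l+1)) = n by omega, he_n,
                  he_ge (0+(l+2)) (by omega)]
                rw [if_neg (by omega), if_pos rfl]
                push_cast
                rw [← hlc]
                ring
              · rcases Nat.lt_or_ge k 2 with hk2 | hk2
                · -- k = 1
                  interval_cases k
                  rw [show (1+l) = n by omega, he_n,
                    he_ge (1+(l+1)) (by omega), he_ge (1+(l+2)) (by omega)]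
                  rw [if_pos rfl]
                  push_cast
                  rw [← hlc]
                  ring
                · -- k ≥ 2: all args ≥ n+1
                  rw [he_ge (k+l) (by omega), he_ge (k+(l+1)) (by omega), he_ge (k+(l+2)) (by omega)]
                  rw [if_neg (by omega), if_neg (by omega)]
                  push_cast
                  ring
            rw [Finset.sum_congr rfl hval] at hcmb
            rw [range_sum_ite2 (by omega) (by omega) (by omega)] at hcmb
            have : W 1 = a * W 0 := by linear_combination -hcmb
            rw [this]
            simp [Dch]
            ring
          | (t+1) =>
            -- j = t+2
            have hval : ∀ k ∈ Finset.range (n+2),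
                (e (k+l) - 2 * e (k+(l+1)) + e (k+(l+2))) * W k
                = if k = t+2 then -W (t+2) else if k = t+1 then a * W (t+1)
                  else if k = t then W t else 0 := by
              intro k hk
              have hlc : ((l:ℕ):ℂ) + ((t:ℕ):ℂ) + 2 = (n:ℂ) := by exact_mod_cast congrArg (fun s : ℕ => (s:ℂ)) hlj
              rcases lt_trichotomy k t with hkt | hkt | hkt
              · -- k < t : all < n
                rw [he_lt (k+l) (by omega), he_lt (k+(l+1)) (by omega), he_lt (k+(l+2)) (by omega)]
                rw [if_neg (by omega), if_neg (by omega), if_neg (by omega)]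
                ring
              · subst hkt
                rw [he_lt (k+l) (by omega), he_lt (k+(l+1)) (by omega),
                  show (k+(l+2)) = n by omega, he_n]
                rw [if_neg (by omega), if_neg (by omega), if_pos rfl]
                ring
              · rcases Nat.lt_or_ge k (t+2) with hkt2 | hkt2
                · -- k = t+1
                  have : k = t+1 := by omega
                  subst this
                  rw [he_lt (t+1+l) (by omega), show (t+1+(l+1)) = n by omega, he_n,
                    he_ge (t+1+(l+2)) (by omega)]
                  rw [if_neg (by omega), if_pos rfl]
                  push_cast
                  rw [← hlc]
                  ring
                · rcases Nat.lt_or_ge k (t+3) with hkt3 | hkt3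
                  · -- k = t+2
                    have : k = t+2 := by omega
                    subst this
                    rw [show (t+2+l) = n by omega, he_n,
                      he_ge (t+2+(l+1)) (by omega), he_ge (t+2+(l+2)) (by omega)]
                    rw [if_pos rfl]
                    push_cast
                    rw [← hlc]
                    ring
                  · -- k ≥ t+3 : all ≥ n+1
                    rw [he_ge (k+l) (by omega), he_ge (k+(l+1)) (by omega), he_ge (k+(l+2)) (by omega)]
                    rw [if_neg (by omega), if_neg (by omega), if_neg (by omega)]
                    push_cast
                    ring
            rw [Finset.sum_congr rfl hval] at hcmb
            rw [range_sum_ite3 (by omega) (by omega) (by omega) (by omega) (by omega) (by omega)] at hcmb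
            have ht1 : W (t+1) = W 0 * Dch a (t+1) := ih (t+1) (by omega) (by omega)
            have ht0 : W t = W 0 * Dch a t := ih t (by omega) (by omega)
            have hd : Dch a (t+2) = a * Dch a (t+1) + Dch a t := rfl
            rw [hd]
            linear_combination -hcmb + a * ht1 + ht0
    -- endgame
    have hrowN1 := hrow' (n+1) (by omega)
    have hrowN := hrow' n (by omega)
    -- row n+1
    rw [Finset.sum_range_succ] at hrowN1
    have hconv1 : ∀ k ∈ Finset.range (n+1), e (k + (n+1)) * W k
        = W 0 * ((2 + a*((k:ℂ)+1)) * Dch a k) := by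
      intro k hk
      rw [Finset.mem_range] at hk
      rw [he_ge (k+(n+1)) (by omega), wD k (by omega)]
      push_cast
      ring
    rw [Finset.sum_congr rfl hconv1, ← Finset.mul_sum] at hrowN1
    have : (∑ k ∈ Finset.range (n+1), (2 + a*((k:ℂ)+1)) * Dch a k) = Psum a (n+1) := rfl
    rw [this] at hrowN1
    rw [he_ge (n+1+(n+1)) (by omega)] at hrowN1
    -- hrowN1 : W 0 * Psum a (n+1) + (2 + a * (...)) * W (n+1) = 0
    -- row n
    rw [Finset.sum_range_succ'] at hrowN
    rw [Finset.sum_range_succ] at hrowN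
    have hconv2 : ∀ k ∈ Finset.range n, e (k+1+n) * W (k+1)
        = W 0 * ((2 + a*((k:ℂ)+1)) * Dch a (k+1)) := by
      intro k hk
      rw [Finset.mem_range] at hk
      rw [he_ge (k+1+n) (by omega), wD (k+1) (by omega)]
      push_cast
      ring
    rw [Finset.sum_congr rfl hconv2, ← Finset.mul_sum] at hrowN
    rw [show (n+1+n) = n+1+n from rfl] at hrowN
    rw [he_ge (n+1+n) (by omega), show (0+n) = n by omega, he_n] at hrowN
    have hQ : (∑ k ∈ Finset.range n, (2 + a*((k:ℂ)+1)) * Dch a (k+1)) = Qsum a (n+1) - 2 := by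
      rw [Qsum, Finset.sum_range_succ']
      push_cast
      simp [Dch]
    rw [hQ] at hrowN
    -- closed forms
    rw [Psum_cf a n] at hrowN1
    rw [Qsum_cf a n] at hrowN
    -- cast simplifications in he_ge instances
    have cc1 : ((n+1+(n+1):ℕ):ℂ) - (n:ℂ) - 1 + 1 = (n:ℂ) + 2 := by push_cast; ring
    have cc2 : ((n+1+n:ℕ):ℂ) - (n:ℂ) - 1 + 1 = (n:ℂ) + 1 := by push_cast; ring
    rw [cc1] at hrowN1
    rw [cc2] at hrowN
    -- eliminate W (n+1)
    have hd : Dch a (n+2) = a * Dch a (n+1) + Dch a n := rfl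
    have helim : W 0 * (Dch a (n+2) + 2 * Dch a (n+1) + Dch a n) = 0 := by
      linear_combination (2 + a*((n:ℂ)+1)) * hrowN1 - (2 + a*((n:ℂ)+2)) * hrowN + W 0 * hd
    have hW0 : W 0 = 0 := by
      rcases mul_eq_zero.1 helim with h | h
      · exact h
      · exact absurd h (by rw [ha]; exact Dch_delta_ne c n)
    have hWN1 : W (n+1) = 0 := by
      have h2a : (2 + a*((n:ℂ)+2)) ≠ 0 := by
        rw [ha]
        intro h
        have := congrArg Complex.re h
        simp [Complex.add_re, Complex.mul_re, Complex.mul_im] at this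
      rw [hW0, zero_mul, zero_add] at hrowN1
      exact (mul_eq_zero.1 hrowN1).resolve_left h2a
    funext k
    apply hwv
    rw [← hWk k]
    rcases Nat.lt_or_ge k.val (n+1) with hk | hk
    · rw [wD k.val (by omega), hW0, zero_mul]
    · have : k.val = n+1 := by omega
      rw [this, hWN1]

/-- For `0 < c < 1` (e.g. `c = cos p_F` with `p_F ∈ (0, π/2)`) the tridiagonal matrix `U`
of the high-temperature analysis is invertible; consequently the `(m+1)×(m+1)` moment
determinant at `τ = 0` is nonzero, so the monic polynomials `P_m` and `Q_{m+1}` are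
well defined at `τ = 0`. -/
theorem tridiagonal_det_ne_zero (m : ℕ) (c : ℝ) (hc0 : 0 < c) (hc1 : c < 1)
    (U : Matrix (Fin (m + 1)) (Fin (m + 1)) ℂ)
    (hU : ∀ j k : Fin (m + 1), U j k =
      if j = k then
        -2 * Complex.I * (c : ℂ) + (if j.val = 0 then 1 else 0) +
          (if j.val = m then 1 else 0)
      else if k.val = j.val + 1 then 1
      else if j.val = k.val + 1 then -1
      else 0)
    (e : ℕ → ℂ)
    (he : ∀ s : ℕ, e s =
      if s < m - 1 then 0
      else if s = m - 1 then 1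
      else 2 - 2 * Complex.I * (c : ℂ) * ((s : ℂ) - (m : ℂ) + 1))
    (B : Matrix (Fin (m + 1)) (Fin (m + 1)) ℂ)
    (hB : ∀ l k : Fin (m + 1), B l k =
      -(Complex.I ^ ((m : ℤ) - (k.val : ℤ) - (l.val : ℤ)) / (c : ℂ)) * e (k.val + l.val)) :
    U.det ≠ 0 ∧ B.det ≠ 0 := by
  constructor
  · intro hdet
    obtain ⟨v, hvne, hv⟩ := Matrix.exists_mulVec_eq_zero_iff.2 hdet
    exact hvne (tri_U_inj m c U hU v hv)
  · intro hdet
    obtain ⟨v, hvne, hv⟩ := Matrix.exists_mulVec_eq_zero_iff.2 hdet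
    exact hvne (tri_B_inj m c hc0 e he B hB v hv)
end
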